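/- arXiv:1904.12159 — 9 statements merged into one kernel-verified Lean document; each statement's English description precedes it below -/
import Mathlib

section
/- (1/n) Σ_{i=1}^{n} Tᵢ/p̂ₙ(Xᵢ) → 1 in probability as n → ∞; i.e., for every ε > 0, P( |(1/n) Σ_{i=1}^{n} Tᵢ/p̂ₙ(Xᵢ) − 1| > ε ) → 0. -/
open MeasureTheory ProbabilityTheory Filter

/-- With an estimated propensity score `p̂ₙ` that is uniformly consistent in
probability, `(1/n) Σ_{i=1}^{n} Tᵢ/p̂ₙ(Xᵢ) → 1` in probability as `n → ∞`. -/
theorem stmt_3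
    {𝒳 : Type*} [MetricSpace 𝒳] [CompactSpace 𝒳] [MeasurableSpace 𝒳] [BorelSpace 𝒳]
    {Ω : Type*} [MeasurableSpace Ω] (μ : Measure Ω) [IsProbabilityMeasure μ]
    (δ : ℝ) (hδ : δ ∈ Set.Ioo (0 : ℝ) (1/2))
    (p : C(𝒳, ℝ)) (hp : ∀ x, δ ≤ p x ∧ p x ≤ 1 - δ)
    (X : ℕ → Ω → 𝒳) (T : ℕ → Ω → ℝ) (Y : ℕ → Ω → ℝ)
    (hXm : ∀ i, Measurable (X i)) (hTm : ∀ i, Measurable (T i)) (hYm : ∀ i, Measurable (Y i))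
    (hT01 : ∀ i ω, T i ω = 0 ∨ T i ω = 1)
    (hindep : iIndepFun
      (fun i ω => (X i ω, T i ω, Y i ω)) μ)
    (hident : ∀ i, IdentDistrib (fun ω => (X i ω, T i ω, Y i ω))
      (fun ω => (X 0 ω, T 0 ω, Y 0 ω)) μ μ)
    (hcond : (fun ω => p (X 0 ω))
      =ᵐ[μ] μ[T 0 | MeasurableSpace.comap (X 0) inferInstance])
    [MeasurableSpace C(𝒳, ℝ)] [BorelSpace C(𝒳, ℝ)]
    (phat : ℕ → Ω → C(𝒳, ℝ)) (hmeas : ∀ n, Measurable (phat n))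
    (hconv : ∀ ε > (0 : ℝ),
      Tendsto (fun n => μ {ω | (⨆ x, |phat n ω x - p x|) > ε}) atTop (nhds 0)) :
    ∀ ε > (0 : ℝ),
      Tendsto (fun n : ℕ => μ {ω |
          |(1 / (n : ℝ)) * ∑ i ∈ Finset.range n, T i ω / phat n ω (X i ω) - 1| > ε})
        atTop (nhds 0) := by
  obtain ⟨hδ0, hδhalf⟩ := hδ
  have hppos : ∀ x, (0:ℝ) < p x := fun x => lt_of_lt_of_le hδ0 (hp x).1
  -- the true-propensity averages
  set W : ℕ → Ω → ℝ := fun i ω => T i ω / p (X i ω) with hWdef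
  have mg : Measurable (fun z : 𝒳 × ℝ × ℝ => z.2.1 / p z.1) :=
    (measurable_fst.comp measurable_snd).div (p.continuous.measurable.comp measurable_fst)
  have hWm : ∀ i, Measurable (W i) := fun i =>
    mg.comp ((hXm i).prodMk ((hTm i).prodMk (hYm i)))
  have hWbd : ∀ i ω, ‖W i ω‖ ≤ δ⁻¹ := by
    intro i ω
    rcases hT01 i ω with h | h <;>
      simp only [hWdef, h, zero_div, norm_zero, Real.norm_eq_abs]
    · exact inv_nonneg.mpr hδ0.le
    · rw [one_div, abs_of_pos (inv_pos.mpr (hppos _))]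
      exact inv_anti₀ hδ0 (hp _).1
  have hWint : Integrable (W 0) μ :=
    (integrable_const (δ⁻¹:ℝ)).mono' (hWm 0).aestronglyMeasurable
      (ae_of_all _ fun ω => hWbd 0 ω)
  have hWindep : Pairwise (Function.onFun (IndepFun · · μ) W) := fun i j hij =>
    (hindep.indepFun hij).comp mg mg
  have hWid : ∀ i, IdentDistrib (W i) (W 0) μ μ := fun i => (hident i).comp mg
  -- expectation of W 0 is 1
  have hE : ∫ ω, W 0 ω ∂μ = 1 := by
    have hm := (hXm 0).comap_le
    set m := MeasurableSpace.comap (X 0) inferInstance with hmdef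
    have hX0m : Measurable[m] (X 0) := Measurable.of_comap_le le_rfl
    have hinv : StronglyMeasurable[m] (fun ω => (p (X 0 ω))⁻¹) :=
      ((p.continuous.measurable.comp hX0m).inv).stronglyMeasurable
    have hT0int : Integrable (T 0) μ := by
      refine (integrable_const (1:ℝ)).mono' ((hTm 0).aestronglyMeasurable) ?_
      refine ae_of_all _ fun ω => ?_
      rcases hT01 0 ω with h | h <;> simp [h]
    have hfgint : Integrable ((fun ω => (p (X 0 ω))⁻¹) * T 0) μ := by
      refine (integrable_const (δ⁻¹:ℝ)).mono'
        ((hinv.mono hm).aestronglyMeasurable.mul (hTm 0).aestronglyMeasurable) ?_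
      refine ae_of_all _ fun ω => ?_
      rcases hT01 0 ω with h | h <;>
        simp only [Pi.mul_apply, h, mul_zero, mul_one, norm_zero, Real.norm_eq_abs]
      · exact inv_nonneg.mpr hδ0.le
      · rw [abs_of_pos (inv_pos.mpr (hppos _))]
        exact inv_anti₀ hδ0 (hp _).1
    have key : μ[(fun ω => (p (X 0 ω))⁻¹) * T 0 | m]
        =ᵐ[μ] (fun ω => (p (X 0 ω))⁻¹) * μ[T 0 | m] :=
      condExp_mul_of_stronglyMeasurable_left hinv hfgint hT0int
    have h2 : ∫ ω, ((fun ω => (p (X 0 ω))⁻¹) * T 0) ω ∂μ = 1 := by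
      rw [← integral_condExp hm]
      rw [integral_congr_ae key]
      have h3 : (fun ω => (p (X 0 ω))⁻¹) * μ[T 0 | m] =ᵐ[μ] fun _ => (1:ℝ) := by
        filter_upwards [hcond] with ω hω
        simp only [Pi.mul_apply, ← hω]
        exact inv_mul_cancel₀ (ne_of_gt (hppos _))
      rw [integral_congr_ae h3]
      simp
    rw [← h2]
    congr 1
    ext ω
    simp [hWdef, div_eq_inv_mul]
  -- strong law
  have hSLLN : ∀ᵐ ω ∂μ,
      Tendsto (fun n : ℕ => (∑ i ∈ Finset.range n, W i ω) / n) atTop (nhds 1) := by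
    have := strong_law_ae_real W hWint hWindep hWid
    rwa [hE] at this
  have hS : TendstoInMeasure μ (fun n ω => (∑ i ∈ Finset.range n, W i ω) / (n:ℝ))
      atTop (fun _ => (1:ℝ)) := by
    refine tendstoInMeasure_of_tendsto_ae (fun n => ?_) hSLLN
    exact ((Finset.measurable_sum _ fun i _ => hWm i).div_const _).aestronglyMeasurable
  -- main argument
  intro ε hε
  set η : ℝ := min (δ/2) (ε * δ^2 / 4) with hηdef
  have hη : 0 < η := lt_min (by positivity) (by positivity)
  have hη1 : η ≤ δ/2 := min_le_left _ _
  have hη2 : η ≤ ε * δ^2 / 4 := min_le_right _ _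
  have h1 := tendstoInMeasure_iff_dist.mp hS (ε/2) (by positivity)
  have h2 := hconv η hη
  -- inclusion of events
  have hincl : ∀ n : ℕ,
      {ω | |(1 / (n : ℝ)) * ∑ i ∈ Finset.range n, T i ω / phat n ω (X i ω) - 1| > ε}
      ⊆ {ω | ε/2 ≤ dist ((∑ i ∈ Finset.range n, W i ω) / (n:ℝ)) 1}
        ∪ {ω | (⨆ x, |phat n ω x - p x|) > η} := by
    intro n ω hω
    simp only [Set.mem_setOf_eq] at hω
    by_cases hB : (⨆ x, |phat n ω x - p x|) > η
    · exact Or.inr hB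
    push_neg at hB
    left
    simp only [Set.mem_setOf_eq, Real.dist_eq]
    -- pointwise bound on |phat - p|
    have hbdd : BddAbove (Set.range fun x => |phat n ω x - p x|) :=
      (isCompact_range (((phat n ω).continuous.sub p.continuous).abs)).bddAbove
    have hptw : ∀ x, |phat n ω x - p x| ≤ η := fun x => (le_ciSup hbdd x).trans hB
    -- termwise bound
    have hterm : ∀ i, |T i ω / phat n ω (X i ω) - T i ω / p (X i ω)| ≤ ε/2 := by
      intro i
      rcases hT01 i ω with h | h
      · simp [h]; positivity
      · set x := X i ω
        have hq : δ/2 ≤ phat n ω x := by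
          have := abs_sub_le_iff.mp (hptw x)
          have := (hp x).1
          linarith [hη1]
        have hq0 : (0:ℝ) < phat n ω x := lt_of_lt_of_le (by positivity) hq
        have hp0 : (0:ℝ) < p x := hppos x
        rw [h]
        have heq : 1 / phat n ω x - 1 / p x = (p x - phat n ω x) / (phat n ω x * p x) := by
          field_simp
        rw [heq, abs_div, abs_of_pos (mul_pos hq0 hp0)]
        have hnum : |p x - phat n ω x| ≤ η := by rw [abs_sub_comm]; exact hptw x
        have hden : δ/2 * δ ≤ phat n ω x * p x :=
          mul_le_mul hq (hp x).1 hδ0.le hq0.le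
        calc |p x - phat n ω x| / (phat n ω x * p x)
            ≤ η / (δ/2 * δ) := by
              apply div_le_div₀ hη.le hnum (by positivity) hden
          _ ≤ ε/2 := by
              rw [div_le_iff₀ (by positivity)]
              nlinarith [hη2]
    -- sum bound
    set A := (1 / (n : ℝ)) * ∑ i ∈ Finset.range n, T i ω / phat n ω (X i ω)
    set S := (∑ i ∈ Finset.range n, W i ω) / (n:ℝ)
    have hAS : |A - S| ≤ ε/2 := by
      have hASeq : A - S
          = (1 / (n:ℝ)) * ∑ i ∈ Finset.range n,
              (T i ω / phat n ω (X i ω) - T i ω / p (X i ω)) := by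
        simp only [A, S, hWdef, Finset.sum_sub_distrib, div_eq_mul_inv, one_div]
        ring
      rw [hASeq, abs_mul, abs_of_nonneg (by positivity : (0:ℝ) ≤ 1/(n:ℝ))]
      have hsum : |∑ i ∈ Finset.range n,
          (T i ω / phat n ω (X i ω) - T i ω / p (X i ω))| ≤ n * (ε/2) := by
        refine (Finset.abs_sum_le_sum_abs _ _).trans ?_
        calc ∑ i ∈ Finset.range n, |T i ω / phat n ω (X i ω) - T i ω / p (X i ω)|
            ≤ ∑ _i ∈ Finset.range n, (ε/2) := Finset.sum_le_sum fun i _ => hterm i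
          _ = n * (ε/2) := by simp [mul_comm]
      calc (1/(n:ℝ)) * |∑ i ∈ Finset.range n,
            (T i ω / phat n ω (X i ω) - T i ω / p (X i ω))|
          ≤ (1/(n:ℝ)) * ((n:ℝ) * (ε/2)) :=
            mul_le_mul_of_nonneg_left hsum (by positivity)
        _ ≤ ε/2 := by
            rcases Nat.eq_zero_or_pos n with hn | hn
            · simp [hn]; positivity
            · rw [one_div, inv_mul_cancel_left₀ (by exact_mod_cast hn.ne')]
    have htri : |A - 1| ≤ |A - S| + |S - 1| := abs_sub_le A S 1
    linarith
  -- squeeze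
  have hbound : ∀ n : ℕ,
      μ {ω | |(1 / (n : ℝ)) * ∑ i ∈ Finset.range n, T i ω / phat n ω (X i ω) - 1| > ε}
      ≤ μ {ω | ε/2 ≤ dist ((∑ i ∈ Finset.range n, W i ω) / (n:ℝ)) 1}
        + μ {ω | (⨆ x, |phat n ω x - p x|) > η} := fun n =>
    (measure_mono (hincl n)).trans (measure_union_le _ _)
  have hsum0 : Tendsto (fun n =>
      μ {ω | ε/2 ≤ dist ((∑ i ∈ Finset.range n, W i ω) / (n:ℝ)) 1}
        + μ {ω | (⨆ x, |phat n ω x - p x|) > η}) atTop (nhds 0) := by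
    have := h1.add h2
    simpa using this
  exact tendsto_of_tendsto_of_tendsto_of_le_of_le tendsto_const_nhds hsum0
    (fun n => zero_le) hbound
end

section
/- If S := (1/n) Σ_{i=1}^{n} tᵢ/p̂(xᵢ) > 0, then sup_{y ∈ ℝ} |F̂(y) − F̃(y)| ≤ sup_{x ∈ 𝒳} |1/p̂(x) − 1/p(x)| + |S⁻¹ − 1| · (1/n) Σ_{i=1}^{n} tᵢ/p(xᵢ). -/
/-- Deterministic bound of Lemma 3: if `S = (1/n) Σ tᵢ/p̂(xᵢ) > 0`, then
`sup_y |F̂(y) − F̃(y)| ≤ sup_x |1/p̂(x) − 1/p(x)| + |S⁻¹ − 1| · (1/n) Σ tᵢ/p(xᵢ)`. -/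
theorem stmt_4
    {𝒳 : Type*} (n : ℕ) (hn : 0 < n)
    (x : Fin n → 𝒳) (t : Fin n → ℝ) (yv : Fin n → ℝ)
    (ht : ∀ i, t i = 0 ∨ t i = 1)
    (phat p : 𝒳 → ℝ)
    (hphat : ∀ z, 0 < phat z ∧ phat z ≤ 1) (hp : ∀ z, 0 < p z ∧ p z ≤ 1)
    (hbdd : BddAbove (Set.range fun z => |1 / phat z - 1 / p z|))
    (S : ℝ) (hS : S = (1 / (n : ℝ)) * ∑ i, t i / phat (x i)) (hSpos : 0 < S)
    (Fhat : ℝ → ℝ)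
    (hFhat : ∀ y, Fhat y = ∑ i, ((t i / phat (x i)) / (∑ k, t k / phat (x k))) *
      (if yv i ≤ y then (1 : ℝ) else 0))
    (Ftilde : ℝ → ℝ)
    (hFtilde : ∀ y, Ftilde y = (1 / (n : ℝ)) * ∑ i, (t i / p (x i)) *
      (if yv i ≤ y then (1 : ℝ) else 0)) :
    (⨆ y : ℝ, |Fhat y - Ftilde y|) ≤
      (⨆ z : 𝒳, |1 / phat z - 1 / p z|) +
        |S⁻¹ - 1| * ((1 / (n : ℝ)) * ∑ i, t i / p (x i)) := by
  have hn' : (0:ℝ) < n := by exact_mod_cast hn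
  have hn0 : (n:ℝ) ≠ 0 := ne_of_gt hn'
  have hS0 : S ≠ 0 := ne_of_gt hSpos
  set D := ⨆ z : 𝒳, |1 / phat z - 1 / p z| with hD
  have hDge : ∀ z, |1 / phat z - 1 / p z| ≤ D := fun z => le_ciSup hbdd z
  have hD0 : 0 ≤ D := le_trans (abs_nonneg _) (hDge (x ⟨0, hn⟩))
  have hti : ∀ i : Fin n, 0 ≤ t i ∧ t i ≤ 1 := by
    intro i; rcases ht i with h | h <;> simp [h]
  set T := (1 / (n:ℝ)) * ∑ i, t i / p (x i) with hT
  have hsum : (∑ k, t k / phat (x k)) = n * S := by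
    rw [hS]; field_simp
  apply ciSup_le
  intro y
  set A := (1 / (n:ℝ)) * ∑ i, (t i / phat (x i)) * (if yv i ≤ y then (1:ℝ) else 0)
    with hA
  have hFhaty : Fhat y = S⁻¹ * A := by
    rw [hFhat, hA, hsum, Finset.mul_sum, Finset.mul_sum]
    refine Finset.sum_congr rfl fun i _ => ?_
    field_simp
  -- basic bounds
  have hind : ∀ i : Fin n, 0 ≤ (if yv i ≤ y then (1:ℝ) else 0) ∧
      (if yv i ≤ y then (1:ℝ) else 0) ≤ 1 := by
    intro i; split <;> norm_num
  have hA0 : 0 ≤ A := by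
    apply mul_nonneg (by positivity)
    apply Finset.sum_nonneg
    intro i _
    exact mul_nonneg (div_nonneg (hti i).1 (hphat (x i)).1.le) (hind i).1
  have hAS : A ≤ S := by
    rw [hA, hS]
    apply mul_le_mul_of_nonneg_left _ (by positivity)
    apply Finset.sum_le_sum
    intro i _
    have h1 : 0 ≤ t i / phat (x i) := div_nonneg (hti i).1 (hphat (x i)).1.le
    calc (t i / phat (x i)) * (if yv i ≤ y then (1:ℝ) else 0)
        ≤ (t i / phat (x i)) * 1 := mul_le_mul_of_nonneg_left (hind i).2 h1
      _ = t i / phat (x i) := mul_one _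
  have hB0 : 0 ≤ Ftilde y := by
    rw [hFtilde]
    apply mul_nonneg (by positivity)
    apply Finset.sum_nonneg
    intro i _
    exact mul_nonneg (div_nonneg (hti i).1 (hp (x i)).1.le) (hind i).1
  have hBT : Ftilde y ≤ T := by
    rw [hFtilde, hT]
    apply mul_le_mul_of_nonneg_left _ (by positivity)
    apply Finset.sum_le_sum
    intro i _
    have h1 : 0 ≤ t i / p (x i) := div_nonneg (hti i).1 (hp (x i)).1.le
    calc (t i / p (x i)) * (if yv i ≤ y then (1:ℝ) else 0)
        ≤ (t i / p (x i)) * 1 := mul_le_mul_of_nonneg_left (hind i).2 h1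
      _ = t i / p (x i) := mul_one _
  -- |A - Ftilde y| ≤ D * A
  have hAB : |A - Ftilde y| ≤ D * A := by
    rw [hA, hFtilde]
    rw [← mul_sub, ← Finset.sum_sub_distrib]
    have : D * ((1 / (n:ℝ)) * ∑ i, (t i / phat (x i)) * (if yv i ≤ y then (1:ℝ) else 0))
        = (1 / (n:ℝ)) * ∑ i, D * ((t i / phat (x i)) * (if yv i ≤ y then (1:ℝ) else 0)) := by
      rw [mul_left_comm, Finset.mul_sum]
    rw [this, abs_mul, abs_of_nonneg (by positivity : (0:ℝ) ≤ 1 / (n:ℝ))]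
    apply mul_le_mul_of_nonneg_left _ (by positivity)
    refine le_trans (Finset.abs_sum_le_sum_abs _ _) (Finset.sum_le_sum fun i _ => ?_)
    rw [← sub_mul, abs_mul, abs_of_nonneg (hind i).1]
    have hdi : t i / phat (x i) - t i / p (x i) = t i * (1 / phat (x i) - 1 / p (x i)) := by
      rw [mul_sub, mul_one_div, mul_one_div]
    rw [hdi, abs_mul, abs_of_nonneg (hti i).1]
    have h1 : t i * |1 / phat (x i) - 1 / p (x i)| ≤ t i * D :=
      mul_le_mul_of_nonneg_left (hDge (x i)) (hti i).1
    have h2 : t i ≤ t i / phat (x i) := by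
      rcases ht i with h | h
      · simp [h]
      · rw [h]
        rw [le_div_iff₀ (hphat (x i)).1]
        simpa using (hphat (x i)).2
    have h3 : t i * D ≤ (t i / phat (x i)) * D := mul_le_mul_of_nonneg_right h2 hD0
    calc t i * |1 / phat (x i) - 1 / p (x i)| * (if yv i ≤ y then (1:ℝ) else 0)
        ≤ t i * D * (if yv i ≤ y then (1:ℝ) else 0) :=
          mul_le_mul_of_nonneg_right h1 (hind i).1
      _ ≤ (t i / phat (x i)) * D * (if yv i ≤ y then (1:ℝ) else 0) :=
          mul_le_mul_of_nonneg_right h3 (hind i).1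
      _ = D * ((t i / phat (x i)) * (if yv i ≤ y then (1:ℝ) else 0)) := by ring
  -- main bound
  have key : Fhat y - Ftilde y = S⁻¹ * (A - Ftilde y) + (S⁻¹ - 1) * Ftilde y := by
    rw [hFhaty]; ring
  calc |Fhat y - Ftilde y|
      ≤ |S⁻¹ * (A - Ftilde y)| + |(S⁻¹ - 1) * Ftilde y| := by
        rw [key]; exact abs_add_le _ _
    _ = S⁻¹ * |A - Ftilde y| + |S⁻¹ - 1| * Ftilde y := by
        rw [abs_mul, abs_mul, abs_of_nonneg (inv_nonneg.mpr hSpos.le),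
          abs_of_nonneg hB0]
    _ ≤ S⁻¹ * (D * A) + |S⁻¹ - 1| * T := by
        apply add_le_add
        · exact mul_le_mul_of_nonneg_left hAB (inv_nonneg.mpr hSpos.le)
        · exact mul_le_mul_of_nonneg_left hBT (abs_nonneg _)
    _ ≤ S⁻¹ * (D * S) + |S⁻¹ - 1| * T := by
        apply add_le_add_left
        exact mul_le_mul_of_nonneg_left (mul_le_mul_of_nonneg_left hAS hD0)
          (inv_nonneg.mpr hSpos.le)
    _ = D + |S⁻¹ - 1| * T := by field_simp
end

section
/- sup_{y ∈ ℝ} |F̂₁,ₙ(y) − F̃₁,ₙ(y)| → 0 in probability as n → ∞; i.e., for every ε > 0, P( sup_y |F̂₁,ₙ(y) − F̃₁,ₙ(y)| > ε ) → 0. -/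
set_option maxHeartbeats 1000000

open MeasureTheory ProbabilityTheory Filter

lemma key_bound (n : ℕ) (hn : 1 ≤ n) (δ θ η : ℝ)
    (hδ0 : 0 < δ) (hδ1 : δ ≤ 1) (hθ0 : 0 < θ) (hθ4 : θ ≤ 1/4)
    (hη : η = θ * δ^2 / 2)
    (t P Q χ : ℕ → ℝ)
    (ht : ∀ i, t i = 0 ∨ t i = 1)
    (hQl : ∀ i, δ ≤ Q i) (hQu : ∀ i, Q i ≤ 1)
    (hPQ : ∀ i, |P i - Q i| ≤ η)
    (hχ : ∀ i, χ i = 0 ∨ χ i = 1)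
    (hB : |(∑ i ∈ Finset.range n, t i / Q i) / n - 1| < θ) :
    |(∑ i ∈ Finset.range n, (t i / P i / ∑ k ∈ Finset.range n, t k / P k) * χ i) -
      (1 / n) * ∑ i ∈ Finset.range n, (t i / Q i) * χ i| ≤ 7 * θ := by
  have hN : (1:ℝ) ≤ (n:ℝ) := by exact_mod_cast hn
  have hN0 : (0:ℝ) < n := by linarith
  set N : ℝ := (n:ℝ) with hNdef
  set S : ℝ := ∑ k ∈ Finset.range n, t k / P k with hS
  set S' : ℝ := ∑ k ∈ Finset.range n, t k / Q k with hS'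
  clear_value N S S'
  have ht01 : ∀ i, 0 ≤ t i ∧ t i ≤ 1 := by
    intro i; rcases ht i with h | h <;> simp [h]
  have hQpos : ∀ i, 0 < Q i := fun i => lt_of_lt_of_le hδ0 (hQl i)
  have hηδ : η ≤ δ/8 := by nlinarith [sq_nonneg δ]
  have hPl : ∀ i, δ/2 ≤ P i := by
    intro i
    have h1 := (abs_le.mp (hPQ i)).1
    have h2 := hQl i
    linarith
  have hPpos : ∀ i, 0 < P i := fun i => lt_of_lt_of_le (by linarith) (hPl i)
  -- per-term bound
  have hab : ∀ i, |t i / P i - t i / Q i| ≤ θ := by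
    intro i
    have hPne : P i ≠ 0 := (hPpos i).ne'
    have hQne : Q i ≠ 0 := (hQpos i).ne'
    have hkey : t i / P i - t i / Q i = t i * (Q i - P i) / (P i * Q i) := by
      field_simp
    rw [hkey, abs_div, abs_mul]
    have h1 : |t i| ≤ 1 := by rcases ht i with h | h <;> simp [h]
    have h2 : |Q i - P i| ≤ η := by rw [abs_sub_comm]; exact hPQ i
    have h3 : δ^2/2 ≤ |P i * Q i| := by
      rw [abs_of_pos (mul_pos (hPpos i) (hQpos i))]
      nlinarith [hPl i, hQl i]
    have h4 : |t i| * |Q i - P i| ≤ η := by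
      calc |t i| * |Q i - P i| ≤ 1 * η := by
            apply mul_le_mul h1 h2 (abs_nonneg _) (by norm_num)
        _ = η := one_mul η
    have h5 : (0:ℝ) < δ^2/2 := by positivity
    calc |t i| * |Q i - P i| / |P i * Q i| ≤ η / (δ^2/2) :=
          div_le_div₀ (by rw [hη]; positivity) h4 h5 h3
      _ = θ := by rw [hη]; field_simp
  have hSsub : |S - S'| ≤ N * θ := by
    rw [hS, hS', ← Finset.sum_sub_distrib]
    calc |∑ i ∈ Finset.range n, (t i / P i - t i / Q i)|
        ≤ ∑ i ∈ Finset.range n, |t i / P i - t i / Q i| := Finset.abs_sum_le_sum_abs _ _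
      _ ≤ ∑ _i ∈ Finset.range n, θ := Finset.sum_le_sum fun i _ => hab i
      _ = N * θ := by simp [hNdef, mul_comm]
  have hS'sub : |S' - N| ≤ N * θ := by
    have h2 : |(S' - N) / N| < θ := by
      rw [show (S' - N)/N = S'/N - 1 by field_simp]
      exact hB
    rw [abs_div, abs_of_pos hN0] at h2
    have := (div_lt_iff₀ hN0).mp h2
    linarith
  have hSlow : N / 2 ≤ S := by
    have h1 := (abs_le.mp hSsub).1
    have h2 := (abs_le.mp hS'sub).1
    nlinarith
  have hSpos : 0 < S := lt_of_lt_of_le (by positivity) hSlow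
  have hS'le : S' ≤ N + N * θ := by
    have := (abs_le.mp hS'sub).2; linarith
  have hS'0 : 0 ≤ S' := by
    rw [hS']
    exact Finset.sum_nonneg fun i _ => div_nonneg (ht01 i).1 (hQpos i).le
  have hNS : |N - S| ≤ 2 * N * θ := by
    calc |N - S| = |(N - S') + (S' - S)| := by ring_nf
      _ ≤ |N - S'| + |S' - S| := abs_add_le _ _
      _ ≤ N * θ + N * θ := by
          rw [abs_sub_comm N S', abs_sub_comm S' S]
          exact add_le_add hS'sub hSsub
      _ = 2 * N * θ := by ring
  -- main chain
  have step1 : (∑ i ∈ Finset.range n, (t i / P i / S) * χ i) -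
      (1 / N) * ∑ i ∈ Finset.range n, (t i / Q i) * χ i
      = ∑ i ∈ Finset.range n, ((t i / P i / S - t i / Q i / N) * χ i) := by
    rw [Finset.mul_sum, ← Finset.sum_sub_distrib]
    apply Finset.sum_congr rfl
    intro i _
    ring
  rw [step1]
  have hterm : ∀ i, |(t i / P i / S - t i / Q i / N) * χ i|
      ≤ |t i / P i - t i / Q i| / S + (t i / Q i) * (|N - S| / (N * S)) := by
    intro i
    have hc : |χ i| ≤ 1 := by rcases hχ i with h | h <;> simp [h]
    have h0 : |(t i / P i / S - t i / Q i / N) * χ i| ≤ |t i / P i / S - t i / Q i / N| := by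
      rw [abs_mul]
      exact mul_le_of_le_one_right (abs_nonneg _) hc
    have hPne : P i ≠ 0 := (hPpos i).ne'
    have hQne : Q i ≠ 0 := (hQpos i).ne'
    have hSne : S ≠ 0 := hSpos.ne'
    have hNne : N ≠ 0 := hN0.ne'
    have hdec : t i / P i / S - t i / Q i / N
        = (t i / P i - t i / Q i) / S + (t i / Q i) * ((N - S) / (N * S)) := by
      field_simp
      ring
    have h1 : |(t i / P i - t i / Q i) / S + (t i / Q i) * ((N - S) / (N * S))|
        ≤ |t i / P i - t i / Q i| / S + (t i / Q i) * (|N - S| / (N * S)) := by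
      refine (abs_add_le _ _).trans ?_
      apply add_le_add
      · rw [abs_div, abs_of_pos hSpos]
      · rw [abs_mul, abs_of_nonneg (div_nonneg (ht01 i).1 (hQpos i).le),
          abs_div, abs_of_pos (mul_pos hN0 hSpos)]
    calc |(t i / P i / S - t i / Q i / N) * χ i|
        ≤ |t i / P i / S - t i / Q i / N| := h0
      _ = |(t i / P i - t i / Q i) / S + (t i / Q i) * ((N - S) / (N * S))| := by rw [hdec]
      _ ≤ _ := h1
  calc |∑ i ∈ Finset.range n, ((t i / P i / S - t i / Q i / N) * χ i)|
      ≤ ∑ i ∈ Finset.range n, |(t i / P i / S - t i / Q i / N) * χ i| :=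
        Finset.abs_sum_le_sum_abs _ _
    _ ≤ ∑ i ∈ Finset.range n, (|t i / P i - t i / Q i| / S + (t i / Q i) * (|N - S| / (N * S))) :=
        Finset.sum_le_sum fun i _ => hterm i
    _ = (∑ i ∈ Finset.range n, |t i / P i - t i / Q i|) / S + S' * (|N - S| / (N * S)) := by
        rw [Finset.sum_add_distrib, ← Finset.sum_div, ← Finset.sum_mul, ← hS']
    _ ≤ 2 * θ + 5 * θ := by
        apply add_le_add
        · rw [div_le_iff₀ hSpos]
          have hsum : (∑ i ∈ Finset.range n, |t i / P i - t i / Q i|) ≤ N * θ := by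
            calc (∑ i ∈ Finset.range n, |t i / P i - t i / Q i|)
                ≤ ∑ _i ∈ Finset.range n, θ := Finset.sum_le_sum fun i _ => hab i
              _ = N * θ := by simp [hNdef, mul_comm]
          nlinarith
        · rw [← mul_div_assoc, div_le_iff₀ (mul_pos hN0 hSpos)]
          have h6 : S' * |N - S| ≤ (N + N * θ) * (2 * N * θ) :=
            mul_le_mul hS'le hNS (abs_nonneg _) (by positivity)
          have hθN2 : θ * N ^ 2 * θ ≤ θ * N ^ 2 * (1 / 4) :=
            mul_le_mul_of_nonneg_left hθ4 (by positivity)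
          have h7 : (N + N * θ) * (2 * N * θ) ≤ 5 * θ * (N * (N / 2)) := by nlinarith [hθN2]
          have hNS2 : N * (N / 2) ≤ N * S := mul_le_mul_of_nonneg_left hSlow hN0.le
          have h8 : 5 * θ * (N * (N / 2)) ≤ 5 * θ * (N * S) :=
            mul_le_mul_of_nonneg_left hNS2 (by positivity)
          linarith
    _ = 7 * θ := by ring


/-- `sup_y |F̂₁,ₙ(y) − F̃₁,ₙ(y)| → 0` in probability, where `F̂₁,ₙ` is the
Hájek-type estimator built from the estimated propensity score and `F̃₁,ₙ` is the
pseudo-estimator built from the true propensity score. -/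
theorem stmt_5
    {𝒳 : Type*} [MetricSpace 𝒳] [CompactSpace 𝒳] [MeasurableSpace 𝒳] [BorelSpace 𝒳]
    {Ω : Type*} [MeasurableSpace Ω] (μ : Measure Ω) [IsProbabilityMeasure μ]
    (δ : ℝ) (hδ : δ ∈ Set.Ioo (0 : ℝ) (1/2))
    (p : C(𝒳, ℝ)) (hp : ∀ x, δ ≤ p x ∧ p x ≤ 1 - δ)
    (X : ℕ → Ω → 𝒳) (T : ℕ → Ω → ℝ) (Y : ℕ → Ω → ℝ)
    (hXm : ∀ i, Measurable (X i)) (hTm : ∀ i, Measurable (T i)) (hYm : ∀ i, Measurable (Y i))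
    (hT01 : ∀ i ω, T i ω = 0 ∨ T i ω = 1)
    (hindep : iIndepFun
      (fun i ω => (X i ω, T i ω, Y i ω)) μ)
    (hident : ∀ i, IdentDistrib (fun ω => (X i ω, T i ω, Y i ω))
      (fun ω => (X 0 ω, T 0 ω, Y 0 ω)) μ μ)
    (hcond : (fun ω => p (X 0 ω))
      =ᵐ[μ] μ[T 0 | MeasurableSpace.comap (X 0) inferInstance])
    [MeasurableSpace C(𝒳, ℝ)] [BorelSpace C(𝒳, ℝ)]
    (phat : ℕ → Ω → C(𝒳, ℝ)) (hmeas : ∀ n, Measurable (phat n))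
    (hconv : ∀ ε > (0 : ℝ),
      Tendsto (fun n => μ {ω | (⨆ x, |phat n ω x - p x|) > ε}) atTop (nhds 0))
    (Fhat Ftilde : ℕ → Ω → ℝ → ℝ)
    (hFhat : ∀ n ω y, Fhat n ω y = ∑ i ∈ Finset.range n,
      ((T i ω / phat n ω (X i ω)) / ∑ k ∈ Finset.range n, T k ω / phat n ω (X k ω)) *
        (if Y i ω ≤ y then (1 : ℝ) else 0))
    (hFtilde : ∀ n ω y, Ftilde n ω y = (1 / (n : ℝ)) * ∑ i ∈ Finset.range n,
      (T i ω / p (X i ω)) * (if Y i ω ≤ y then (1 : ℝ) else 0)) :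
    ∀ ε > (0 : ℝ),
      Tendsto (fun n : ℕ => μ {ω | (⨆ y : ℝ, |Fhat n ω y - Ftilde n ω y|) > ε})
        atTop (nhds 0) := by
  obtain ⟨hδ0, hδhalf⟩ := hδ
  have hδ1 : δ ≤ 1 := by linarith
  have hppos : ∀ x, (0:ℝ) < p x := fun x => lt_of_lt_of_le hδ0 (hp x).1
  have hpinv_cont : Continuous fun x => (p x)⁻¹ := p.continuous.inv₀ fun x => (hppos x).ne'
  have hpinv_le : ∀ x, |(p x)⁻¹| ≤ δ⁻¹ := by
    intro x
    rw [abs_of_pos (inv_pos.mpr (hppos x))]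
    exact inv_anti₀ hδ0 (hp x).1
  set Z : ℕ → Ω → ℝ := fun i ω => T i ω / p (X i ω) with hZ
  have hZmeas : ∀ i, Measurable (Z i) := fun i =>
    (hTm i).div (p.continuous.measurable.comp (hXm i))
  have hT1 : ∀ i ω, |T i ω| ≤ 1 := by
    intro i ω; rcases hT01 i ω with h | h <;> simp [h]
  have hZbdd : ∀ i ω, ‖Z i ω‖ ≤ δ⁻¹ := by
    intro i ω
    rw [Real.norm_eq_abs, hZ]
    simp only [div_eq_mul_inv, abs_mul]
    calc |T i ω| * |(p (X i ω))⁻¹| ≤ 1 * δ⁻¹ :=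
          mul_le_mul (hT1 i ω) (hpinv_le _) (abs_nonneg _) zero_le_one
      _ = δ⁻¹ := one_mul _
  have hZint : ∀ i, Integrable (Z i) μ := fun i =>
    ⟨(hZmeas i).aestronglyMeasurable, HasFiniteIntegral.of_bounded (ae_of_all _ (hZbdd i))⟩
  -- expectation of Z 0 is 1
  have hm : MeasurableSpace.comap (X 0) inferInstance ≤ _ := (hXm 0).comap_le
  set g : Ω → ℝ := fun ω => (p (X 0 ω))⁻¹ with hg
  have hgm : Measurable[MeasurableSpace.comap (X 0) inferInstance] (X 0) :=
    Measurable.of_comap_le le_rfl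
  have hg_sm : StronglyMeasurable[MeasurableSpace.comap (X 0) inferInstance] g :=
    (hpinv_cont.measurable.comp hgm).stronglyMeasurable
  have hTint : Integrable (T 0) μ :=
    ⟨(hTm 0).aestronglyMeasurable,
      HasFiniteIntegral.of_bounded (ae_of_all _ fun ω => by
        rw [Real.norm_eq_abs]; exact hT1 0 ω)⟩
  have hgTint : Integrable (g * T 0) μ := by
    refine ⟨((hpinv_cont.measurable.comp (hXm 0)).mul (hTm 0)).aestronglyMeasurable,
      HasFiniteIntegral.of_bounded (C := δ⁻¹) (ae_of_all _ fun ω => ?_)⟩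
    rw [Pi.mul_apply, Real.norm_eq_abs, abs_mul]
    calc |g ω| * |T 0 ω| ≤ δ⁻¹ * 1 :=
          mul_le_mul (hpinv_le _) (hT1 0 ω) (abs_nonneg _) (by positivity)
      _ = δ⁻¹ := mul_one _
  have hmul : μ[g * T 0|MeasurableSpace.comap (X 0) inferInstance]
      =ᵐ[μ] g * μ[T 0|MeasurableSpace.comap (X 0) inferInstance] :=
    condExp_mul_of_stronglyMeasurable_left hg_sm hgTint hTint
  have hone : g * μ[T 0|MeasurableSpace.comap (X 0) inferInstance] =ᵐ[μ] fun _ => (1:ℝ) := by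
    filter_upwards [hcond] with ω hω
    rw [Pi.mul_apply, hg]
    rw [← hω]
    exact inv_mul_cancel₀ (hppos _).ne'
  have hEZ : ∫ ω, Z 0 ω ∂μ = 1 := by
    have h0 : (fun ω => Z 0 ω) = g * T 0 := by
      funext ω; simp [hZ, hg, Pi.mul_apply, div_eq_inv_mul]
    calc ∫ ω, Z 0 ω ∂μ = ∫ ω, (g * T 0) ω ∂μ := by rw [h0]
      _ = ∫ ω, (μ[g * T 0|MeasurableSpace.comap (X 0) inferInstance]) ω ∂μ :=
          (integral_condExp hm).symm
      _ = ∫ _ω, (1:ℝ) ∂μ := integral_congr_ae (hmul.trans hone)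
      _ = 1 := by simp
  -- strong law of large numbers for Z
  have hφmeas : Measurable (fun v : 𝒳 × ℝ × ℝ => v.2.1 / p v.1) :=
    measurable_snd.fst.div (p.continuous.measurable.comp measurable_fst)
  have hZid : ∀ i, IdentDistrib (Z i) (Z 0) μ μ := fun i => (hident i).comp hφmeas
  have hZindep : Pairwise (Function.onFun (IndepFun · · μ) Z) :=
    fun i j hij => (hindep.indepFun hij).comp hφmeas hφmeas
  have hlln := strong_law_ae_real Z (hZint 0) hZindep hZid
  rw [hEZ] at hlln
  set W : ℕ → Ω → ℝ := fun n ω => (∑ i ∈ Finset.range n, Z i ω) / n with hW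
  have hWmeas : ∀ n, AEStronglyMeasurable (W n) μ := fun n =>
    ((Finset.measurable_sum (Finset.range n) fun i _ => hZmeas i).div_const
      (n : ℝ)).aestronglyMeasurable
  have hTIM : TendstoInMeasure μ W atTop (fun _ => (1:ℝ)) :=
    tendstoInMeasure_of_tendsto_ae hWmeas hlln
  -- main argument
  intro ε hε
  set θ : ℝ := min (ε/7) (1/4) with hθdef
  have hθ0 : 0 < θ := lt_min (by positivity) (by norm_num)
  have hθ4 : θ ≤ 1/4 := min_le_right _ _
  have hθε : 7 * θ ≤ ε := by
    have := min_le_left (ε/7) (1/4); linarith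
  set η : ℝ := θ * δ^2 / 2 with hηdef
  have hη0 : 0 < η := by positivity
  have hE1 := hconv η hη0
  have hE2 := tendstoInMeasure_iff_dist.mp hTIM θ hθ0
  have hsum0 : Tendsto (fun n => μ {ω | (⨆ x, |phat n ω x - p x|) > η}
      + μ {ω | θ ≤ dist (W n ω) 1}) atTop (nhds 0) := by
    have := hE1.add hE2
    simpa using this
  refine tendsto_of_tendsto_of_tendsto_of_le_of_le' tendsto_const_nhds hsum0
    (Eventually.of_forall fun n => bot_le) ?_
  filter_upwards [eventually_ge_atTop 1] with n hn
  refine le_trans (measure_mono ?_) (measure_union_le _ _)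
  intro ω hω
  rw [Set.mem_union]
  by_contra hc
  push_neg at hc
  obtain ⟨h1, h2⟩ := hc
  have hA : (⨆ x, |phat n ω x - p x|) ≤ η := not_lt.mp h1
  have hB0 : dist (W n ω) 1 < θ := not_le.mp h2
  rw [Real.dist_eq] at hB0
  have hB : |(∑ i ∈ Finset.range n, T i ω / p (X i ω)) / (n:ℝ) - 1| < θ := hB0
  have hPQ : ∀ i, |phat n ω (X i ω) - p (X i ω)| ≤ η := by
    intro i
    have hcont : Continuous fun x => |phat n ω x - p x| :=
      ((phat n ω).continuous.sub p.continuous).abs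
    exact le_trans (le_ciSup (isCompact_range hcont).bddAbove (X i ω)) hA
  have hsup : ∀ y, |Fhat n ω y - Ftilde n ω y| ≤ 7 * θ := by
    intro y
    rw [hFhat, hFtilde]
    exact key_bound n hn δ θ η hδ0 hδ1 hθ0 hθ4 hηdef
      (fun i => T i ω) (fun i => phat n ω (X i ω)) (fun i => p (X i ω))
      (fun i => if Y i ω ≤ y then 1 else 0)
      (fun i => hT01 i ω) (fun i => (hp _).1)
      (fun i => by have := (hp (X i ω)).2; linarith)
      hPQ (fun i => by by_cases h : Y i ω ≤ y <;> simp [h]) hB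
  have hle : (⨆ y, |Fhat n ω y - Ftilde n ω y|) ≤ ε :=
    Real.iSup_le (fun y => (hsup y).trans hθε) hε.le
  exact absurd hω (not_lt.mpr hle)
end

section
/- sup_{y ∈ ℝ} |F̃₁,ₙ(y) − F₁(y)| → 0 almost surely as n → ∞ (a Glivenko–Cantelli theorem for the inverse-propensity weighted pseudo-empirical distribution function; F₁ is not assumed continuous). -/
open MeasureTheory ProbabilityTheory Filter Topology

private theorem det_gc (F G : ℝ → ℝ) (Fn Gn : ℕ → ℝ → ℝ) (S : ℕ → ℝ) (b C : ℝ)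
    (hFmono : Monotone F)
    (hF0 : ∀ y, 0 ≤ F y)
    (hFn0 : ∀ n y, 0 ≤ Fn n y)
    (hFC : ∀ y, F y ≤ C)
    (hbLUB : ∀ c, (∀ y, F y ≤ c) → b ≤ c)
    (hbot : ∀ c, 0 < c → ∃ y, F y < c)
    (hGle : ∀ t c, (∀ y, y < t → F y ≤ c) → G t ≤ c)
    (hFright : ∀ t c, (∀ y, t < y → c ≤ F y) → c ≤ F t)
    (hFnmono : ∀ n, Monotone (Fn n))
    (hFnGn : ∀ n y t, y < t → Fn n y ≤ Gn n t)
    (hFnS : ∀ n y, Fn n y ≤ S n)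
    (hS : Tendsto S atTop (𝓝 b))
    (hFnF : ∀ q : ℚ, Tendsto (fun n => Fn n (sInf {y | (q : ℝ) ≤ F y})) atTop
      (𝓝 (F (sInf {y | (q : ℝ) ≤ F y}))))
    (hGnG : ∀ q : ℚ, Tendsto (fun n => Gn n (sInf {y | (q : ℝ) ≤ F y})) atTop
      (𝓝 (G (sInf {y | (q : ℝ) ≤ F y})))) :
    Tendsto (fun n => ⨆ y, |Fn n y - F y|) atTop (𝓝 0) := by
  have key : ∀ ε : ℝ, 0 < ε → ∀ᶠ n in atTop, ∀ y, |Fn n y - F y| ≤ ε := by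
    intro ε hε
    obtain ⟨q0, hq0pos, hq0lt⟩ : ∃ q : ℚ, (0 : ℝ) < q ∧ (q : ℝ) < ε / 3 :=
      exists_rat_btwn (by linarith)
    set e : ℝ := (q0 : ℝ) with he_def
    have he : 0 < e := hq0pos
    set K : ℕ := ⌊C / e⌋₊ with hK
    set t : ℕ → ℝ := fun j => sInf {y | (j : ℝ) * e ≤ F y} with ht
    -- convergence at grid points
    have hgrid : ∀ j : ℕ, Tendsto (fun n => Fn n (t j)) atTop (𝓝 (F (t j))) ∧
        Tendsto (fun n => Gn n (t j)) atTop (𝓝 (G (t j))) := by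
      intro j
      have hcast : ((j * q0 : ℚ) : ℝ) = (j : ℝ) * e := by push_cast; ring
      constructor
      · have := hFnF (j * q0); rwa [hcast] at this
      · have := hGnG (j * q0); rwa [hcast] at this
    have h1 : ∀ᶠ n in atTop, ∀ j ∈ Finset.range (K + 2),
        |Fn n (t j) - F (t j)| ≤ e ∧ |Gn n (t j) - G (t j)| ≤ e := by
      rw [eventually_all_finset]
      intro j _
      have hFj := (hgrid j).1
      have hGj := (hgrid j).2
      have hFj' : ∀ᶠ n in atTop, |Fn n (t j) - F (t j)| ≤ e := by
        have := Metric.tendsto_atTop.1 hFj e he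
        obtain ⟨N, hN⟩ := this
        exact eventually_atTop.2 ⟨N, fun n hn => le_of_lt (by simpa [Real.dist_eq] using hN n hn)⟩
      have hGj' : ∀ᶠ n in atTop, |Gn n (t j) - G (t j)| ≤ e := by
        have := Metric.tendsto_atTop.1 hGj e he
        obtain ⟨N, hN⟩ := this
        exact eventually_atTop.2 ⟨N, fun n hn => le_of_lt (by simpa [Real.dist_eq] using hN n hn)⟩
      exact hFj'.and hGj'
    have h2 : ∀ᶠ n in atTop, |S n - b| ≤ e := by
      have := Metric.tendsto_atTop.1 hS e he
      obtain ⟨N, hN⟩ := this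
      exact eventually_atTop.2 ⟨N, fun n hn => le_of_lt (by simpa [Real.dist_eq] using hN n hn)⟩
    filter_upwards [h1, h2] with n hn1 hn2
    intro y
    set j : ℕ := ⌊F y / e⌋₊ with hj
    have hj1 : (j : ℝ) * e ≤ F y := by
      have := Nat.floor_le (div_nonneg (hF0 y) he.le)
      calc (j : ℝ) * e ≤ (F y / e) * e := by nlinarith
        _ = F y := by field_simp
    have hj2 : F y < ((j : ℝ) + 1) * e := by
      have := Nat.lt_floor_add_one (F y / e)
      calc F y = (F y / e) * e := by field_simp
        _ < ((j : ℝ) + 1) * e := by nlinarith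
    have hjK : j ≤ K := Nat.floor_mono ((div_le_div_iff_of_pos_right he).mpr (hFC y))
    -- lower bound : F y - 2e ≤ Fn n y
    have hlow : F y - 2 * e ≤ Fn n y := by
      rcases Nat.eq_zero_or_pos j with hj0 | hjpos
      · have : F y < e := by rw [hj0] at hj2; simpa using hj2
        have := hFn0 n y
        linarith
      · set A : Set ℝ := {y' | (j : ℝ) * e ≤ F y'} with hA
        have hyA : y ∈ A := hj1
        have hne : A.Nonempty := ⟨y, hyA⟩
        have hjepos : 0 < (j : ℝ) * e := by
          have : (1 : ℝ) ≤ (j : ℝ) := by exact_mod_cast hjpos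
          nlinarith
        obtain ⟨y₀, hy₀⟩ := hbot ((j : ℝ) * e) hjepos
        have hbdd : BddBelow A := ⟨y₀, fun z hz => by
          by_contra hlt
          push_neg at hlt
          exact absurd (le_trans hz.out (le_of_eq rfl)) (by
            have : F z ≤ F y₀ := hFmono hlt.le
            exact not_le.2 (lt_of_le_of_lt this hy₀) )⟩
        have htj_le : t j ≤ y := csInf_le hbdd hyA
        have hFt : (j : ℝ) * e ≤ F (t j) := by
          refine hFright (t j) _ (fun y' hy' => ?_)
          obtain ⟨z, hz, hzy⟩ := exists_lt_of_csInf_lt hne hy'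
          exact le_trans hz (hFmono hzy.le)
        have h1j := (hn1 j (Finset.mem_range.2 (by omega))).1
        have : F (t j) - e ≤ Fn n (t j) := by
          have := abs_sub_le_iff.1 h1j
          linarith [this.2]
        have hmono := hFnmono n htj_le
        have : (j : ℝ) * e - e ≤ Fn n y := by linarith
        nlinarith
    -- upper bound : Fn n y ≤ F y + 3e
    have hup : Fn n y ≤ F y + 3 * e := by
      set B : Set ℝ := {y' | ((j : ℝ) + 1) * e ≤ F y'} with hB
      rcases Set.eq_empty_or_nonempty B with hBe | hBne
      · have hall : ∀ y', F y' ≤ ((j : ℝ) + 1) * e := by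
          intro y'
          by_contra hc
          push_neg at hc
          exact Set.eq_empty_iff_forall_notMem.1 hBe y' hc.le
        have hble : b ≤ ((j : ℝ) + 1) * e := hbLUB _ hall
        have hsn : S n ≤ b + e := by have := abs_sub_le_iff.1 hn2; linarith [this.1]
        have := hFnS n y
        nlinarith
      · have hbddB : BddBelow B := ⟨y, fun z hz => by
          by_contra hlt
          push_neg at hlt
          have : F z ≤ F y := hFmono hlt.le
          have : ((j : ℝ) + 1) * e ≤ F y := le_trans hz.out this
          linarith⟩
        have htB : t (j + 1) = sInf B := by
          simp only [ht, hB]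
          push_cast
          ring_nf
        have hFtB : ((j : ℝ) + 1) * e ≤ F (t (j + 1)) := by
          rw [htB]
          refine hFright _ _ (fun y' hy' => ?_)
          obtain ⟨z, hz, hzy⟩ := exists_lt_of_csInf_lt hBne hy'
          exact le_trans hz.out (hFmono hzy.le)
        have hylt : y < t (j + 1) := by
          rcases lt_or_ge y (t (j + 1)) with h | h
          · exact h
          · exact absurd (le_trans hFtB (hFmono h)) (not_le.2 hj2)
        have hGt : G (t (j + 1)) ≤ ((j : ℝ) + 1) * e := by
          refine hGle _ _ (fun y' hy' => ?_)
          rw [htB] at hy'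
          by_contra hc
          push_neg at hc
          have : y' ∈ B := hc.le
          exact absurd (csInf_le hbddB this) (not_le.2 hy')
        have h1j := (hn1 (j + 1) (Finset.mem_range.2 (by omega))).2
        have hGn : Gn n (t (j + 1)) ≤ G (t (j + 1)) + e := by
          have := abs_sub_le_iff.1 h1j; linarith [this.1]
        have := hFnGn n y (t (j + 1)) hylt
        nlinarith
    rw [abs_sub_le_iff]
    constructor
    · linarith
    · linarith
  rw [Metric.tendsto_atTop]
  intro ε hε
  obtain ⟨N, hN⟩ := eventually_atTop.1 (key (ε / 2) (by linarith))
  refine ⟨N, fun n hn => ?_⟩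
  have hb : ∀ y, |Fn n y - F y| ≤ ε / 2 := hN n hn
  have hsup_le : (⨆ y, |Fn n y - F y|) ≤ ε / 2 := Real.iSup_le hb (by linarith)
  have hsup_nonneg : 0 ≤ ⨆ y, |Fn n y - F y| := Real.iSup_nonneg (fun y => abs_nonneg _)
  rw [Real.dist_eq]
  rw [abs_of_nonneg (by simpa using hsup_nonneg)]
  simpa using lt_of_le_of_lt hsup_le (by linarith)

/-- Glivenko–Cantelli theorem for the inverse-propensity weighted pseudo-empirical
distribution function: `sup_y |F̃₁,ₙ(y) − F₁(y)| → 0` almost surely (`F₁` not assumed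
continuous). -/
theorem stmt_6
    {𝒳 : Type*} [MetricSpace 𝒳] [CompactSpace 𝒳] [MeasurableSpace 𝒳] [BorelSpace 𝒳]
    {Ω : Type*} [MeasurableSpace Ω] (μ : Measure Ω) [IsProbabilityMeasure μ]
    (δ : ℝ) (hδ : δ ∈ Set.Ioo (0 : ℝ) (1/2))
    (p : 𝒳 → ℝ) (hpm : Measurable p) (hp : ∀ x, δ ≤ p x ∧ p x ≤ 1 - δ)
    (X : ℕ → Ω → 𝒳) (T : ℕ → Ω → ℝ) (Y : ℕ → Ω → ℝ)
    (hXm : ∀ i, Measurable (X i)) (hTm : ∀ i, Measurable (T i)) (hYm : ∀ i, Measurable (Y i))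
    (hT01 : ∀ i ω, T i ω = 0 ∨ T i ω = 1)
    (hindep : iIndepFun
      (fun i ω => (X i ω, T i ω, Y i ω)) μ)
    (hident : ∀ i, IdentDistrib (fun ω => (X i ω, T i ω, Y i ω))
      (fun ω => (X 0 ω, T 0 ω, Y 0 ω)) μ μ)
    (hcond : (fun ω => p (X 0 ω))
      =ᵐ[μ] μ[T 0 | MeasurableSpace.comap (X 0) inferInstance])
    (F1 : ℝ → ℝ)
    (hF1 : ∀ y, F1 y = ∫ ω, (T 0 ω / p (X 0 ω)) * (if Y 0 ω ≤ y then (1 : ℝ) else 0) ∂μ)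
    (Ftilde : ℕ → Ω → ℝ → ℝ)
    (hFtilde : ∀ n ω y, Ftilde n ω y = (1 / (n : ℝ)) * ∑ i ∈ Finset.range n,
      (T i ω / p (X i ω)) * (if Y i ω ≤ y then (1 : ℝ) else 0)) :
    ∀ᵐ ω ∂μ, Tendsto (fun n : ℕ => ⨆ y : ℝ, |Ftilde n ω y - F1 y|) atTop (nhds 0) := by
  obtain ⟨hδ0, hδ2⟩ := hδ
  set V : ℕ → Ω → 𝒳 × ℝ × ℝ := fun i ω => (X i ω, T i ω, Y i ω) with hV
  have hVm : ∀ i, Measurable (V i) := fun i => (hXm i).prodMk ((hTm i).prodMk (hYm i))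
  have hT0 : ∀ i ω, 0 ≤ T i ω := fun i ω => by rcases hT01 i ω with h | h <;> simp [h]
  have hT1 : ∀ i ω, T i ω ≤ 1 := fun i ω => by rcases hT01 i ω with h | h <;> simp [h]
  have hppos : ∀ x, 0 < p x := fun x => lt_of_lt_of_le hδ0 (hp x).1
  have hW0 : ∀ i ω, 0 ≤ T i ω / p (X i ω) :=
    fun i ω => div_nonneg (hT0 i ω) (hppos _).le
  have hWbd : ∀ i ω, T i ω / p (X i ω) ≤ 1 / δ :=
    fun i ω => div_le_div₀ zero_le_one (hT1 i ω) hδ0 (hp _).1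
  -- the three basic integrand families
  set φw : 𝒳 × ℝ × ℝ → ℝ := fun v => v.2.1 / p v.1 with hφw_def
  set φle : ℝ → 𝒳 × ℝ × ℝ → ℝ :=
    fun y v => (v.2.1 / p v.1) * (if v.2.2 ≤ y then 1 else 0) with hφle_def
  set φlt : ℝ → 𝒳 × ℝ × ℝ → ℝ :=
    fun y v => (v.2.1 / p v.1) * (if v.2.2 < y then 1 else 0) with hφlt_def
  have hφwm : Measurable φw := measurable_snd.fst.div (hpm.comp measurable_fst)
  have hφlem : ∀ y, Measurable (φle y) := fun y =>
    hφwm.mul (Measurable.ite (measurableSet_le measurable_snd.snd measurable_const)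
      measurable_const measurable_const)
  have hφltm : ∀ y, Measurable (φlt y) := fun y =>
    hφwm.mul (Measurable.ite (measurableSet_lt measurable_snd.snd measurable_const)
      measurable_const measurable_const)
  -- bounds
  have hmulbd : ∀ i ω (c : ℝ), 0 ≤ c → c ≤ 1 → |(T i ω / p (X i ω)) * c| ≤ 1 / δ := by
    intro i ω c hc hc1
    rw [abs_of_nonneg (mul_nonneg (hW0 i ω) hc)]
    nlinarith [hW0 i ω, hWbd i ω]
  have hind0 : ∀ (P : Prop) [Decidable P], (0:ℝ) ≤ (if P then (1:ℝ) else 0) := by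
    intro P _; split_ifs <;> norm_num
  have hind1 : ∀ (P : Prop) [Decidable P], (if P then (1:ℝ) else 0) ≤ 1 := by
    intro P _; split_ifs <;> norm_num
  have hφlebd : ∀ y i ω, |φle y (V i ω)| ≤ 1 / δ := fun y i ω =>
    hmulbd i ω _ (hind0 _) (hind1 _)
  have hφltbd : ∀ y i ω, |φlt y (V i ω)| ≤ 1 / δ := fun y i ω =>
    hmulbd i ω _ (hind0 _) (hind1 _)
  have hφwbd : ∀ i ω, |φw (V i ω)| ≤ 1 / δ := fun i ω => by
    simpa using hmulbd i ω 1 zero_le_one le_rfl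
  -- integrability
  have intf : ∀ (f : 𝒳 × ℝ × ℝ → ℝ), Measurable f → (∀ i ω, |f (V i ω)| ≤ 1/δ) →
      Integrable (fun ω => f (V 0 ω)) μ := by
    intro f hf hb
    refine (integrable_const (1/δ)).mono' ((hf.comp (hVm 0)).aestronglyMeasurable)
      (ae_of_all _ fun ω => ?_)
    simpa [Real.norm_eq_abs] using hb 0 ω
  -- strong law of large numbers
  have slln : ∀ (f : 𝒳 × ℝ × ℝ → ℝ), Measurable f → (∀ i ω, |f (V i ω)| ≤ 1/δ) →
      ∀ᵐ ω ∂μ, Tendsto (fun n : ℕ => (∑ i ∈ Finset.range n, f (V i ω)) / n) atTop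
        (𝓝 (∫ ω, f (V 0 ω) ∂μ)) := by
    intro f hf hb
    have hindep' : Pairwise (Function.onFun (IndepFun · · μ) fun i ω => f (V i ω)) := by
      intro i j hij
      exact (hindep.indepFun hij).comp hf hf
    have hident' : ∀ i, IdentDistrib (fun ω => f (V i ω)) (fun ω => f (V 0 ω)) μ μ :=
      fun i => (hident i).comp hf
    exact strong_law_ae_real _ (intf f hf hb) hindep' hident'
  -- dominated convergence helper
  have domconv : ∀ (f : ℕ → 𝒳 × ℝ × ℝ → ℝ) (g : 𝒳 × ℝ × ℝ → ℝ),
      (∀ m, Measurable (f m)) → (∀ m i ω, |f m (V i ω)| ≤ 1/δ) →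
      (∀ ω, Tendsto (fun m => f m (V 0 ω)) atTop (𝓝 (g (V 0 ω)))) →
      Tendsto (fun m : ℕ => ∫ ω, f m (V 0 ω) ∂μ) atTop (𝓝 (∫ ω, g (V 0 ω) ∂μ)) := by
    intro f g hmeas hbd hlim
    exact tendsto_integral_of_dominated_convergence (fun _ => 1/δ)
      (fun m => ((hmeas m).comp (hVm 0)).aestronglyMeasurable) (integrable_const _)
      (fun m => ae_of_all _ fun ω => by simpa [Real.norm_eq_abs] using hbd m 0 ω)
      (ae_of_all _ hlim)
  -- identification of F1
  have hF1' : ∀ y, F1 y = ∫ ω, φle y (V 0 ω) ∂μ := fun y => hF1 y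
  set G : ℝ → ℝ := fun y => ∫ ω, φlt y (V 0 ω) ∂μ with hG_def
  set b : ℝ := ∫ ω, φw (V 0 ω) ∂μ with hb_def
  have hone_div : Tendsto (fun m : ℕ => 1 / ((m : ℝ) + 1)) atTop (𝓝 0) :=
    tendsto_one_div_add_atTop_nhds_zero_nat
  -- monotonicity of F1
  have hFmono : Monotone F1 := by
    intro a a' haa'
    rw [hF1' a, hF1' a']
    refine integral_mono (intf _ (hφlem a) (hφlebd a)) (intf _ (hφlem a') (hφlebd a'))
      (fun ω => ?_)
    refine mul_le_mul_of_nonneg_left ?_ (hW0 0 ω)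
    split_ifs with h1 h2
    · exact le_rfl
    · exact absurd (h1.trans haa') h2
    · norm_num
    · exact le_rfl
  have hF0 : ∀ y, 0 ≤ F1 y := by
    intro y
    rw [hF1' y]
    exact integral_nonneg fun ω => mul_nonneg (hW0 0 ω) (hind0 _)
  have hFC : ∀ y, F1 y ≤ 1 / δ := by
    intro y
    rw [hF1' y]
    calc ∫ ω, φle y (V 0 ω) ∂μ ≤ ∫ _ω, (1 / δ) ∂μ :=
          integral_mono (intf _ (hφlem y) (hφlebd y)) (integrable_const _)
            (fun ω => le_of_abs_le (hφlebd y 0 ω))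
      _ = 1 / δ := by simp
  have hFb : ∀ y, F1 y ≤ b := by
    intro y
    rw [hF1' y, hb_def]
    refine integral_mono (intf _ (hφlem y) (hφlebd y)) (intf _ hφwm hφwbd) (fun ω => ?_)
    have := hind1 (Y 0 ω ≤ y)
    have h0 := hW0 0 ω
    show (T 0 ω / p (X 0 ω)) * _ ≤ T 0 ω / p (X 0 ω)
    nlinarith
  have hbLUB : ∀ c, (∀ y, F1 y ≤ c) → b ≤ c := by
    intro c hc
    have hlim : Tendsto (fun m : ℕ => F1 m) atTop (𝓝 b) := by
      have := domconv (fun m => φle m) φw (fun m => hφlem _) (fun m => hφlebd _)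
        (fun ω => ?_)
      · refine Tendsto.congr (fun m => (hF1' m).symm) this
      · -- pointwise convergence
        have hev : ∀ᶠ m : ℕ in atTop, φle (m : ℝ) (V 0 ω) = φw (V 0 ω) := by
          refine eventually_atTop.2 ⟨⌈Y 0 ω⌉₊, fun m hm => ?_⟩
          have : Y 0 ω ≤ (m : ℝ) := le_trans (Nat.le_ceil _) (by exact_mod_cast hm)
          simp only [hφle_def, hφw_def]
          rw [if_pos this, mul_one]
        exact Tendsto.congr' (hev.mono fun _ h => h.symm) tendsto_const_nhds
    exact le_of_tendsto hlim (Eventually.of_forall fun m => hc m)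
  have hbot : ∀ c, 0 < c → ∃ y, F1 y < c := by
    intro c hc
    have hlim : Tendsto (fun m : ℕ => F1 (-(m : ℝ))) atTop (𝓝 0) := by
      have h0 : (0 : ℝ) = ∫ ω, (fun _ : 𝒳 × ℝ × ℝ => (0:ℝ)) (V 0 ω) ∂μ := by simp
      rw [h0]
      have := domconv (fun m => φle (-(m : ℝ))) (fun _ => 0) (fun m => hφlem _)
        (fun m => hφlebd _) (fun ω => ?_)
      · exact Tendsto.congr (fun m => (hF1' _).symm) this
      · have hev : ∀ᶠ m : ℕ in atTop, φle (-(m : ℝ)) (V 0 ω) = 0 := by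
          refine eventually_atTop.2 ⟨⌈-(Y 0 ω)⌉₊ + 1, fun m hm => ?_⟩
          have h1 : -(Y 0 ω) ≤ (⌈-(Y 0 ω)⌉₊ : ℝ) := Nat.le_ceil _
          have h2 : ((⌈-(Y 0 ω)⌉₊ : ℕ) : ℝ) + 1 ≤ (m : ℝ) := by exact_mod_cast hm
          have : ¬ (Y 0 ω ≤ -(m : ℝ)) := by push_neg; linarith
          simp only [hφle_def]
          rw [if_neg this, mul_zero]
        exact Tendsto.congr' (hev.mono fun _ h => h.symm) tendsto_const_nhds
    obtain ⟨m, hm⟩ := (hlim.eventually_lt_const hc).exists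
    exact ⟨-(m : ℝ), hm⟩
  have hGle : ∀ t c, (∀ y, y < t → F1 y ≤ c) → G t ≤ c := by
    intro t c hc
    have hlim : Tendsto (fun m : ℕ => F1 (t - 1 / ((m : ℝ) + 1))) atTop (𝓝 (G t)) := by
      have := domconv (fun m => φle (t - 1 / ((m : ℝ) + 1))) (φlt t)
        (fun m => hφlem _) (fun m => hφlebd _) (fun ω => ?_)
      · exact Tendsto.congr (fun m => (hF1' _).symm) this
      · rcases lt_or_ge (Y 0 ω) t with hu | hu
        · have hev : ∀ᶠ m : ℕ in atTop,
              φle (t - 1 / ((m : ℝ) + 1)) (V 0 ω) = φlt t (V 0 ω) := by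
            filter_upwards [hone_div.eventually_lt_const (show (0:ℝ) < t - Y 0 ω by linarith)]
              with m hm
            have h1 : Y 0 ω ≤ t - 1 / ((m : ℝ) + 1) := by linarith
            simp only [hφle_def, hφlt_def]
            rw [if_pos h1, if_pos hu]
          exact Tendsto.congr' (hev.mono fun _ h => h.symm) tendsto_const_nhds
        · have hev : ∀ m : ℕ, φle (t - 1 / ((m : ℝ) + 1)) (V 0 ω) = φlt t (V 0 ω) := by
            intro m
            have hpos : (0:ℝ) < 1 / ((m : ℝ) + 1) := by positivity
            have h1 : ¬ (Y 0 ω ≤ t - 1 / ((m : ℝ) + 1)) := by push_neg; linarith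
            have h2 : ¬ (Y 0 ω < t) := not_lt.2 hu
            simp only [hφle_def, hφlt_def]
            rw [if_neg h1, if_neg h2]
          exact Tendsto.congr (fun m => (hev m).symm) tendsto_const_nhds
    refine le_of_tendsto hlim (Eventually.of_forall fun m => hc _ ?_)
    have : (0:ℝ) < 1 / ((m : ℝ) + 1) := by positivity
    linarith
  have hFright : ∀ t c, (∀ y, t < y → c ≤ F1 y) → c ≤ F1 t := by
    intro t c hc
    have hlim : Tendsto (fun m : ℕ => F1 (t + 1 / ((m : ℝ) + 1))) atTop (𝓝 (F1 t)) := by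
      rw [hF1' t]
      have := domconv (fun m => φle (t + 1 / ((m : ℝ) + 1))) (φle t)
        (fun m => hφlem _) (fun m => hφlebd _) (fun ω => ?_)
      · exact Tendsto.congr (fun m => (hF1' _).symm) this
      · rcases le_or_gt (Y 0 ω) t with hu | hu
        · have hev : ∀ m : ℕ, φle (t + 1 / ((m : ℝ) + 1)) (V 0 ω) = φle t (V 0 ω) := by
            intro m
            have hpos : (0:ℝ) < 1 / ((m : ℝ) + 1) := by positivity
            have h1 : Y 0 ω ≤ t + 1 / ((m : ℝ) + 1) := by linarith
            simp only [hφle_def]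
            rw [if_pos h1, if_pos hu]
          exact Tendsto.congr (fun m => (hev m).symm) tendsto_const_nhds
        · have hev : ∀ᶠ m : ℕ in atTop,
              φle (t + 1 / ((m : ℝ) + 1)) (V 0 ω) = φle t (V 0 ω) := by
            filter_upwards [hone_div.eventually_lt_const (show (0:ℝ) < Y 0 ω - t by linarith)]
              with m hm
            have h1 : ¬ (Y 0 ω ≤ t + 1 / ((m : ℝ) + 1)) := by push_neg; linarith
            have h2 : ¬ (Y 0 ω ≤ t) := not_le.2 hu
            simp only [hφle_def]
            rw [if_neg h1, if_neg h2]
          exact Tendsto.congr' (hev.mono fun _ h => h.symm) tendsto_const_nhds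
    exact ge_of_tendsto hlim (Eventually.of_forall fun m => hc _ (by
      have : (0:ℝ) < 1 / ((m : ℝ) + 1) := by positivity
      linarith))
  -- pointwise nonnegativity and comparisons for the empirical quantities
  have hφle0 : ∀ y i (ω : Ω), 0 ≤ φle y (V i ω) := fun y i ω =>
    mul_nonneg (hW0 i ω) (hind0 _)
  -- a.e. events from the SLLN
  set gp : ℚ → ℝ := fun q => sInf {y | (q : ℝ) ≤ F1 y} with hgp
  have hE1 : ∀ᵐ ω ∂μ, ∀ q : ℚ, Tendsto
      (fun n : ℕ => (∑ i ∈ Finset.range n, φle (gp q) (V i ω)) / n) atTop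
      (𝓝 (F1 (gp q))) := by
    rw [ae_all_iff]
    intro q
    filter_upwards [slln (φle (gp q)) (hφlem _) (hφlebd _)] with ω h
    rwa [← hF1'] at h
  have hE2 : ∀ᵐ ω ∂μ, ∀ q : ℚ, Tendsto
      (fun n : ℕ => (∑ i ∈ Finset.range n, φlt (gp q) (V i ω)) / n) atTop
      (𝓝 (G (gp q))) := by
    rw [ae_all_iff]
    intro q
    exact slln (φlt (gp q)) (hφltm _) (hφltbd _)
  have hE3 : ∀ᵐ ω ∂μ, Tendsto
      (fun n : ℕ => (∑ i ∈ Finset.range n, φw (V i ω)) / n) atTop (𝓝 b) :=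
    slln φw hφwm hφwbd
  filter_upwards [hE1, hE2, hE3] with ω h1 h2 h3
  have hFt_eq : ∀ n y, Ftilde n ω y = (∑ i ∈ Finset.range n, φle y (V i ω)) / n := by
    intro n y
    rw [hFtilde n ω y, one_div, inv_mul_eq_div]
  refine det_gc F1 G (fun n y => Ftilde n ω y)
      (fun n y => (∑ i ∈ Finset.range n, φlt y (V i ω)) / n)
      (fun n => (∑ i ∈ Finset.range n, φw (V i ω)) / n) b (1/δ)
      hFmono hF0 ?_ hFC hbLUB hbot hGle hFright ?_ ?_ ?_ h3 ?_ ?_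
  · -- nonnegativity of Fn
    intro n y
    show (0:ℝ) ≤ Ftilde n ω y
    rw [hFt_eq]
    exact div_nonneg (Finset.sum_nonneg fun i _ => hφle0 y i ω) (Nat.cast_nonneg n)
  · -- monotonicity of Fn
    intro n a a' haa'
    show Ftilde n ω a ≤ Ftilde n ω a'
    rw [hFt_eq, hFt_eq, div_eq_mul_inv, div_eq_mul_inv]
    refine mul_le_mul_of_nonneg_right (Finset.sum_le_sum fun i _ => ?_) (by positivity)
    refine mul_le_mul_of_nonneg_left ?_ (hW0 i ω)
    split_ifs with ha hb'
    · exact le_rfl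
    · exact absurd (ha.trans haa') hb'
    · norm_num
    · exact le_rfl
  · -- Fn ≤ Gn
    intro n y t hyt
    show Ftilde n ω y ≤ (∑ i ∈ Finset.range n, φlt t (V i ω)) / ↑n
    rw [hFt_eq, div_eq_mul_inv, div_eq_mul_inv]
    refine mul_le_mul_of_nonneg_right (Finset.sum_le_sum fun i _ => ?_) (by positivity)
    refine mul_le_mul_of_nonneg_left ?_ (hW0 i ω)
    split_ifs with ha hb'
    · exact le_rfl
    · exact absurd (lt_of_le_of_lt ha hyt) hb'
    · norm_num
    · exact le_rfl
  · -- Fn ≤ S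
    intro n y
    show Ftilde n ω y ≤ (∑ i ∈ Finset.range n, φw (V i ω)) / ↑n
    rw [hFt_eq, div_eq_mul_inv, div_eq_mul_inv]
    refine mul_le_mul_of_nonneg_right (Finset.sum_le_sum fun i _ => ?_) (by positivity)
    calc (T i ω / p (X i ω)) * (if Y i ω ≤ y then (1:ℝ) else 0)
        ≤ (T i ω / p (X i ω)) * 1 := mul_le_mul_of_nonneg_left (hind1 _) (hW0 i ω)
      _ = φw (V i ω) := by rw [mul_one]
  · -- convergence of Fn at grid points
    intro q
    refine Tendsto.congr (fun n => (hFt_eq n (gp q)).symm) (h1 q)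
  · -- convergence of Gn at grid points
    intro q
    exact h2 q
end

section
/- sup_{y ∈ ℝ} |F̂₁,ₙ(y) − F₁(y)| → 0 in probability as n → ∞; i.e., for every ε > 0, P( sup_y |F̂₁,ₙ(y) − F₁(y)| > ε ) → 0. -/
open MeasureTheory ProbabilityTheory Filter Finset Topology

lemma my_integrable_of_bdd {Ω : Type*} [MeasurableSpace Ω] {μ : Measure Ω}
    [IsProbabilityMeasure μ] {f : Ω → ℝ} {C : ℝ}
    (hm : AEStronglyMeasurable f μ) (h : ∀ ω, |f ω| ≤ C) : Integrable f μ := by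
  refine Integrable.mono' (integrable_const C) hm (ae_of_all _ fun ω => ?_)
  simpa [Real.norm_eq_abs] using h ω

lemma my_slln_comp {Ω β : Type*} [MeasurableSpace Ω] {μ : Measure Ω} [IsProbabilityMeasure μ]
    [MeasurableSpace β] (V : ℕ → Ω → β)
    (hindep : iIndepFun V μ)
    (hident : ∀ i, IdentDistrib (V i) (V 0) μ μ)
    (f : β → ℝ) (hf : Measurable f) (hint : Integrable (fun ω => f (V 0 ω)) μ) :
    ∀ᵐ ω ∂μ, Tendsto (fun n : ℕ => (∑ i ∈ Finset.range n, f (V i ω)) / n) atTop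
      (𝓝 (∫ ω, f (V 0 ω) ∂μ)) := by
  have h := ProbabilityTheory.strong_law_ae_real (fun i ω => f (V i ω)) hint
    (fun i j hij => (hindep.comp (fun _ => f) (fun _ => hf)).indepFun hij)
    (fun i => (hident i).comp hf)
  exact h

lemma my_sandwich (F Fm G H : ℝ → ℝ) (K ε : ℝ) (hε : 0 < ε)
    (k : ℕ) (hk : 1 ≤ k) (t : ℕ → ℝ)
    (ht_mono : ∀ i ∈ Finset.Icc 1 k, ∀ j ∈ Finset.Icc 1 k, i ≤ j → t i ≤ t j)
    (hF_mono : Monotone F) (hF_nonneg : ∀ y, 0 ≤ F y) (hF_le1 : ∀ y, F y ≤ 1)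
    (hFFm : ∀ s u, s < u → F s ≤ Fm u)
    (hgrid : ∀ j ∈ Finset.Icc 1 k, (j : ℝ) * ε ≤ F (t j) ∧ Fm (t j) ≤ (j : ℝ) * ε)
    (hkε : 1 - ε ≤ (k : ℝ) * ε)
    (hG_mono : Monotone G) (hG_nonneg : ∀ y, 0 ≤ G y)
    (hGH : ∀ s u, s < u → G s ≤ H u)
    (hGK : ∀ y, G y ≤ K)
    (ha : ∀ j ∈ Finset.Icc 1 k, |G (t j) - F (t j)| ≤ ε ∧ |H (t j) - Fm (t j)| ≤ ε)
    (hb : |K - 1| ≤ ε) :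
    ∀ y, |G y - F y| ≤ 3 * ε := by
  intro y
  have h1k : 1 ∈ Finset.Icc 1 k := by simp [hk]
  have hkk : k ∈ Finset.Icc 1 k := by simp [hk]
  by_cases hy1 : y < t 1
  · -- low tail
    have hFy : F y ≤ ε := by
      have := hFFm y (t 1) hy1
      have h2 := (hgrid 1 h1k).2
      simp only [Nat.cast_one, one_mul] at h2
      linarith
    have hGy : G y ≤ 2 * ε := by
      have h3 := hGH y (t 1) hy1
      have h4 := (ha 1 h1k).2
      have h2 := (hgrid 1 h1k).2
      simp only [Nat.cast_one, one_mul] at h2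
      have := abs_le.1 h4
      linarith
    have := hF_nonneg y
    have := hG_nonneg y
    rw [abs_le]; constructor <;> linarith
  · push_neg at hy1
    by_cases hyk : t k ≤ y
    · -- high tail
      have hFk := (hgrid k hkk).1
      have hFky : F (t k) ≤ F y := hF_mono hyk
      have hFy1 := hF_le1 y
      have hGy1 : G y ≤ K := hGK y
      have hGy2 : F (t k) - ε ≤ G y := by
        have := (abs_le.1 (ha k hkk).1).1
        have := hG_mono hyk
        linarith
      have hK : K ≤ 1 + ε := by have := abs_le.1 hb; linarith
      rw [abs_le]; constructor <;> linarith
    · push_neg at hyk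
      -- middle: find the largest j in Icc 1 k with t j ≤ y
      have hsne : ((Finset.Icc 1 k).filter (fun j => t j ≤ y)).Nonempty :=
        ⟨1, by simp [h1k, hy1]⟩
      set j := ((Finset.Icc 1 k).filter (fun j => t j ≤ y)).max' hsne with hjdef
      have hjmem : j ∈ (Finset.Icc 1 k).filter (fun j => t j ≤ y) := Finset.max'_mem _ _
      have hjIcc : j ∈ Finset.Icc 1 k := (Finset.mem_filter.1 hjmem).1
      have hjy : t j ≤ y := (Finset.mem_filter.1 hjmem).2
      have hjk : j < k := by
        rcases lt_or_eq_of_le (Finset.mem_Icc.1 hjIcc).2 with h | h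
        · exact h
        · exact absurd (h ▸ hjy) (not_le.2 hyk)
      have hj1 : 1 ≤ j := (Finset.mem_Icc.1 hjIcc).1
      have hj1Icc : j + 1 ∈ Finset.Icc 1 k := Finset.mem_Icc.2 ⟨by omega, by omega⟩
      have hyj1 : y < t (j + 1) := by
        by_contra hcon
        push_neg at hcon
        have : j + 1 ∈ (Finset.Icc 1 k).filter (fun j => t j ≤ y) :=
          Finset.mem_filter.2 ⟨hj1Icc, hcon⟩
        have := Finset.le_max' _ _ this
        omega
      -- bounds
      have hgj := hgrid j hjIcc
      have hgj1 := hgrid (j+1) hj1Icc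
      have haj := ha j hjIcc
      have haj1 := ha (j+1) hj1Icc
      have hFyl : F (t j) ≤ F y := hF_mono hjy
      have hFyu : F y ≤ Fm (t (j+1)) := hFFm y _ hyj1
      have hGyl : F (t j) - ε ≤ G y := by
        have := (abs_le.1 haj.1).1
        have := hG_mono hjy
        linarith
      have hGyu : G y ≤ Fm (t (j+1)) + ε := by
        have := (abs_le.1 haj1.2).2
        have := hGH y _ hyj1
        linarith
      have hwidth : Fm (t (j+1)) - F (t j) ≤ ε := by
        have h1 := hgj.1
        have h2 := hgj1.2
        push_cast at h1 h2 ⊢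
        linarith
      rw [abs_le]; constructor <;> linarith

lemma my_grid (F Fm : ℝ → ℝ) (hF_mono : Monotone F)
    (hF_top : Tendsto (fun n : ℕ => F n) atTop (𝓝 1))
    (hF_bot : Tendsto (fun n : ℕ => F (-(n : ℝ))) atTop (𝓝 0))
    (hF_right : ∀ τ, Tendsto (fun n : ℕ => F (τ + 1 / (n + 1))) atTop (𝓝 (F τ)))
    (hFm_left : ∀ τ, Tendsto (fun n : ℕ => F (τ - 1 / (n + 1))) atTop (𝓝 (Fm τ)))
    (ε : ℝ) (hε : 0 < ε) (hε8 : ε ≤ 1 / 8) :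
    ∃ k : ℕ, 1 ≤ k ∧ 1 - ε ≤ (k : ℝ) * ε ∧ ∃ t : ℕ → ℝ,
      (∀ i ∈ Finset.Icc 1 k, ∀ j ∈ Finset.Icc 1 k, i ≤ j → t i ≤ t j) ∧
      (∀ j ∈ Finset.Icc 1 k, (j : ℝ) * ε ≤ F (t j) ∧ Fm (t j) ≤ (j : ℝ) * ε) := by
  set S : ℕ → Set ℝ := fun j => {y | (j : ℝ) * ε ≤ F y} with hSdef
  set k : ℕ := ⌈1 / ε⌉₊ - 1 with hkdef
  have hceil1 : (1 : ℕ) ≤ ⌈1 / ε⌉₊ := by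
    rw [Nat.one_le_ceil_iff]
    positivity
  have hkc : (k : ℝ) = (⌈1 / ε⌉₊ : ℝ) - 1 := by
    rw [hkdef]
    push_cast [Nat.cast_sub hceil1]
    ring
  have hklt : (k : ℝ) * ε < 1 := by
    have h1 : (⌈1 / ε⌉₊ : ℝ) < 1 / ε + 1 := Nat.ceil_lt_add_one (by positivity)
    have : (k : ℝ) < 1 / ε := by rw [hkc]; linarith
    calc (k : ℝ) * ε < (1 / ε) * ε := by
          exact mul_lt_mul_of_pos_right this hε
      _ = 1 := by field_simp
  have hkge : 1 - ε ≤ (k : ℝ) * ε := by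
    have h1 : 1 / ε ≤ (⌈1 / ε⌉₊ : ℝ) := Nat.le_ceil _
    have : 1 / ε - 1 ≤ (k : ℝ) := by rw [hkc]; linarith
    have h2 : (1 / ε - 1) * ε ≤ (k : ℝ) * ε := mul_le_mul_of_nonneg_right this hε.le
    calc 1 - ε = (1 / ε - 1) * ε := by field_simp
      _ ≤ (k : ℝ) * ε := h2
  have hk1 : 1 ≤ k := by
    rcases Nat.eq_zero_or_pos k with h | h
    · exfalso
      rw [h] at hkge
      norm_num at hkge
      linarith
    · exact h
  -- nonemptiness and boundedness of S j for j ≤ k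
  have hSne : ∀ j : ℕ, j ≤ k → (S j).Nonempty := by
    intro j hj
    have hjε : (j : ℝ) * ε < 1 := by
      calc (j : ℝ) * ε ≤ (k : ℝ) * ε := by
            exact mul_le_mul_of_nonneg_right (by exact_mod_cast hj) hε.le
        _ < 1 := hklt
    have := hF_top.eventually (eventually_gt_nhds hjε)
    obtain ⟨n, hn⟩ := this.exists
    exact ⟨n, le_of_lt hn⟩
  have hSbdd : ∀ j : ℕ, 1 ≤ j → BddBelow (S j) := by
    intro j hj
    have hjpos : (0 : ℝ) < (j : ℝ) * ε := by
      apply mul_pos _ hε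
      exact_mod_cast hj
    have := hF_bot.eventually (eventually_lt_nhds hjpos)
    obtain ⟨n, hn⟩ := this.exists
    refine ⟨-(n : ℝ), fun y hy => ?_⟩
    by_contra hcon
    push_neg at hcon
    have : F y ≤ F (-(n : ℝ)) := hF_mono hcon.le
    have : F y < (j : ℝ) * ε := lt_of_le_of_lt this hn
    exact absurd hy (by simpa [hSdef] using not_le.2 this)
  set t : ℕ → ℝ := fun j => sInf (S j) with htdef
  refine ⟨k, hk1, hkge, t, ?_, ?_⟩
  · intro i hi j hj hij
    apply csInf_le_csInf (hSbdd i (Finset.mem_Icc.1 hi).1) (hSne j (Finset.mem_Icc.1 hj).2)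
    intro y hy
    simp only [hSdef, Set.mem_setOf_eq] at hy ⊢
    calc (i : ℝ) * ε ≤ (j : ℝ) * ε := mul_le_mul_of_nonneg_right (by exact_mod_cast hij) hε.le
      _ ≤ F y := hy
  · intro j hj
    obtain ⟨hj1, hjk⟩ := Finset.mem_Icc.1 hj
    have hne := hSne j hjk
    have hbdd := hSbdd j hj1
    constructor
    · -- jε ≤ F (t j) via right limit
      refine ge_of_tendsto (hF_right (t j)) (Eventually.of_forall fun n => ?_)
      have hlt : t j < t j + 1 / (n + 1) := by
        have : (0 : ℝ) < 1 / (n + 1) := by positivity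
        linarith
      obtain ⟨y, hyS, hylt⟩ := (csInf_lt_iff hbdd hne).1 hlt
      calc (j : ℝ) * ε ≤ F y := hyS
        _ ≤ F (t j + 1 / (n + 1)) := hF_mono hylt.le
    · -- Fm (t j) ≤ jε via left limit
      refine le_of_tendsto (hFm_left (t j)) (Eventually.of_forall fun n => ?_)
      by_contra hcon
      push_neg at hcon
      have hyS : t j - 1 / (n + 1) ∈ S j := le_of_lt hcon
      have := csInf_le hbdd hyS
      have hpos : (0 : ℝ) < 1 / (n + 1) := by positivity
      simp only [htdef] at this
      linarith

lemma my_L_eq_one {𝒳 Ω : Type*} [MeasurableSpace 𝒳] [MeasurableSpace Ω]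
    (μ : Measure Ω) [IsProbabilityMeasure μ]
    (p : 𝒳 → ℝ) (hpm : Measurable p) (hppos : ∀ x, 0 < p x)
    (X : Ω → 𝒳) (T : Ω → ℝ) (hXm : Measurable X) (hTm : Measurable T)
    (hT01 : ∀ ω, T ω = 0 ∨ T ω = 1)
    (hint : Integrable (fun ω => T ω / p (X ω)) μ)
    (hcond : (fun ω => p (X ω)) =ᵐ[μ] μ[T | MeasurableSpace.comap X inferInstance]) :
    ∫ ω, T ω / p (X ω) ∂μ = 1 := by
  set m : MeasurableSpace Ω := MeasurableSpace.comap X inferInstance with hmdef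
  have hm : m ≤ _ := hXm.comap_le
  haveI : SigmaFinite (μ.trim hm) := by
    haveI := isFiniteMeasure_trim hm (μ := μ)
    infer_instance
  set g : Ω → ℝ := fun ω => (p (X ω))⁻¹ with hgdef
  have hgm : StronglyMeasurable[m] g := by
    have hXm' : Measurable[m] X := Measurable.of_comap_le le_rfl
    exact (hpm.inv.comp hXm').stronglyMeasurable
  have hgT : (fun ω => T ω / p (X ω)) = g * T := by
    funext ω
    simp only [hgdef, Pi.mul_apply, div_eq_inv_mul]
  have hTint : Integrable T μ := by
    refine Integrable.mono' (integrable_const 1) hTm.aestronglyMeasurable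
      (ae_of_all _ fun ω => ?_)
    rcases hT01 ω with h | h <;> simp [h]
  have hgTint : Integrable (g * T) μ := hgT ▸ hint
  have hpull := condExp_mul_of_stronglyMeasurable_left hgm hgTint hTint
  calc ∫ ω, T ω / p (X ω) ∂μ = ∫ ω, (g * T) ω ∂μ := by rw [hgT]
    _ = ∫ ω, (μ[g * T|m]) ω ∂μ := (integral_condExp hm).symm
    _ = ∫ ω, (g * μ[T|m]) ω ∂μ := integral_congr_ae hpull
    _ = ∫ ω, g ω * p (X ω) ∂μ := by
        refine integral_congr_ae ?_
        filter_upwards [hcond] with ω hω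
        simp only [Pi.mul_apply, ← hω]
    _ = ∫ ω, (1 : ℝ) ∂μ := by
        refine integral_congr_ae (ae_of_all _ fun ω => ?_)
        simp only [hgdef]
        rw [inv_mul_cancel₀ (ne_of_gt (hppos _))]
    _ = 1 := by simp

lemma my_pert (n : ℕ) (hn : 1 ≤ n) (W Z' ind : ℕ → ℝ) (β ε₂ F : ℝ)
    (hβ0 : 0 ≤ β) (hβ : β ≤ 2 * ε₂) (hε₂ : 0 < ε₂) (hε₂8 : ε₂ ≤ 1 / 8)
    (hind : ∀ i, 0 ≤ ind i ∧ ind i ≤ 1)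
    (hWZ : ∀ i, |W i - Z' i| ≤ β)
    (hF0 : 0 ≤ F) (hF1 : F ≤ 1)
    (hG : |(∑ i ∈ Finset.range n, Z' i * ind i) / n - F| ≤ 3 * ε₂)
    (hK : |(∑ i ∈ Finset.range n, Z' i) / n - 1| ≤ ε₂) :
    0 < (∑ i ∈ Finset.range n, W i) ∧
      |(∑ i ∈ Finset.range n, W i * ind i) / (∑ i ∈ Finset.range n, W i) - F| ≤ 16 * ε₂ := by
  have hn0 : (0 : ℝ) < n := by exact_mod_cast hn
  set N : ℝ := ∑ i ∈ Finset.range n, W i * ind i with hNdef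
  set D : ℝ := ∑ i ∈ Finset.range n, W i with hDdef
  set Gn : ℝ := (∑ i ∈ Finset.range n, Z' i * ind i) / n with hGndef
  set Kn : ℝ := (∑ i ∈ Finset.range n, Z' i) / n with hKndef
  -- |N/n - Gn| ≤ β
  have hsum_bound : ∀ (u : ℕ → ℝ), (∀ i, |u i| ≤ 1) →
      |(∑ i ∈ Finset.range n, W i * u i) / n - (∑ i ∈ Finset.range n, Z' i * u i) / n| ≤ β := by
    intro u hu
    rw [div_sub_div_same]
    rw [← Finset.sum_sub_distrib]
    rw [abs_div, abs_of_pos hn0, div_le_iff₀ hn0]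
    calc |∑ i ∈ Finset.range n, (W i * u i - Z' i * u i)|
        ≤ ∑ i ∈ Finset.range n, |W i * u i - Z' i * u i| := Finset.abs_sum_le_sum_abs _ _
      _ ≤ ∑ i ∈ Finset.range n, β := by
          refine Finset.sum_le_sum fun i _ => ?_
          rw [← sub_mul, abs_mul]
          calc |W i - Z' i| * |u i| ≤ |W i - Z' i| * 1 :=
                mul_le_mul_of_nonneg_left (hu i) (abs_nonneg _)
            _ ≤ β := by rw [mul_one]; exact hWZ i
      _ = β * n := by rw [Finset.sum_const, Finset.card_range]; ring
  have hNG : |N / n - Gn| ≤ β := hsum_bound ind fun i =>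
    abs_le.2 ⟨by linarith [(hind i).1], (hind i).2⟩
  have hSK : |D / n - Kn| ≤ β := by
    have := hsum_bound (fun _ => 1) (fun i => by norm_num)
    simpa [hDdef, hKndef] using this
  have hKlb : 1 - ε₂ ≤ Kn := by linarith [(abs_le.1 hK).1]
  have hSn_lb : 1 - 3 * ε₂ ≤ D / n := by
    have := (abs_le.1 hSK).1
    linarith
  have h58 : (5 : ℝ) / 8 ≤ D / n := by linarith
  have hDpos : 0 < D := by
    have h1 : 0 < D / n := by linarith
    have := mul_pos h1 hn0
    rwa [div_mul_cancel₀ _ (ne_of_gt hn0)] at this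
  refine ⟨hDpos, ?_⟩
  have hND : N / D = (N / n) / (D / n) := by
    rw [eq_comm, div_div_div_cancel_right₀]
    exact ne_of_gt hn0
  have hdiff : N / D - F = ((N / n) - F * (D / n)) / (D / n) := by
    rw [hND]
    field_simp
  rw [hdiff, abs_div, abs_of_pos (by linarith : (0:ℝ) < D / n)]
  have hnum : |N / n - F * (D / n)| ≤ 8 * ε₂ := by
    have hdec : N / n - F * (D / n) = (N / n - Gn) + (Gn - F) + F * (1 - D / n) := by ring
    rw [hdec]
    have h1 : |(N / n - Gn) + (Gn - F) + F * (1 - D / n)|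
        ≤ |N / n - Gn| + |Gn - F| + |F * (1 - D / n)| := by
      calc _ ≤ |(N / n - Gn) + (Gn - F)| + |F * (1 - D / n)| := abs_add_le _ _
        _ ≤ _ := by linarith [abs_add_le (N / n - Gn) (Gn - F)]
    have h2 : |F * (1 - D / n)| ≤ ε₂ + β := by
      rw [abs_mul, abs_of_nonneg hF0]
      have h3 : |1 - D / n| ≤ ε₂ + β := by
        have := abs_le.1 hK
        have := abs_le.1 hSK
        rw [abs_le]
        constructor <;> linarith
      calc F * |1 - D / n| ≤ 1 * (ε₂ + β) := by
            exact mul_le_mul hF1 h3 (abs_nonneg _) (by norm_num)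
        _ = ε₂ + β := by ring
    linarith
  calc |N / n - F * (D / n)| / (D / n) ≤ (8 * ε₂) / (5 / 8) := by
        apply div_le_div₀ (by positivity) hnum (by norm_num) h58
    _ ≤ 16 * ε₂ := by linarith

set_option maxHeartbeats 2000000 in
/-- Uniform consistency in probability of the Hájek-type estimator:
`sup_y |F̂₁,ₙ(y) − F₁(y)| → 0` in probability. -/
theorem stmt_7
    {𝒳 : Type*} [MetricSpace 𝒳] [CompactSpace 𝒳] [MeasurableSpace 𝒳] [BorelSpace 𝒳]
    {Ω : Type*} [MeasurableSpace Ω] (μ : Measure Ω) [IsProbabilityMeasure μ]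
    (δ : ℝ) (hδ : δ ∈ Set.Ioo (0 : ℝ) (1/2))
    (p : C(𝒳, ℝ)) (hp : ∀ x, δ ≤ p x ∧ p x ≤ 1 - δ)
    (X : ℕ → Ω → 𝒳) (T : ℕ → Ω → ℝ) (Y : ℕ → Ω → ℝ)
    (hXm : ∀ i, Measurable (X i)) (hTm : ∀ i, Measurable (T i)) (hYm : ∀ i, Measurable (Y i))
    (hT01 : ∀ i ω, T i ω = 0 ∨ T i ω = 1)
    (hindep : iIndepFun
      (fun i ω => (X i ω, T i ω, Y i ω)) μ)
    (hident : ∀ i, IdentDistrib (fun ω => (X i ω, T i ω, Y i ω))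
      (fun ω => (X 0 ω, T 0 ω, Y 0 ω)) μ μ)
    (hcond : (fun ω => p (X 0 ω))
      =ᵐ[μ] μ[T 0 | MeasurableSpace.comap (X 0) inferInstance])
    [MeasurableSpace C(𝒳, ℝ)] [BorelSpace C(𝒳, ℝ)]
    (phat : ℕ → Ω → C(𝒳, ℝ)) (hmeas : ∀ n, Measurable (phat n))
    (hconv : ∀ ε > (0 : ℝ),
      Tendsto (fun n => μ {ω | (⨆ x, |phat n ω x - p x|) > ε}) atTop (nhds 0))
    (F1 : ℝ → ℝ)
    (hF1 : ∀ y, F1 y = ∫ ω, (T 0 ω / p (X 0 ω)) * (if Y 0 ω ≤ y then (1 : ℝ) else 0) ∂μ)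
    (Fhat : ℕ → Ω → ℝ → ℝ)
    (hFhat : ∀ n ω y, Fhat n ω y = ∑ i ∈ Finset.range n,
      ((T i ω / phat n ω (X i ω)) / ∑ k ∈ Finset.range n, T k ω / phat n ω (X k ω)) *
        (if Y i ω ≤ y then (1 : ℝ) else 0)) :
    ∀ ε > (0 : ℝ),
      Tendsto (fun n : ℕ => μ {ω | (⨆ y : ℝ, |Fhat n ω y - F1 y|) > ε})
        atTop (nhds 0) := by
  intro ε hε
  obtain ⟨hδ0, hδh⟩ := hδ
  have hppos : ∀ x, 0 < p x := fun x => lt_of_lt_of_le hδ0 (hp x).1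
  have hδinv : (0 : ℝ) ≤ δ⁻¹ := by positivity
  -- constants
  set ε₂ : ℝ := min (ε / 32) (1 / 8) with hε₂def
  have hε₂pos : 0 < ε₂ := lt_min (by linarith) (by norm_num)
  have hε₂a : ε₂ ≤ ε / 32 := min_le_left _ _
  have hε₂b : ε₂ ≤ 1 / 8 := min_le_right _ _
  set η : ℝ := min (δ / 2) (δ ^ 2 * ε₂) with hηdef
  have hηpos : 0 < η := lt_min (by linarith) (by positivity)
  have hη1 : η ≤ δ / 2 := min_le_left _ _
  have hη2 : η ≤ δ ^ 2 * ε₂ := min_le_right _ _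
  set β : ℝ := 2 * η / δ ^ 2 with hβdef
  have hβ0 : 0 ≤ β := by positivity
  have hβ2 : β ≤ 2 * ε₂ := by
    rw [hβdef, div_le_iff₀ (by positivity)]
    nlinarith
  -- random vectors and auxiliary functions
  set V : ℕ → Ω → 𝒳 × ℝ × ℝ := fun i ω => (X i ω, T i ω, Y i ω) with hVdef
  have hVm : ∀ i, Measurable (V i) := fun i => (hXm i).prod ((hTm i).prod (hYm i))
  set Z : 𝒳 × ℝ × ℝ → ℝ := fun b => b.2.1 / p b.1 with hZdef
  have hZm : Measurable Z :=
    measurable_snd.fst.div (p.continuous.measurable.comp measurable_fst)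
  set fI : ℝ → 𝒳 × ℝ × ℝ → ℝ := fun τ b => Z b * (if b.2.2 ≤ τ then 1 else 0) with hfIdef
  set fS : ℝ → 𝒳 × ℝ × ℝ → ℝ := fun τ b => Z b * (if b.2.2 < τ then 1 else 0) with hfSdef
  have hfIm : ∀ τ, Measurable (fI τ) := fun τ =>
    hZm.mul (Measurable.ite (measurableSet_le measurable_snd.snd measurable_const)
      measurable_const measurable_const)
  have hfSm : ∀ τ, Measurable (fS τ) := fun τ =>
    hZm.mul (Measurable.ite (measurableSet_lt measurable_snd.snd measurable_const)
      measurable_const measurable_const)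
  -- values on sample points
  have hZval : ∀ i ω, Z (V i ω) = T i ω / p (X i ω) := fun i ω => rfl
  have hfIval : ∀ τ i ω, fI τ (V i ω) =
      (T i ω / p (X i ω)) * (if Y i ω ≤ τ then 1 else 0) := fun τ i ω => rfl
  have hfSval : ∀ τ i ω, fS τ (V i ω) =
      (T i ω / p (X i ω)) * (if Y i ω < τ then 1 else 0) := fun τ i ω => rfl
  have hTP : ∀ i ω, 0 ≤ T i ω / p (X i ω) ∧ T i ω / p (X i ω) ≤ δ⁻¹ := by
    intro i ω
    have hp1 := hppos (X i ω)
    have hp2 := (hp (X i ω)).1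
    rcases hT01 i ω with h | h <;> rw [h]
    · simp [hδinv]
    · constructor
      · positivity
      · have h2 : (1 : ℝ) / p (X i ω) ≤ 1 / δ := one_div_le_one_div_of_le hδ0 hp2
        simpa [one_div] using h2
  have hind01 : ∀ (P : Prop) (inst : Decidable P),
      0 ≤ (if P then (1 : ℝ) else 0) ∧ (if P then (1 : ℝ) else 0) ≤ 1 := by
    intro P inst
    split <;> norm_num
  have hZV : ∀ i ω, 0 ≤ Z (V i ω) ∧ Z (V i ω) ≤ δ⁻¹ := by
    intro i ω
    rw [hZval]
    exact hTP i ω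
  have hfIV : ∀ τ i ω, 0 ≤ fI τ (V i ω) ∧ fI τ (V i ω) ≤ Z (V i ω) := by
    intro τ i ω
    rw [hfIval, hZval]
    constructor
    · exact mul_nonneg (hTP i ω).1 (hind01 _ _).1
    · exact mul_le_of_le_one_right (hTP i ω).1 (hind01 _ _).2
  have hfSV : ∀ τ i ω, 0 ≤ fS τ (V i ω) ∧ fS τ (V i ω) ≤ Z (V i ω) := by
    intro τ i ω
    rw [hfSval, hZval]
    constructor
    · exact mul_nonneg (hTP i ω).1 (hind01 _ _).1
    · exact mul_le_of_le_one_right (hTP i ω).1 (hind01 _ _).2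
  -- integrability
  have habs : ∀ (g : Ω → ℝ), (∀ ω', 0 ≤ g ω' ∧ g ω' ≤ δ⁻¹) → ∀ ω', |g ω'| ≤ δ⁻¹ :=
    fun g hg ω' => abs_le.2 ⟨by linarith [(hg ω').1], (hg ω').2⟩
  have hZint : Integrable (fun ω => Z (V 0 ω)) μ :=
    my_integrable_of_bdd ((hZm.comp (hVm 0)).aestronglyMeasurable)
      (habs _ fun ω => hZV 0 ω)
  have hfIint : ∀ τ, Integrable (fun ω => fI τ (V 0 ω)) μ := fun τ =>
    my_integrable_of_bdd (((hfIm τ).comp (hVm 0)).aestronglyMeasurable)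
      (habs _ fun ω => ⟨(hfIV τ 0 ω).1, le_trans (hfIV τ 0 ω).2 (hZV 0 ω).2⟩)
  have hfSint : ∀ τ, Integrable (fun ω => fS τ (V 0 ω)) μ := fun τ =>
    my_integrable_of_bdd (((hfSm τ).comp (hVm 0)).aestronglyMeasurable)
      (habs _ fun ω => ⟨(hfSV τ 0 ω).1, le_trans (hfSV τ 0 ω).2 (hZV 0 ω).2⟩)
  -- F1 and Fm
  have hF1eq : ∀ τ, F1 τ = ∫ ω, fI τ (V 0 ω) ∂μ := fun τ => hF1 τ
  set Fm : ℝ → ℝ := fun τ => ∫ ω, fS τ (V 0 ω) ∂μ with hFmdef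
  have hFmeq : ∀ τ, Fm τ = ∫ ω, fS τ (V 0 ω) ∂μ := fun τ => rfl
  have hL : ∫ ω, Z (V 0 ω) ∂μ = 1 :=
    my_L_eq_one μ (fun x => p x) p.continuous.measurable hppos (X 0) (T 0)
      (hXm 0) (hTm 0) (fun ω => hT01 0 ω) hZint hcond
  -- order properties
  have hindle : ∀ (P Q : Prop) (iP : Decidable P) (iQ : Decidable Q), (P → Q) →
      (if P then (1 : ℝ) else 0) ≤ (if Q then (1 : ℝ) else 0) := by
    intro P Q iP iQ hPQ
    split_ifs with h1 h2
    · exact le_refl _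
    · exact absurd (hPQ h1) h2
    · norm_num
    · exact le_refl _
  have hF1mono : Monotone F1 := by
    intro a b hab
    rw [hF1eq a, hF1eq b]
    refine integral_mono (hfIint a) (hfIint b) fun ω => ?_
    rw [hfIval, hfIval]
    exact mul_le_mul_of_nonneg_left (hindle _ _ _ _ fun h => h.trans hab) (hTP 0 ω).1
  have hF1nonneg : ∀ τ, 0 ≤ F1 τ := by
    intro τ
    rw [hF1eq]
    exact integral_nonneg fun ω => (hfIV τ 0 ω).1
  have hF1le1 : ∀ τ, F1 τ ≤ 1 := by
    intro τ
    rw [hF1eq, ← hL]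
    exact integral_mono (hfIint τ) hZint fun ω => (hfIV τ 0 ω).2
  have hFFm : ∀ s u, s < u → F1 s ≤ Fm u := by
    intro s u hsu
    rw [hF1eq, hFmeq]
    refine integral_mono (hfIint s) (hfSint u) fun ω => ?_
    rw [hfIval, hfSval]
    exact mul_le_mul_of_nonneg_left (hindle _ _ _ _ fun h => lt_of_le_of_lt h hsu) (hTP 0 ω).1
  -- dominated convergence helper
  have hDC : ∀ (u : ℕ → Ω → ℝ) (ulim : Ω → ℝ), (∀ n, AEStronglyMeasurable (u n) μ) →
      (∀ n ω, |u n ω| ≤ δ⁻¹) → (∀ ω, Tendsto (fun n => u n ω) atTop (𝓝 (ulim ω))) →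
      Tendsto (fun n => ∫ ω, u n ω ∂μ) atTop (𝓝 (∫ ω, ulim ω ∂μ)) := by
    intro u ul hm' hb ht
    exact tendsto_integral_of_dominated_convergence (fun _ => δ⁻¹) hm' (integrable_const _)
      (fun n => ae_of_all _ fun ω => by simpa [Real.norm_eq_abs] using hb n ω) (ae_of_all _ ht)
  have habsI : ∀ τ n ω, |fI τ (V n ω)| ≤ δ⁻¹ := fun τ n ω =>
    abs_le.2 ⟨by linarith [(hfIV τ n ω).1], le_trans (hfIV τ n ω).2 (hZV n ω).2⟩
  -- the four limit facts
  have hF1top : Tendsto (fun n : ℕ => F1 n) atTop (𝓝 1) := by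
    rw [← hL]
    have h2 : (fun n : ℕ => F1 n) = fun n : ℕ => ∫ ω, fI n (V 0 ω) ∂μ :=
      funext fun n => hF1eq _
    rw [h2]
    refine hDC _ _ (fun n => ((hfIm _).comp (hVm 0)).aestronglyMeasurable)
      (fun n ω => habsI _ 0 ω) fun ω => ?_
    obtain ⟨N, hN⟩ := exists_nat_ge (Y 0 ω)
    refine Tendsto.congr' ?_ (tendsto_const_nhds (x := Z (V 0 ω)))
    filter_upwards [eventually_ge_atTop N] with n hn
    have hYn : Y 0 ω ≤ n := le_trans hN (by exact_mod_cast hn)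
    show Z (V 0 ω) = fI (n : ℝ) (V 0 ω)
    rw [hfIval, hZval, if_pos hYn, mul_one]
  have hF1bot : Tendsto (fun n : ℕ => F1 (-(n : ℝ))) atTop (𝓝 0) := by
    have h0 : (0 : ℝ) = ∫ _ω, (0 : ℝ) ∂μ := by simp
    rw [h0]
    have h2 : (fun n : ℕ => F1 (-(n : ℝ))) = fun n : ℕ => ∫ ω, fI (-(n : ℝ)) (V 0 ω) ∂μ :=
      funext fun n => hF1eq _
    rw [h2]
    refine hDC _ _ (fun n => ((hfIm _).comp (hVm 0)).aestronglyMeasurable)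
      (fun n ω => habsI _ 0 ω) fun ω => ?_
    obtain ⟨N, hN⟩ := exists_nat_gt (-(Y 0 ω))
    refine Tendsto.congr' ?_ (tendsto_const_nhds (x := (0 : ℝ)))
    filter_upwards [eventually_ge_atTop N] with n hn
    have hYn : ¬ (Y 0 ω ≤ -(n : ℝ)) := by
      push_neg
      have : (N : ℝ) ≤ n := by exact_mod_cast hn
      linarith
    show (0 : ℝ) = fI (-(n : ℝ)) (V 0 ω)
    rw [hfIval, if_neg hYn, mul_zero]
  have hinv_tendsto : Tendsto (fun n : ℕ => 1 / ((n : ℝ) + 1)) atTop (𝓝 0) :=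
    tendsto_one_div_add_atTop_nhds_zero_nat
  have hF1right : ∀ τ, Tendsto (fun n : ℕ => F1 (τ + 1 / (n + 1))) atTop (𝓝 (F1 τ)) := by
    intro τ
    rw [hF1eq τ]
    have h2 : (fun n : ℕ => F1 (τ + 1 / (n + 1))) =
        fun n : ℕ => ∫ ω, fI (τ + 1 / (n + 1)) (V 0 ω) ∂μ := funext fun n => hF1eq _
    rw [h2]
    refine hDC _ _ (fun n => ((hfIm _).comp (hVm 0)).aestronglyMeasurable)
      (fun n ω => habsI _ 0 ω) fun ω => ?_
    by_cases hY : Y 0 ω ≤ τ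
    · refine Tendsto.congr' ?_ (tendsto_const_nhds (x := fI τ (V 0 ω)))
      refine Eventually.of_forall fun n => ?_
      have h1 : (0 : ℝ) < 1 / ((n : ℝ) + 1) := by positivity
      show fI τ (V 0 ω) = fI (τ + 1 / ((n : ℝ) + 1)) (V 0 ω)
      rw [hfIval, hfIval, if_pos hY, if_pos (by linarith : Y 0 ω ≤ τ + 1 / ((n : ℝ) + 1))]
    · refine Tendsto.congr' ?_ (tendsto_const_nhds (x := fI τ (V 0 ω)))
      push_neg at hY
      have hev := hinv_tendsto.eventually (eventually_lt_nhds (sub_pos.2 hY))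
      filter_upwards [hev] with n hn
      show fI τ (V 0 ω) = fI (τ + 1 / ((n : ℝ) + 1)) (V 0 ω)
      rw [hfIval, hfIval, if_neg (not_le.2 hY), if_neg (by push_neg; linarith)]
  have hFmleft : ∀ τ, Tendsto (fun n : ℕ => F1 (τ - 1 / (n + 1))) atTop (𝓝 (Fm τ)) := by
    intro τ
    rw [hFmeq τ]
    have h2 : (fun n : ℕ => F1 (τ - 1 / (n + 1))) =
        fun n : ℕ => ∫ ω, fI (τ - 1 / (n + 1)) (V 0 ω) ∂μ := funext fun n => hF1eq _
    rw [h2]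
    refine hDC _ _ (fun n => ((hfIm _).comp (hVm 0)).aestronglyMeasurable)
      (fun n ω => habsI _ 0 ω) fun ω => ?_
    by_cases hY : Y 0 ω < τ
    · refine Tendsto.congr' ?_ (tendsto_const_nhds (x := fS τ (V 0 ω)))
      have hev := hinv_tendsto.eventually (eventually_lt_nhds (sub_pos.2 hY))
      filter_upwards [hev] with n hn
      show fS τ (V 0 ω) = fI (τ - 1 / ((n : ℝ) + 1)) (V 0 ω)
      rw [hfIval, hfSval, if_pos hY, if_pos (by linarith : Y 0 ω ≤ τ - 1 / ((n : ℝ) + 1))]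
    · refine Tendsto.congr' ?_ (tendsto_const_nhds (x := fS τ (V 0 ω)))
      push_neg at hY
      refine Eventually.of_forall fun n => ?_
      have h1 : (0 : ℝ) < 1 / ((n : ℝ) + 1) := by positivity
      show fS τ (V 0 ω) = fI (τ - 1 / ((n : ℝ) + 1)) (V 0 ω)
      rw [hfIval, hfSval, if_neg (not_lt.2 hY), if_neg (by push_neg; linarith)]
  -- grid
  obtain ⟨k, hk1, hkε, t, htmono, hgrid⟩ :=
    my_grid F1 Fm hF1mono hF1top hF1bot hF1right hFmleft ε₂ hε₂pos hε₂b
  -- empirical processes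
  set Kn : ℕ → Ω → ℝ := fun n ω => (∑ i ∈ Finset.range n, Z (V i ω)) / n with hKndef
  set Gn : ℕ → Ω → ℝ → ℝ := fun n ω τ => (∑ i ∈ Finset.range n, fI τ (V i ω)) / n with hGndef
  set Hn : ℕ → Ω → ℝ → ℝ := fun n ω τ => (∑ i ∈ Finset.range n, fS τ (V i ω)) / n with hHndef
  have hKnm : ∀ n, Measurable (Kn n) := fun n =>
    (Finset.measurable_sum _ fun i _ => hZm.comp (hVm i)).div_const _
  have hGnm : ∀ n τ, Measurable (fun ω => Gn n ω τ) := fun n τ =>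
    (Finset.measurable_sum _ fun i _ => (hfIm τ).comp (hVm i)).div_const _
  have hHnm : ∀ n τ, Measurable (fun ω => Hn n ω τ) := fun n τ =>
    (Finset.measurable_sum _ fun i _ => (hfSm τ).comp (hVm i)).div_const _
  -- strong law a.s. limits
  have haeK : ∀ᵐ ω ∂μ, Tendsto (fun n => Kn n ω) atTop (𝓝 1) := by
    have h := my_slln_comp V hindep hident Z hZm hZint
    rw [hL] at h
    exact h
  have haeG : ∀ τ, ∀ᵐ ω ∂μ, Tendsto (fun n => Gn n ω τ) atTop (𝓝 (F1 τ)) := by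
    intro τ
    have h := my_slln_comp V hindep hident (fI τ) (hfIm τ) (hfIint τ)
    rw [← hF1eq τ] at h
    exact h
  have haeH : ∀ τ, ∀ᵐ ω ∂μ, Tendsto (fun n => Hn n ω τ) atTop (𝓝 (Fm τ)) := by
    intro τ
    have h := my_slln_comp V hindep hident (fS τ) (hfSm τ) (hfSint τ)
    rw [← hFmeq τ] at h
    exact h
  -- convergence in measure
  have hmeasconv : ∀ (u : ℕ → Ω → ℝ) (c : ℝ), (∀ n, Measurable (u n)) →
      (∀ᵐ ω ∂μ, Tendsto (fun n => u n ω) atTop (𝓝 c)) →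
      Tendsto (fun n => μ {ω | ε₂ ≤ |u n ω - c|}) atTop (𝓝 0) := by
    intro u c hum hconv'
    have h := tendstoInMeasure_of_tendsto_ae (f := u) (g := fun _ => c)
      (fun n => (hum n).aestronglyMeasurable) hconv'
    have h2 := h (ENNReal.ofReal ε₂) (ENNReal.ofReal_pos.2 hε₂pos)
    simpa [edist_dist, Real.dist_eq, ENNReal.ofReal_le_ofReal_iff', not_le.2 hε₂pos] using h2
  have hmK : Tendsto (fun n => μ {ω | ε₂ ≤ |Kn n ω - 1|}) atTop (𝓝 0) :=
    hmeasconv Kn 1 hKnm haeK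
  have hmG : ∀ τ, Tendsto (fun n => μ {ω | ε₂ ≤ |Gn n ω τ - F1 τ|}) atTop (𝓝 0) :=
    fun τ => hmeasconv (fun n ω => Gn n ω τ) (F1 τ) (fun n => hGnm n τ) (haeG τ)
  have hmH : ∀ τ, Tendsto (fun n => μ {ω | ε₂ ≤ |Hn n ω τ - Fm τ|}) atTop (𝓝 0) :=
    fun τ => hmeasconv (fun n ω => Hn n ω τ) (Fm τ) (fun n => hHnm n τ) (haeH τ)
  -- the inclusion of the bad event
  have hsub : ∀ n, 1 ≤ n →
      {ω | (⨆ y : ℝ, |Fhat n ω y - F1 y|) > ε} ⊆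
        ({ω | ε₂ ≤ |Kn n ω - 1|} ∪ {ω | (⨆ x, |phat n ω x - p x|) > η}) ∪
          ⋃ j ∈ Finset.Icc 1 k,
            ({ω | ε₂ ≤ |Gn n ω (t j) - F1 (t j)|} ∪ {ω | ε₂ ≤ |Hn n ω (t j) - Fm (t j)|}) := by
    intro n hn ω hω
    simp only [Set.mem_setOf_eq] at hω
    by_contra hnot
    simp only [Set.mem_union, Set.mem_iUnion, Set.mem_setOf_eq, not_or, not_exists, not_le,
      not_lt] at hnot
    obtain ⟨⟨hK', hsup⟩, hjs⟩ := hnot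
    have hn0 : (0 : ℝ) < (n : ℝ) := by exact_mod_cast hn
    -- empirical monotonicity facts
    have hGmono : Monotone (Gn n ω) := by
      intro a b hab
      apply div_le_div_of_nonneg_right ?_ hn0.le
      refine Finset.sum_le_sum fun i _ => ?_
      rw [hfIval, hfIval]
      exact mul_le_mul_of_nonneg_left (hindle _ _ _ _ fun h => h.trans hab) (hTP i ω).1
    have hGnonneg : ∀ y, 0 ≤ Gn n ω y := fun y =>
      div_nonneg (Finset.sum_nonneg fun i _ => (hfIV y i ω).1) hn0.le
    have hGH : ∀ s u, s < u → Gn n ω s ≤ Hn n ω u := by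
      intro s u hsu
      apply div_le_div_of_nonneg_right ?_ hn0.le
      refine Finset.sum_le_sum fun i _ => ?_
      rw [hfIval, hfSval]
      exact mul_le_mul_of_nonneg_left (hindle _ _ _ _ fun h => lt_of_le_of_lt h hsu) (hTP i ω).1
    have hGK : ∀ y, Gn n ω y ≤ Kn n ω := by
      intro y
      apply div_le_div_of_nonneg_right ?_ hn0.le
      exact Finset.sum_le_sum fun i _ => (hfIV y i ω).2
    have hsand := my_sandwich F1 Fm (Gn n ω) (Hn n ω) (Kn n ω) ε₂ hε₂pos k hk1 t htmono
      hF1mono hF1nonneg hF1le1 hFFm hgrid hkε hGmono hGnonneg hGH hGK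
      (fun j hj => ⟨(hjs j hj).1.le, (hjs j hj).2.le⟩) hK'.le
    -- perturbation estimates
    have hsupx : ∀ x, |phat n ω x - p x| ≤ η := by
      intro x
      have hcont : Continuous fun x => |phat n ω x - p x| :=
        ((phat n ω).continuous.sub p.continuous).abs
      have hbdd : BddAbove (Set.range fun x => |phat n ω x - p x|) := by
        rw [← Set.image_univ]
        exact (isCompact_univ.image hcont).bddAbove
      exact le_trans (le_ciSup hbdd x) hsup
    have hphat2 : ∀ x, δ / 2 ≤ phat n ω x := by
      intro x
      have h1 := (abs_le.1 (hsupx x)).1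
      have h2 := (hp x).1
      linarith
    have hWZ : ∀ i, |T i ω / phat n ω (X i ω) - Z (V i ω)| ≤ β := by
      intro i
      rw [hZval]
      rcases hT01 i ω with h | h
      · rw [h]
        simpa using hβ0
      · rw [h]
        have ha := hphat2 (X i ω)
        have hbp := hppos (X i ω)
        have hbδ := (hp (X i ω)).1
        rw [div_sub_div _ _ (by linarith : phat n ω (X i ω) ≠ 0) (ne_of_gt hbp), abs_div]
        have hnum : |1 * p (X i ω) - phat n ω (X i ω) * 1| ≤ η := by
          rw [one_mul, mul_one, abs_sub_comm]
          exact hsupx (X i ω)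
        have hden : δ ^ 2 / 2 ≤ |phat n ω (X i ω) * p (X i ω)| := by
          rw [abs_of_pos (by nlinarith)]
          nlinarith
        calc |1 * p (X i ω) - phat n ω (X i ω) * 1| / |phat n ω (X i ω) * p (X i ω)|
            ≤ η / (δ ^ 2 / 2) := div_le_div₀ hηpos.le hnum (by positivity) hden
          _ = β := by rw [hβdef]; field_simp
    -- pointwise bound on Fhat
    have hFy : ∀ y, |Fhat n ω y - F1 y| ≤ 16 * ε₂ := by
      intro y
      have hpert := my_pert n hn (fun i => T i ω / phat n ω (X i ω)) (fun i => Z (V i ω))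
        (fun i => if Y i ω ≤ y then (1 : ℝ) else 0) β ε₂ (F1 y) hβ0 hβ2 hε₂pos hε₂b
        (fun i => hind01 _ _) hWZ (hF1nonneg y) (hF1le1 y) ?_ ?_
      · have hFeq : Fhat n ω y =
            (∑ i ∈ Finset.range n,
              (T i ω / phat n ω (X i ω)) * (if Y i ω ≤ y then (1 : ℝ) else 0)) /
              (∑ i ∈ Finset.range n, T i ω / phat n ω (X i ω)) := by
          rw [hFhat n ω y, Finset.sum_div]
          refine Finset.sum_congr rfl fun i _ => ?_
          rw [div_mul_eq_mul_div]
        rw [hFeq]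
        exact hpert.2
      · -- |(∑ Z' * ind)/n - F1 y| ≤ 3 ε₂
        have h3 := hsand y
        have heq : Gn n ω y =
            (∑ i ∈ Finset.range n, Z (V i ω) * (if Y i ω ≤ y then (1 : ℝ) else 0)) / n := by
          rw [hGndef]
        rw [heq] at h3
        exact h3
      · -- |(∑ Z')/n - 1| ≤ ε₂
        exact hK'.le
    have hsupy : (⨆ y : ℝ, |Fhat n ω y - F1 y|) ≤ 16 * ε₂ := ciSup_le hFy
    have : ε < 16 * ε₂ := lt_of_lt_of_le hω hsupy
    linarith
  -- final measure estimate
  have hbound : ∀ n, 1 ≤ n → μ {ω | (⨆ y : ℝ, |Fhat n ω y - F1 y|) > ε} ≤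
      (μ {ω | ε₂ ≤ |Kn n ω - 1|} + μ {ω | (⨆ x, |phat n ω x - p x|) > η}) +
        ∑ j ∈ Finset.Icc 1 k,
          (μ {ω | ε₂ ≤ |Gn n ω (t j) - F1 (t j)|} + μ {ω | ε₂ ≤ |Hn n ω (t j) - Fm (t j)|}) := by
    intro n hn
    refine le_trans (measure_mono (hsub n hn)) ?_
    refine le_trans (measure_union_le _ _) ?_
    refine add_le_add (measure_union_le _ _) ?_
    refine le_trans (measure_biUnion_finset_le _ _) ?_
    exact Finset.sum_le_sum fun j _ => measure_union_le _ _
  have hlim : Tendsto (fun n =>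
      (μ {ω | ε₂ ≤ |Kn n ω - 1|} + μ {ω | (⨆ x, |phat n ω x - p x|) > η}) +
        ∑ j ∈ Finset.Icc 1 k,
          (μ {ω | ε₂ ≤ |Gn n ω (t j) - F1 (t j)|} + μ {ω | ε₂ ≤ |Hn n ω (t j) - Fm (t j)|}))
      atTop (𝓝 0) := by
    have h1 := hmK.add (hconv η hηpos)
    have h2 := tendsto_finset_sum (Finset.Icc 1 k)
      (fun j (_ : j ∈ Finset.Icc 1 k) => (hmG (t j)).add (hmH (t j)))
    have h3 := h1.add h2
    simpa using h3
  refine tendsto_of_tendsto_of_tendsto_of_le_of_le' tendsto_const_nhds hlim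
    (Eventually.of_forall fun n => zero_le) ?_
  filter_upwards [eventually_ge_atTop 1] with n hn using hbound n hn
end

section
/- If F is a continuous cumulative distribution function on ℝ, then ∫_ℝ F dμ_F = 1/2. -/
open MeasureTheory Filter Set

lemma preimage_Iic_eq (F : StieltjesFunction ℝ) (hcont : Continuous F)
    (hbot : Tendsto F atBot (nhds 0))
    (htop : Tendsto F atTop (nhds 1)) :
    Measure.map F F.measure = volume.restrict (Icc (0:ℝ) 1) := by
  have hF0 : ∀ y, 0 ≤ F y := fun y =>
    le_of_tendsto hbot (eventually_atBot.2 ⟨y, fun z hz => F.mono hz⟩)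
  have hF1 : ∀ y, F y ≤ 1 := fun y =>
    ge_of_tendsto htop (eventually_atTop.2 ⟨y, fun z hz => F.mono hz⟩)
  have hprob : IsProbabilityMeasure F.measure := F.isProbabilityMeasure hbot htop
  have hfin : IsFiniteMeasure (Measure.map F F.measure) := by
    constructor
    rw [Measure.map_apply hcont.measurable MeasurableSet.univ]
    simp
  refine Measure.ext_of_Iic _ _ (fun a => ?_)
  rw [Measure.map_apply hcont.measurable measurableSet_Iic]
  have hpre : F ⁻¹' Iic a = {y | F y ≤ a} := rfl
  rcases lt_or_ge a 0 with ha | ha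
  · -- a < 0
    have h1 : F ⁻¹' Iic a = ∅ := by
      ext y; simp only [mem_preimage, mem_Iic, mem_empty_iff_false, iff_false, not_le]
      exact lt_of_lt_of_le ha (hF0 y)
    have h2 : Iic a ∩ Icc (0:ℝ) 1 = ∅ := by
      ext x; simp only [mem_inter_iff, mem_Iic, mem_Icc, mem_empty_iff_false, iff_false]
      rintro ⟨h, h0, -⟩; linarith
    rw [h1, Measure.restrict_apply measurableSet_Iic, h2]
    simp
  rcases le_or_gt 1 a with ha1 | ha1
  · -- 1 ≤ a
    have h1 : F ⁻¹' Iic a = univ := by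
      ext y; simp only [mem_preimage, mem_Iic, mem_univ, iff_true]
      exact (hF1 y).trans ha1
    have h2 : Iic a ∩ Icc (0:ℝ) 1 = Icc 0 1 :=
      inter_eq_self_of_subset_right (fun x hx => hx.2.trans ha1)
    rw [h1, Measure.restrict_apply measurableSet_Iic, h2]
    simp [Real.volume_Icc]
  · -- 0 ≤ a < 1
    have h2 : Iic a ∩ Icc (0:ℝ) 1 = Icc 0 a := by
      ext x
      simp only [mem_inter_iff, mem_Iic, mem_Icc]
      constructor
      · rintro ⟨h, h0, -⟩; exact ⟨h0, h⟩
      · rintro ⟨h0, h⟩; exact ⟨h, h0, h.trans ha1.le⟩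
    rw [Measure.restrict_apply measurableSet_Iic, h2, Real.volume_Icc]
    set s := F ⁻¹' Iic a with hs
    rcases eq_empty_or_nonempty s with hse | hsne
    · -- s empty: then a must be ≤ F y for all y, but F → 0, so a ≤ 0, i.e. a = 0
      have haz : a ≤ 0 := by
        by_contra h
        push_neg at h
        obtain ⟨y, hy⟩ := (hbot.eventually (eventually_lt_nhds h)).exists
        exact (eq_empty_iff_forall_notMem.1 hse y) (by simpa [hs] using hy.le)
      have : a = 0 := le_antisymm haz ha
      rw [hse, this]
      simp
    · have hbdd : BddAbove s := by
        obtain ⟨y, hy⟩ := (htop.eventually (eventually_gt_nhds ha1)).exists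
        exact ⟨y, fun z hz => by
          by_contra h
          push_neg at h
          exact absurd ((F.mono h.le).trans hz) (not_le.2 hy)⟩
      have hclosed : IsClosed s := IsClosed.preimage hcont isClosed_Iic
      set m := sSup s with hm
      have hms : m ∈ s := hclosed.csSup_mem hsne hbdd
      have hFm_le : F m ≤ a := hms
      have hFm_ge : a ≤ F m := by
        by_contra h
        push_neg at h
        have hev : ∀ᶠ y in nhdsWithin m (Ioi m), F y < a :=
          (hcont.continuousAt.eventually_lt continuousAt_const h).filter_mono nhdsWithin_le_nhds
        obtain ⟨y, hy, hym⟩ := (hev.and self_mem_nhdsWithin).exists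
        exact absurd (le_csSup hbdd (by simpa [hs] using hy.le)) (not_le.2 hym)
      have hseq : s = Iic m := by
        ext y
        constructor
        · exact fun hy => le_csSup hbdd hy
        · intro hy
          exact le_trans (F.mono hy) hFm_le
      rw [hseq, F.measure_Iic hbot, le_antisymm hFm_le hFm_ge]

/-- If `F` is a continuous cumulative distribution function on `ℝ`, then
`∫_ℝ F dμ_F = 1/2`, where `μ_F` is the Lebesgue–Stieltjes measure of `F`. -/
theorem stmt_8
    (F : StieltjesFunction ℝ)
    (hcont : Continuous F)
    (hbot : Tendsto F atBot (nhds 0))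
    (htop : Tendsto F atTop (nhds 1)) :
    ∫ y, F y ∂F.measure = 1/2 := by
  have hmap := preimage_Iic_eq F hcont hbot htop
  have h1 : ∫ y, F y ∂F.measure = ∫ x, x ∂(Measure.map F F.measure) := by
    exact (integral_map (f := fun x => x) hcont.measurable.aemeasurable
      measurable_id.aestronglyMeasurable).symm
  rw [h1, hmap]
  rw [show (volume.restrict (Icc (0:ℝ) 1)) = volume.restrict (Ioc (0:ℝ) 1) by
    rw [restrict_Ioc_eq_restrict_Icc]]
  rw [← intervalIntegral.integral_of_le (by norm_num : (0:ℝ) ≤ 1)]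
  simp [integral_id]
end

section
/- For all real y and t, E[Z₁(y)·Z₀(t)] = E[G₁(y)·G₀(t)] − F₁(y)·F₀(t). -/
open MeasureTheory ProbabilityTheory

lemma aux_integrable {Ω : Type*} {mΩ : MeasurableSpace Ω} (μ : Measure Ω) [IsFiniteMeasure μ]
    {f : Ω → ℝ} (hf : AEStronglyMeasurable f μ) {C : ℝ} (h : ∀ ω, |f ω| ≤ C) :
    Integrable f μ :=
  Integrable.mono' (integrable_const C) hf (Filter.Eventually.of_forall (fun ω => by
    simpa [Real.norm_eq_abs] using h ω))

lemma aux_div_bound {x c q δ : ℝ} (hx : |x| ≤ c) (hδ : 0 < δ) (hq : δ ≤ q) :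
    |x / q| ≤ c / δ := by
  rw [abs_div, abs_of_pos (hδ.trans_le hq)]
  exact div_le_div₀ (le_trans (abs_nonneg x) hx) hx hδ hq

lemma aux_mul_le_one {u v : ℝ} (hu : |u| ≤ 1) (hv : |v| ≤ 1) : |u * v| ≤ 1 := by
  rw [abs_mul]
  exact mul_le_one₀ hu (abs_nonneg _) hv

lemma aux_step {Ω : Type*} {m mΩ : MeasurableSpace Ω} (hm : m ≤ mΩ)
    (μ : Measure Ω) [IsProbabilityMeasure μ] {g h k : Ω → ℝ}
    (hgm : Measurable[m] g) {C D : ℝ} (hC : 0 ≤ C) (hgb : ∀ ω, |g ω| ≤ C)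
    (hhmeas : AEStronglyMeasurable h μ) (hhb : ∀ ω, |h ω| ≤ D)
    (hk : μ[h|m] =ᵐ[μ] k) :
    ∫ ω, g ω * h ω ∂μ = ∫ ω, g ω * k ω ∂μ := by
  have hgΩ : Measurable g := hgm.mono hm le_rfl
  have hh : Integrable h μ := aux_integrable μ hhmeas hhb
  have hgh : Integrable (fun ω => g ω * h ω) μ := by
    refine aux_integrable μ (hgΩ.aestronglyMeasurable.mul hhmeas) (C := C * D) (fun ω => ?_)
    rw [abs_mul]
    exact mul_le_mul (hgb ω) (hhb ω) (abs_nonneg _) hC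
  have h1 : μ[fun ω => g ω * h ω|m] =ᵐ[μ] fun ω => g ω * (μ[h|m]) ω := by
    have := condExp_mul_of_stronglyMeasurable_left (μ := μ) hgm.stronglyMeasurable
      (show Integrable (g * h) μ from hgh) hh
    filter_upwards [this] with ω hω
    exact hω
  calc ∫ ω, g ω * h ω ∂μ = ∫ ω, (μ[fun ω => g ω * h ω|m]) ω ∂μ := (integral_condExp hm).symm
    _ = ∫ ω, g ω * (μ[h|m]) ω ∂μ := integral_congr_ae h1
    _ = ∫ ω, g ω * k ω ∂μ := integral_congr_ae (by
        filter_upwards [hk] with ω hω; rw [hω])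

set_option maxHeartbeats 2000000 in
/-- Cross-covariance of the influence functions: for all real `y` and `t`,
`E[Z₁(y)·Z₀(t)] = E[G₁(y)·G₀(t)] − F₁(y)·F₀(t)`. -/
theorem stmt_13
    {Ω : Type*} [MeasurableSpace Ω] [StandardBorelSpace Ω]
    {𝒳 : Type*} [MeasurableSpace 𝒳] [StandardBorelSpace 𝒳]
    (μ : Measure Ω) [IsProbabilityMeasure μ]
    (X : Ω → 𝒳) (T : Ω → ℝ) (Y1 Y0 : Ω → ℝ)
    (hX : Measurable X) (hT : Measurable T) (hY1 : Measurable Y1) (hY0 : Measurable Y0)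
    (hT01 : ∀ ω, T ω = 0 ∨ T ω = 1)
    (Y : Ω → ℝ) (hY : ∀ ω, Y ω = T ω * Y1 ω + (1 - T ω) * Y0 ω)
    (p : Ω → ℝ)
    (hp : p =ᵐ[μ] μ[T | MeasurableSpace.comap X inferInstance])
    (δ : ℝ) (hδ : δ ∈ Set.Ioo (0 : ℝ) (1/2))
    (hpδ : ∀ᵐ ω ∂μ, δ ≤ p ω ∧ p ω ≤ 1 - δ)
    (hindep : CondIndepFun (MeasurableSpace.comap X inferInstance) hX.comap_le
      (fun ω => (Y1 ω, Y0 ω)) T μ)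
    (F1 : ℝ → ℝ) (hF1 : ∀ y, F1 y = (μ {ω | Y1 ω ≤ y}).toReal)
    (F0 : ℝ → ℝ) (hF0 : ∀ y, F0 y = (μ {ω | Y0 ω ≤ y}).toReal)
    (G1 : ℝ → Ω → ℝ)
    (hG1 : ∀ y, G1 y =ᵐ[μ]
      μ[fun ω => if Y1 ω ≤ y then (1 : ℝ) else 0 | MeasurableSpace.comap X inferInstance])
    (G0 : ℝ → Ω → ℝ)
    (hG0 : ∀ y, G0 y =ᵐ[μ]
      μ[fun ω => if Y0 ω ≤ y then (1 : ℝ) else 0 | MeasurableSpace.comap X inferInstance])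
    (Z1 : ℝ → Ω → ℝ)
    (hZ1 : ∀ y ω, Z1 y ω = (T ω / p ω) * (if Y ω ≤ y then (1 : ℝ) else 0) - F1 y
      - (G1 y ω / p ω) * (T ω - p ω))
    (Z0 : ℝ → Ω → ℝ)
    (hZ0 : ∀ y ω, Z0 y ω = ((1 - T ω) / (1 - p ω)) * (if Y ω ≤ y then (1 : ℝ) else 0) - F0 y
      - (G0 y ω / (1 - p ω)) * ((1 - T ω) - (1 - p ω)))
    (y t : ℝ) :
    ∫ ω, Z1 y ω * Z0 t ω ∂μ = (∫ ω, G1 y ω * G0 t ω ∂μ) - F1 y * F0 t := by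
  obtain ⟨hδ0, hδhalf⟩ := hδ
  have hδ1 : δ ≤ 1 - δ := by linarith
  have hm : MeasurableSpace.comap X inferInstance ≤ ‹MeasurableSpace Ω› := hX.comap_le
  -- facts using the ambient measurable structure, before introducing m
  have hsY1 : MeasurableSet {ω | Y1 ω ≤ y} := measurableSet_le hY1 measurable_const
  have hsY0 : MeasurableSet {ω | Y0 ω ≤ t} := measurableSet_le hY0 measurable_const
  have hI1m : Measurable (fun ω => if Y1 ω ≤ y then (1:ℝ) else 0) :=
    Measurable.ite hsY1 measurable_const measurable_const
  have hI0m : Measurable (fun ω => if Y0 ω ≤ t then (1:ℝ) else 0) :=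
    Measurable.ite hsY0 measurable_const measurable_const
  have hintI1 : ∫ ω, (if Y1 ω ≤ y then (1:ℝ) else 0) ∂μ = (μ {ω | Y1 ω ≤ y}).toReal := by
    rw [show (fun ω => if Y1 ω ≤ y then (1:ℝ) else 0)
        = Set.indicator {ω | Y1 ω ≤ y} (fun _ => (1:ℝ)) from
      funext fun ω => by simp [Set.indicator_apply]]
    rw [integral_indicator_const (1:ℝ) hsY1]; simp; rfl
  have hintI0 : ∫ ω, (if Y0 ω ≤ t then (1:ℝ) else 0) ∂μ = (μ {ω | Y0 ω ≤ t}).toReal := by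
    rw [show (fun ω => if Y0 ω ≤ t then (1:ℝ) else 0)
        = Set.indicator {ω | Y0 ω ≤ t} (fun _ => (1:ℝ)) from
      funext fun ω => by simp [Set.indicator_apply]]
    rw [integral_indicator_const (1:ℝ) hsY0]; simp; rfl
  let mΩ : MeasurableSpace Ω := ‹MeasurableSpace Ω›
  set m := MeasurableSpace.comap X inferInstance with hm_def
  set I1 : Ω → ℝ := fun ω => if Y1 ω ≤ y then 1 else 0 with hI1_def
  set I0 : Ω → ℝ := fun ω => if Y0 ω ≤ t then 1 else 0 with hI0_def
  have hI1b : ∀ ω, |I1 ω| ≤ 1 := fun ω => by by_cases h : Y1 ω ≤ y <;> simp [hI1_def, h]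
  have hI0b : ∀ ω, |I0 ω| ≤ 1 := fun ω => by by_cases h : Y0 ω ≤ t <;> simp [hI0_def, h]
  have hTb : ∀ ω, |T ω| ≤ 1 := fun ω => by rcases hT01 ω with h | h <;> simp [h]
  have hTi : Integrable T μ := aux_integrable μ hT.aestronglyMeasurable hTb
  have hI1i : Integrable I1 μ := aux_integrable μ hI1m.aestronglyMeasurable hI1b
  have hI0i : Integrable I0 μ := aux_integrable μ hI0m.aestronglyMeasurable hI0b
  -- conditional independence consequences
  have hkey := (condIndepFun_iff_condExp_inter_preimage_eq_mul
      (hY1.prodMk hY0) hT).mp hindep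
  have hs1 : MeasurableSet {v : ℝ × ℝ | v.1 ≤ y} :=
    measurableSet_le measurable_fst measurable_const
  have hs0 : MeasurableSet {v : ℝ × ℝ | v.2 ≤ t} :=
    measurableSet_le measurable_snd measurable_const
  have K1 := hkey {v : ℝ × ℝ | v.1 ≤ y} {1} hs1 (measurableSet_singleton 1)
  have K0 := hkey {v : ℝ × ℝ | v.2 ≤ t} {0} hs0 (measurableSet_singleton 0)
  have e1 : Set.indicator ((fun ω => (Y1 ω, Y0 ω)) ⁻¹' {v : ℝ × ℝ | v.1 ≤ y} ∩ T ⁻¹' {1})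
      (fun _ => (1:ℝ)) = fun ω => I1 ω * T ω := by
    funext ω
    rcases hT01 ω with h | h <;> by_cases hy' : Y1 ω ≤ y <;>
      simp [Set.indicator_apply, Set.mem_inter_iff, h, hy', hI1_def]
  have e0 : Set.indicator ((fun ω => (Y1 ω, Y0 ω)) ⁻¹' {v : ℝ × ℝ | v.2 ≤ t} ∩ T ⁻¹' {0})
      (fun _ => (1:ℝ)) = fun ω => I0 ω * (1 - T ω) := by
    funext ω
    rcases hT01 ω with h | h <;> by_cases hy' : Y0 ω ≤ t <;>
      simp [Set.indicator_apply, Set.mem_inter_iff, h, hy', hI0_def]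
  have eA1 : Set.indicator ((fun ω => (Y1 ω, Y0 ω)) ⁻¹' {v : ℝ × ℝ | v.1 ≤ y})
      (fun _ => (1:ℝ)) = I1 := by
    funext ω; simp [Set.indicator_apply, hI1_def]
  have eA0 : Set.indicator ((fun ω => (Y1 ω, Y0 ω)) ⁻¹' {v : ℝ × ℝ | v.2 ≤ t})
      (fun _ => (1:ℝ)) = I0 := by
    funext ω; simp [Set.indicator_apply, hI0_def]
  have eT1 : Set.indicator (T ⁻¹' {1}) (fun _ => (1:ℝ)) = T := by
    funext ω; rcases hT01 ω with h | h <;> simp [Set.indicator_apply, h]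
  have eT0 : Set.indicator (T ⁻¹' {0}) (fun _ => (1:ℝ)) = fun ω => 1 - T ω := by
    funext ω; rcases hT01 ω with h | h <;> simp [Set.indicator_apply, h]
  rw [e1, eA1, eT1] at K1
  rw [e0, eA0, eT0] at K0
  have hsub : μ[fun ω => 1 - T ω|m] =ᵐ[μ] fun ω => 1 - (μ[T|m]) ω := by
    have h4 : (fun ω => 1 - T ω) = ((fun _ => (1:ℝ)) - T) := by funext ω; simp
    rw [h4]
    refine (condExp_sub (integrable_const (1:ℝ)) hTi (m := m)).trans ?_
    rw [condExp_const hm]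
    exact Filter.EventuallyEq.of_eq rfl
  have K0' : μ[fun ω => I0 ω * (1 - T ω)|m]
      =ᵐ[μ] fun ω => (μ[I0|m]) ω * (1 - (μ[T|m]) ω) := by
    refine K0.trans ?_
    filter_upwards [hsub] with ω hω
    rw [hω]
  -- truncated versions
  set p₂ : Ω → ℝ := fun ω => max δ (min (1 - δ) ((μ[T|m]) ω)) with hp₂_def
  set g1 : Ω → ℝ := fun ω => max 0 (min 1 ((μ[I1|m]) ω)) with hg1_def
  set g0 : Ω → ℝ := fun ω => max 0 (min 1 ((μ[I0|m]) ω)) with hg0_def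
  have hp₂b : ∀ ω, δ ≤ p₂ ω ∧ p₂ ω ≤ 1 - δ := fun ω =>
    ⟨le_max_left _ _, max_le hδ1 (min_le_left _ _)⟩
  have hp₂0 : ∀ ω, p₂ ω ≠ 0 := fun ω => ne_of_gt (lt_of_lt_of_le hδ0 (hp₂b ω).1)
  have hq₂δ : ∀ ω, δ ≤ 1 - p₂ ω := fun ω => by linarith [(hp₂b ω).2]
  have hq₂0 : ∀ ω, 1 - p₂ ω ≠ 0 := fun ω => ne_of_gt (lt_of_lt_of_le hδ0 (hq₂δ ω))
  have hg1b : ∀ ω, 0 ≤ g1 ω ∧ g1 ω ≤ 1 := fun ω =>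
    ⟨le_max_left _ _, max_le zero_le_one (min_le_left _ _)⟩
  have hg0b : ∀ ω, 0 ≤ g0 ω ∧ g0 ω ≤ 1 := fun ω =>
    ⟨le_max_left _ _, max_le zero_le_one (min_le_left _ _)⟩
  have hp₂abs : ∀ ω, |p₂ ω| ≤ 1 := fun ω => by
    rw [abs_le]; constructor <;> [linarith [(hp₂b ω).1]; linarith [(hp₂b ω).2]]
  have hg1abs : ∀ ω, |g1 ω| ≤ 1 := fun ω => by
    rw [abs_le]; constructor <;> [linarith [(hg1b ω).1]; linarith [(hg1b ω).2]]
  have hg0abs : ∀ ω, |g0 ω| ≤ 1 := fun ω => by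
    rw [abs_le]; constructor <;> [linarith [(hg0b ω).1]; linarith [(hg0b ω).2]]
  -- a.e. identifications
  have hpp₂ : p =ᵐ[μ] p₂ := by
    filter_upwards [hp, hpδ] with ω h1 h23
    rw [hp₂_def]; dsimp only
    rw [← h1, min_eq_right h23.2, max_eq_right h23.1]
  have hp'p₂ : μ[T|m] =ᵐ[μ] p₂ := hp.symm.trans hpp₂
  have hcond_ae : ∀ (f : Ω → ℝ), Integrable f μ → (∀ ω, 0 ≤ f ω ∧ f ω ≤ 1) →
      μ[f|m] =ᵐ[μ] fun ω => max 0 (min 1 ((μ[f|m]) ω)) := by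
    intro f hfi hfb
    have h0 : 0 ≤ᵐ[μ] μ[f|m] := condExp_nonneg (Filter.Eventually.of_forall fun ω => (hfb ω).1)
    have h1 : μ[f|m] ≤ᵐ[μ] fun _ => (1:ℝ) := by
      have h2 := condExp_mono (m := m) hfi (integrable_const (1:ℝ))
        (Filter.Eventually.of_forall fun ω => (hfb ω).2)
      filter_upwards [h2] with ω hω
      calc (μ[f|m]) ω ≤ (μ[fun _ => (1:ℝ)|m]) ω := hω
        _ = 1 := by rw [condExp_const (μ := μ) hm (1:ℝ)]
    filter_upwards [h0, h1] with ω h0ω h1ω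
    have h0' : (0:ℝ) ≤ (μ[f|m]) ω := h0ω
    have h1' : (μ[f|m]) ω ≤ 1 := h1ω
    rw [min_eq_right h1', max_eq_right h0']
  have hg1ae : μ[I1|m] =ᵐ[μ] g1 := hcond_ae I1 hI1i (fun ω => by
    by_cases h : Y1 ω ≤ y <;> simp [hI1_def, h])
  have hg0ae : μ[I0|m] =ᵐ[μ] g0 := hcond_ae I0 hI0i (fun ω => by
    by_cases h : Y0 ω ≤ t <;> simp [hI0_def, h])
  have hG1ae : G1 y =ᵐ[μ] g1 := (hG1 y).trans hg1ae
  have hG0ae : G0 t =ᵐ[μ] g0 := (hG0 t).trans hg0ae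
  -- conditional expectation identities in truncated form
  have K1' : μ[fun ω => I1 ω * T ω|m] =ᵐ[μ] fun ω => g1 ω * p₂ ω := by
    refine K1.trans ?_
    filter_upwards [hg1ae, hp'p₂] with ω h1 h2
    rw [h1, h2]
  have K0'' : μ[fun ω => I0 ω * (1 - T ω)|m] =ᵐ[μ] fun ω => g0 ω * (1 - p₂ ω) := by
    refine K0'.trans ?_
    filter_upwards [hg0ae, hp'p₂] with ω h1 h2
    rw [h1, h2]
  -- measurability of truncations
  have hp₂m : Measurable[m] p₂ :=
    measurable_const.max (measurable_const.min stronglyMeasurable_condExp.measurable)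
  have hg1m : Measurable[m] g1 :=
    measurable_const.max (measurable_const.min stronglyMeasurable_condExp.measurable)
  have hg0m : Measurable[m] g0 :=
    measurable_const.max (measurable_const.min stronglyMeasurable_condExp.measurable)
  -- F bounds
  have hF1b : 0 ≤ F1 y ∧ F1 y ≤ 1 := by
    constructor
    · rw [hF1]; exact ENNReal.toReal_nonneg
    · rw [hF1]
      simpa using ENNReal.toReal_mono ENNReal.one_ne_top prob_le_one
  have hF0b : 0 ≤ F0 t ∧ F0 t ≤ 1 := by
    constructor
    · rw [hF0]; exact ENNReal.toReal_nonneg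
    · rw [hF0]
      simpa using ENNReal.toReal_mono ENNReal.one_ne_top prob_le_one
  have hF1abs : |F1 y| ≤ 1 := by rw [abs_le]; constructor <;> linarith [hF1b.1, hF1b.2]
  have hF0abs : |F0 t| ≤ 1 := by rw [abs_le]; constructor <;> linarith [hF0b.1, hF0b.2]
  -- the m-measurable coefficients
  set a : Ω → ℝ := fun ω => (g0 ω - F0 t) / p₂ ω with ha_def
  set b : Ω → ℝ := fun ω => (g1 ω - F1 y) / (1 - p₂ ω) with hb_def
  set c : Ω → ℝ := fun ω => g1 ω * F0 t / p₂ ω - F1 y * g0 ω / (1 - p₂ ω)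
      - g1 ω * g0 ω * (1 - 2 * p₂ ω) / (p₂ ω * (1 - p₂ ω)) with hc_def
  set d : Ω → ℝ := fun ω => F1 y * F0 t
      - (g1 ω * F0 t / p₂ ω - F1 y * g0 ω / (1 - p₂ ω)) * p₂ ω
      - g1 ω * g0 ω * p₂ ω ^ 2 / (p₂ ω * (1 - p₂ ω)) with hd_def
  have ham : Measurable[m] a := (hg0m.sub measurable_const).div hp₂m
  have hbm : Measurable[m] b := (hg1m.sub measurable_const).div (measurable_const.sub hp₂m)
  have hcm : Measurable[m] c :=
    (((hg1m.mul measurable_const).div hp₂m).sub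
      ((measurable_const.mul hg0m).div (measurable_const.sub hp₂m))).sub
      (((hg1m.mul hg0m).mul (measurable_const.sub (measurable_const.mul hp₂m))).div
        (hp₂m.mul (measurable_const.sub hp₂m)))
  have hdm : Measurable[m] d :=
    (measurable_const.sub
      ((((hg1m.mul measurable_const).div hp₂m).sub
        ((measurable_const.mul hg0m).div (measurable_const.sub hp₂m))).mul hp₂m)).sub
      (((hg1m.mul hg0m).mul (hp₂m.pow measurable_const)).div
        (hp₂m.mul (measurable_const.sub hp₂m)))
  -- bounds on coefficients
  have hδδ0 : (0:ℝ) < δ * δ := mul_pos hδ0 hδ0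
  have hpq : ∀ ω, δ * δ ≤ p₂ ω * (1 - p₂ ω) := fun ω =>
    mul_le_mul (hp₂b ω).1 (hq₂δ ω) (le_of_lt hδ0) (by linarith [(hp₂b ω).1, hδ0])
  have h2pabs : ∀ ω, |1 - 2 * p₂ ω| ≤ 1 := fun ω => by
    rw [abs_le]; constructor <;> [linarith [(hp₂b ω).2, hδ0]; linarith [(hp₂b ω).1, hδ0]]
  have hab : ∀ ω, |a ω| ≤ 1 / δ := fun ω => by
    rw [ha_def]
    exact aux_div_bound (by rw [abs_le]; constructor <;>
      [linarith [(hg0b ω).1, hF0b.2]; linarith [(hg0b ω).2, hF0b.1]]) hδ0 (hp₂b ω).1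
  have hbb : ∀ ω, |b ω| ≤ 1 / δ := fun ω => by
    rw [hb_def]
    exact aux_div_bound (by rw [abs_le]; constructor <;>
      [linarith [(hg1b ω).1, hF1b.2]; linarith [(hg1b ω).2, hF1b.1]]) hδ0 (hq₂δ ω)
  have ht1b : ∀ ω, |g1 ω * F0 t / p₂ ω| ≤ 1 / δ := fun ω =>
    aux_div_bound (aux_mul_le_one (hg1abs ω) hF0abs) hδ0 (hp₂b ω).1
  have ht2b : ∀ ω, |F1 y * g0 ω / (1 - p₂ ω)| ≤ 1 / δ := fun ω =>
    aux_div_bound (aux_mul_le_one hF1abs (hg0abs ω)) hδ0 (hq₂δ ω)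
  have hcb : ∀ ω, |c ω| ≤ 1 / δ + 1 / δ + 1 / (δ * δ) := fun ω => by
    rw [hc_def]
    refine le_trans (abs_sub _ _) (add_le_add (le_trans (abs_sub _ _)
      (add_le_add (ht1b ω) (ht2b ω))) ?_)
    exact aux_div_bound (aux_mul_le_one (aux_mul_le_one (hg1abs ω) (hg0abs ω)) (h2pabs ω))
      hδδ0 (hpq ω)
  have hdb : ∀ ω, |d ω| ≤ 1 + (1 / δ + 1 / δ) + 1 / (δ * δ) := fun ω => by
    rw [hd_def]
    refine le_trans (abs_sub _ _) (add_le_add (le_trans (abs_sub _ _)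
      (add_le_add (aux_mul_le_one hF1abs hF0abs) ?_)) ?_)
    · calc |(g1 ω * F0 t / p₂ ω - F1 y * g0 ω / (1 - p₂ ω)) * p₂ ω|
          ≤ |g1 ω * F0 t / p₂ ω - F1 y * g0 ω / (1 - p₂ ω)| * 1 := by
            rw [abs_mul]
            exact mul_le_mul_of_nonneg_left (hp₂abs ω) (abs_nonneg _)
        _ ≤ 1 / δ + 1 / δ := by
            rw [mul_one]
            exact le_trans (abs_sub _ _) (add_le_add (ht1b ω) (ht2b ω))
    · refine aux_div_bound ?_ hδδ0 (hpq ω)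
      have : |p₂ ω ^ 2| ≤ 1 := by
        rw [sq]
        exact aux_mul_le_one (hp₂abs ω) (hp₂abs ω)
      exact aux_mul_le_one (aux_mul_le_one (hg1abs ω) (hg0abs ω)) this
  have hδinv0 : (0:ℝ) ≤ 1 / δ := by positivity
  have hCc0 : (0:ℝ) ≤ 1 / δ + 1 / δ + 1 / (δ * δ) := by positivity
  have hCd0 : (0:ℝ) ≤ 1 + (1 / δ + 1 / δ) + 1 / (δ * δ) := by positivity
  -- pointwise decomposition (a.e.)
  have claimA : (fun ω => Z1 y ω * Z0 t ω) =ᵐ[μ]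
      (fun ω => a ω * (I1 ω * T ω) + b ω * (I0 ω * (1 - T ω)) + c ω * T ω + d ω) := by
    filter_upwards [hpp₂, hG1ae, hG0ae] with ω h1 h2 h3
    have hp0 := hp₂0 ω
    have hq0 := hq₂0 ω
    rw [hZ1 y ω, hZ0 t ω, h1, h2, h3, ha_def, hb_def, hc_def, hd_def]
    dsimp only
    rcases hT01 ω with hT' | hT'
    · have hYY : Y ω = Y0 ω := by rw [hY ω, hT']; ring
      rw [hYY, hT', show (if Y0 ω ≤ t then (1:ℝ) else 0) = I0 ω from rfl]
      field_simp
      ring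
    · have hYY : Y ω = Y1 ω := by rw [hY ω, hT']; ring
      rw [hYY, hT', show (if Y1 ω ≤ y then (1:ℝ) else 0) = I1 ω from rfl]
      field_simp
      ring
  -- integrability of all the pieces
  have hint : ∀ (g h : Ω → ℝ), Measurable[m] g → ∀ C : ℝ, 0 ≤ C → (∀ ω, |g ω| ≤ C) →
      AEStronglyMeasurable[mΩ] h μ → (∀ ω, |h ω| ≤ 1) → Integrable (fun ω => g ω * h ω) μ := by
    intro g h hg C hC hgb hh hhb
    refine aux_integrable μ (((hg.mono hm le_rfl).aestronglyMeasurable).mul hh)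
      (C := C * 1) (fun ω => ?_)
    rw [abs_mul]
    exact mul_le_mul (hgb ω) (hhb ω) (abs_nonneg _) hC
  have hU1meas : AEStronglyMeasurable[mΩ] (fun ω => I1 ω * T ω) μ :=
    (hI1m.mul hT).aestronglyMeasurable
  have hU0meas : AEStronglyMeasurable[mΩ] (fun ω => I0 ω * (1 - T ω)) μ :=
    (hI0m.mul (measurable_const.sub hT)).aestronglyMeasurable
  have hU1b : ∀ ω, |I1 ω * T ω| ≤ 1 := fun ω => aux_mul_le_one (hI1b ω) (hTb ω)
  have hU0b : ∀ ω, |I0 ω * (1 - T ω)| ≤ 1 := fun ω => by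
    refine aux_mul_le_one (hI0b ω) ?_
    rcases hT01 ω with h | h <;> simp [h]
  have hk1b : ∀ ω, |g1 ω * p₂ ω| ≤ 1 := fun ω => aux_mul_le_one (hg1abs ω) (hp₂abs ω)
  have hk0b : ∀ ω, |g0 ω * (1 - p₂ ω)| ≤ 1 := fun ω => by
    refine aux_mul_le_one (hg0abs ω) ?_
    rw [abs_le]; constructor <;> [linarith [(hp₂b ω).2, hδ0]; linarith [(hp₂b ω).1, hδ0]]
  have hk1meas : AEStronglyMeasurable[mΩ] (fun ω => g1 ω * p₂ ω) μ :=
    ((hg1m.mul hp₂m).mono hm le_rfl).aestronglyMeasurable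
  have hk0meas : AEStronglyMeasurable[mΩ] (fun ω => g0 ω * (1 - p₂ ω)) μ :=
    ((hg0m.mul (measurable_const.sub hp₂m)).mono hm le_rfl).aestronglyMeasurable
  have hp₂meas : AEStronglyMeasurable[mΩ] p₂ μ := ((hp₂m.mono hm le_rfl)).aestronglyMeasurable
  have hi1 : Integrable (fun ω => a ω * (I1 ω * T ω)) μ :=
    hint a _ ham _ hδinv0 hab hU1meas hU1b
  have hi2 : Integrable (fun ω => b ω * (I0 ω * (1 - T ω))) μ :=
    hint b _ hbm _ hδinv0 hbb hU0meas hU0b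
  have hi3 : Integrable (fun ω => c ω * T ω) μ :=
    hint c _ hcm _ hCc0 hcb hT.aestronglyMeasurable hTb
  have hi4 : Integrable d μ :=
    aux_integrable μ ((hdm.mono hm le_rfl).aestronglyMeasurable) hdb
  have hj1 : Integrable (fun ω => a ω * (g1 ω * p₂ ω)) μ :=
    hint a _ ham _ hδinv0 hab hk1meas hk1b
  have hj2 : Integrable (fun ω => b ω * (g0 ω * (1 - p₂ ω))) μ :=
    hint b _ hbm _ hδinv0 hbb hk0meas hk0b
  have hj3 : Integrable (fun ω => c ω * p₂ ω) μ :=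
    hint c _ hcm _ hCc0 hcb hp₂meas hp₂abs
  -- the three replacement steps
  have step1 : ∫ ω, a ω * (I1 ω * T ω) ∂μ = ∫ ω, a ω * (g1 ω * p₂ ω) ∂μ :=
    aux_step hm μ ham hδinv0 hab hU1meas hU1b K1'
  have step2 : ∫ ω, b ω * (I0 ω * (1 - T ω)) ∂μ = ∫ ω, b ω * (g0 ω * (1 - p₂ ω)) ∂μ :=
    aux_step hm μ hbm hδinv0 hbb hU0meas hU0b K0''
  have step3 : ∫ ω, c ω * T ω ∂μ = ∫ ω, c ω * p₂ ω ∂μ :=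
    aux_step hm μ hcm hCc0 hcb hT.aestronglyMeasurable hTb hp'p₂
  -- pointwise algebra for the conditional-expectation side
  have Vid : ∀ ω, a ω * (g1 ω * p₂ ω) + b ω * (g0 ω * (1 - p₂ ω)) + c ω * p₂ ω + d ω
      = g1 ω * g0 ω - F0 t * g1 ω - F1 y * g0 ω + F1 y * F0 t := by
    intro ω
    have hp0 := hp₂0 ω
    have hq0 := hq₂0 ω
    rw [ha_def, hb_def, hc_def, hd_def]
    dsimp only
    field_simp
    ring
  -- integrability of the final pieces
  have hg1meas : AEStronglyMeasurable[mΩ] g1 μ := ((hg1m.mono hm le_rfl)).aestronglyMeasurable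
  have hg0meas : AEStronglyMeasurable[mΩ] g0 μ := ((hg0m.mono hm le_rfl)).aestronglyMeasurable
  have hig1 : Integrable g1 μ := aux_integrable μ hg1meas hg1abs
  have hig0 : Integrable g0 μ := aux_integrable μ hg0meas hg0abs
  have higg : Integrable (fun ω => g1 ω * g0 ω) μ :=
    aux_integrable μ (hg1meas.mul hg0meas) (fun ω => aux_mul_le_one (hg1abs ω) (hg0abs ω))
  -- values of basic integrals
  have hintg1 : ∫ ω, g1 ω ∂μ = F1 y := by
    calc ∫ ω, g1 ω ∂μ = ∫ ω, (μ[I1|m]) ω ∂μ := (integral_congr_ae hg1ae).symm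
      _ = ∫ ω, I1 ω ∂μ := integral_condExp hm
      _ = (μ {ω | Y1 ω ≤ y}).toReal := hintI1
      _ = F1 y := (hF1 y).symm
  have hintg0 : ∫ ω, g0 ω ∂μ = F0 t := by
    calc ∫ ω, g0 ω ∂μ = ∫ ω, (μ[I0|m]) ω ∂μ := (integral_congr_ae hg0ae).symm
      _ = ∫ ω, I0 ω ∂μ := integral_condExp hm
      _ = (μ {ω | Y0 ω ≤ t}).toReal := hintI0
      _ = F0 t := (hF0 t).symm
  have hintgg : ∫ ω, g1 ω * g0 ω ∂μ = ∫ ω, G1 y ω * G0 t ω ∂μ := by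
    refine integral_congr_ae ?_
    filter_upwards [hG1ae, hG0ae] with ω h1 h2
    rw [h1, h2]
  have hi12 : Integrable (fun ω => a ω * (I1 ω * T ω) + b ω * (I0 ω * (1 - T ω))) μ :=
    hi1.add hi2
  have hi123 : Integrable
      (fun ω => a ω * (I1 ω * T ω) + b ω * (I0 ω * (1 - T ω)) + c ω * T ω) μ := hi12.add hi3
  have hj12 : Integrable (fun ω => a ω * (g1 ω * p₂ ω) + b ω * (g0 ω * (1 - p₂ ω))) μ :=
    hj1.add hj2
  have hj123 : Integrable
      (fun ω => a ω * (g1 ω * p₂ ω) + b ω * (g0 ω * (1 - p₂ ω)) + c ω * p₂ ω) μ := hj12.add hj3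
  have hf01 : Integrable (fun ω => F0 t * g1 ω) μ := hig1.const_mul (F0 t)
  have hf10 : Integrable (fun ω => F1 y * g0 ω) μ := hig0.const_mul (F1 y)
  have hs1' : Integrable (fun ω => g1 ω * g0 ω - F0 t * g1 ω) μ := higg.sub hf01
  have hs2' : Integrable (fun ω => g1 ω * g0 ω - F0 t * g1 ω - F1 y * g0 ω) μ := hs1'.sub hf10
  -- assemble
  calc ∫ ω, Z1 y ω * Z0 t ω ∂μ
      = ∫ ω, (a ω * (I1 ω * T ω) + b ω * (I0 ω * (1 - T ω)) + c ω * T ω + d ω) ∂μ :=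
        integral_congr_ae claimA
    _ = (∫ ω, a ω * (I1 ω * T ω) ∂μ) + (∫ ω, b ω * (I0 ω * (1 - T ω)) ∂μ)
        + (∫ ω, c ω * T ω ∂μ) + (∫ ω, d ω ∂μ) := by
        rw [integral_add hi123 hi4, integral_add hi12 hi3, integral_add hi1 hi2]
    _ = (∫ ω, a ω * (g1 ω * p₂ ω) ∂μ) + (∫ ω, b ω * (g0 ω * (1 - p₂ ω)) ∂μ)
        + (∫ ω, c ω * p₂ ω ∂μ) + (∫ ω, d ω ∂μ) := by
        rw [step1, step2, step3]
    _ = ∫ ω, (a ω * (g1 ω * p₂ ω) + b ω * (g0 ω * (1 - p₂ ω)) + c ω * p₂ ω + d ω) ∂μ := by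
        rw [integral_add hj123 hi4, integral_add hj12 hj3, integral_add hj1 hj2]
    _ = ∫ ω, (g1 ω * g0 ω - F0 t * g1 ω - F1 y * g0 ω + F1 y * F0 t) ∂μ :=
        integral_congr_ae (Filter.Eventually.of_forall fun ω => Vid ω)
    _ = (∫ ω, g1 ω * g0 ω ∂μ) - F0 t * (∫ ω, g1 ω ∂μ) - F1 y * (∫ ω, g0 ω ∂μ)
        + F1 y * F0 t := by
        rw [integral_add hs2' (integrable_const _), integral_sub hs1' hf10,
          integral_sub higg hf01, integral_const_mul, integral_const_mul]
        simp
    _ = (∫ ω, G1 y ω * G0 t ω ∂μ) - F1 y * F0 t := by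
        rw [hintgg, hintg1, hintg0]
        ring
end

section
/- For all real y ≤ t, E[(Z₁(t) − Z₁(y))²] ≤ (1 + 1/δ)·(F₁(t) − F₁(y)) (the moment bound underlying asymptotic equicontinuity of the weighted empirical process). -/
open MeasureTheory ProbabilityTheory

/-- Helper: a.e.-bounded a.e.-strongly-measurable functions are integrable on a finite
measure space. -/
private lemma integrable_of_ae_bound {Ω : Type*} [MeasurableSpace Ω] {μ : Measure Ω}
    [IsFiniteMeasure μ] {f : Ω → ℝ} (hf : AEStronglyMeasurable f μ) {C : ℝ}
    (h : ∀ᵐ ω ∂μ, |f ω| ≤ C) : Integrable f μ :=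
  Integrable.mono' (integrable_const C) hf (by simpa [Real.norm_eq_abs] using h)

set_option maxHeartbeats 2000000 in
/-- Main auxiliary lemma, with an abstract sub-σ-algebra `m` in place of `σ(X)`. -/
private lemma stmt_14_aux {Ω : Type*} {m : MeasurableSpace Ω}
    [mΩ : MeasurableSpace Ω] [StandardBorelSpace Ω]
    (μ : Measure Ω) [IsProbabilityMeasure μ]
    (T Y1 Y0 : Ω → ℝ) (hm : m ≤ mΩ)
    (hT : Measurable T) (hY1 : Measurable Y1) (hY0 : Measurable Y0)
    (hT01 : ∀ ω, T ω = 0 ∨ T ω = 1)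
    (Y : Ω → ℝ) (hY : ∀ ω, Y ω = T ω * Y1 ω + (1 - T ω) * Y0 ω)
    (p : Ω → ℝ) (hp : p =ᵐ[μ] μ[T|m])
    (δ : ℝ) (hδ0 : 0 < δ)
    (hpδ : ∀ᵐ ω ∂μ, δ ≤ p ω ∧ p ω ≤ 1 - δ)
    (hindep : CondIndepFun m hm (fun ω => (Y1 ω, Y0 ω)) T μ)
    (F1 : ℝ → ℝ) (hF1 : ∀ y, F1 y = (μ {ω | Y1 ω ≤ y}).toReal)
    (G1 : ℝ → Ω → ℝ)
    (hG1 : ∀ y, G1 y =ᵐ[μ] μ[fun ω => if Y1 ω ≤ y then (1 : ℝ) else 0|m])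
    (Z1 : ℝ → Ω → ℝ)
    (hZ1 : ∀ y ω, Z1 y ω = (T ω / p ω) * (if Y ω ≤ y then (1 : ℝ) else 0) - F1 y
      - (G1 y ω / p ω) * (T ω - p ω))
    (y t : ℝ) (hyt : y ≤ t) :
    ∫ ω, (Z1 t ω - Z1 y ω) ^ 2 ∂μ ≤ (1 + 1/δ) * (F1 t - F1 y) := by
  classical
  have hG1t := hG1 t
  have hG1y := hG1 y
  set It : Ω → ℝ := fun ω => if Y1 ω ≤ t then 1 else 0 with hItdef
  set Iy : Ω → ℝ := fun ω => if Y1 ω ≤ y then 1 else 0 with hIydef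
  set P : Ω → ℝ := μ[T|m] with hPdef
  set Gt : Ω → ℝ := μ[It|m] with hGtdef
  set Gy : Ω → ℝ := μ[Iy|m] with hGydef
  set aF : ℝ := F1 t - F1 y with haFdef
  set g : Ω → ℝ := fun ω => Gt ω - Gy ω with hgdef
  set J : Ω → ℝ := fun ω => It ω - Iy ω with hJdef
  set W : Ω → ℝ := fun ω => T ω * (J ω - g ω) with hWdef
  set W2 : Ω → ℝ := fun ω => T ω * J ω - 2 * g ω * (T ω * J ω) + g ω * g ω * T ω with hW2def
  set h1 : Ω → ℝ := fun ω => 1 / (P ω) ^ 2 with hh1def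
  set h2 : Ω → ℝ := fun ω => 2 * (g ω - aF) / P ω with hh2def
  set S : Ω → ℝ := fun ω => W ω / P ω + (g ω - aF) with hSdef
  -- measurability facts
  have hsT : MeasurableSet {ω | Y1 ω ≤ t} := measurableSet_le hY1 measurable_const
  have hsY : MeasurableSet {ω | Y1 ω ≤ y} := measurableSet_le hY1 measurable_const
  have hIt_ind : It = Set.indicator {ω | Y1 ω ≤ t} (1 : Ω → ℝ) := by
    funext ω; simp [hItdef, Set.indicator_apply]
  have hIy_ind : Iy = Set.indicator {ω | Y1 ω ≤ y} (1 : Ω → ℝ) := by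
    funext ω; simp [hIydef, Set.indicator_apply]
  have hItm : Measurable It := by rw [hIt_ind]; exact measurable_one.indicator hsT
  have hIym : Measurable Iy := by rw [hIy_ind]; exact measurable_one.indicator hsY
  have hPm : Measurable P := (stronglyMeasurable_condExp.mono hm).measurable
  have hGtm : Measurable Gt := (stronglyMeasurable_condExp.mono hm).measurable
  have hGym : Measurable Gy := (stronglyMeasurable_condExp.mono hm).measurable
  have hgm : Measurable g := hGtm.sub hGym
  have hJm : Measurable J := hItm.sub hIym
  have hWm : Measurable W := hT.mul (hJm.sub hgm)
  have hW2m : Measurable W2 :=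
    ((hT.mul hJm).sub ((measurable_const.mul hgm).mul (hT.mul hJm))).add
      ((hgm.mul hgm).mul hT)
  -- strong measurability w.r.t. m
  have hSMg : StronglyMeasurable[m] g := stronglyMeasurable_condExp.sub stronglyMeasurable_condExp
  have hPm' : Measurable[m] P := stronglyMeasurable_condExp.measurable
  have hgm' : Measurable[m] g :=
    stronglyMeasurable_condExp.measurable.sub stronglyMeasurable_condExp.measurable
  have hSMh1 : StronglyMeasurable[m] h1 :=
    (measurable_const.div (hPm'.pow_const 2)).stronglyMeasurable
  have hSMh2 : StronglyMeasurable[m] h2 :=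
    ((measurable_const.mul (hgm'.sub measurable_const)).div hPm').stronglyMeasurable
  have hSM2g : StronglyMeasurable[m] (fun ω => 2 * g ω) :=
    (measurable_const.mul hgm').stronglyMeasurable
  have hSMgg : StronglyMeasurable[m] (fun ω => g ω * g ω) :=
    (hgm'.mul hgm').stronglyMeasurable
  -- basic pointwise facts
  have hT01' : ∀ ω, 0 ≤ T ω ∧ T ω ≤ 1 := by
    intro ω; rcases hT01 ω with h | h <;> rw [h] <;> norm_num
  have hJ01 : ∀ ω, J ω = 0 ∨ J ω = 1 := by
    intro ω
    by_cases hy' : Y1 ω ≤ y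
    · left; simp [hJdef, hItdef, hIydef, hy', hy'.trans hyt]
    · by_cases ht' : Y1 ω ≤ t
      · right; simp [hJdef, hItdef, hIydef, hy', ht']
      · left; simp [hJdef, hItdef, hIydef, hy', ht']
  have hJbd : ∀ ω, 0 ≤ J ω ∧ J ω ≤ 1 := by
    intro ω; rcases hJ01 ω with h | h <;> rw [h] <;> norm_num
  -- a.e. facts
  have hPδ : ∀ᵐ ω ∂μ, δ ≤ P ω ∧ P ω ≤ 1 - δ := by
    filter_upwards [hpδ, hp] with ω h1 h2
    rw [← h2]; exact h1
  have hIyIt : Iy ≤ᵐ[μ] It := by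
    refine Filter.Eventually.of_forall fun ω => ?_
    simp only [hItdef, hIydef]
    split_ifs with h1 h2 <;> try norm_num
    exact absurd (h1.trans hyt) h2
  have hItInt : Integrable It μ := by
    refine integrable_of_ae_bound hItm.aestronglyMeasurable (C := 1) ?_
    refine Filter.Eventually.of_forall fun ω => ?_
    simp only [hItdef]; split_ifs <;> norm_num
  have hIyInt : Integrable Iy μ := by
    refine integrable_of_ae_bound hIym.aestronglyMeasurable (C := 1) ?_
    refine Filter.Eventually.of_forall fun ω => ?_
    simp only [hIydef]; split_ifs <;> norm_num
  have hTInt : Integrable T μ := by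
    refine integrable_of_ae_bound hT.aestronglyMeasurable (C := 1) ?_
    refine Filter.Eventually.of_forall fun ω => ?_
    obtain ⟨a, b⟩ := hT01' ω
    rw [abs_le]; constructor <;> linarith
  have hGy0 : ∀ᵐ ω ∂μ, 0 ≤ Gy ω := by
    have h := condExp_nonneg (m := m) (μ := μ) (f := Iy) (Filter.Eventually.of_forall fun ω => by
      simp only [Pi.zero_apply, hIydef]; split_ifs <;> norm_num)
    filter_upwards [h] with ω hω
    exact hω
  have hGyGt : ∀ᵐ ω ∂μ, Gy ω ≤ Gt ω := condExp_mono hIyInt hItInt hIyIt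
  have hGt1 : ∀ᵐ ω ∂μ, Gt ω ≤ 1 := by
    have h := condExp_mono (m := m) (μ := μ) hItInt (integrable_const (1 : ℝ))
      (Filter.Eventually.of_forall fun ω => by
        simp only [hItdef]; split_ifs <;> norm_num)
    have hc := condExp_const (μ := μ) hm (1 : ℝ)
    filter_upwards [h] with ω hω
    rw [hc] at hω
    exact hω
  have hg01 : ∀ᵐ ω ∂μ, 0 ≤ g ω ∧ g ω ≤ 1 := by
    filter_upwards [hGy0, hGyGt, hGt1] with ω h0 h1 h2
    constructor
    · simp only [hgdef]; linarith
    · simp only [hgdef]; linarith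
  -- more integrability
  have hTJfacts : ∀ ω, 0 ≤ T ω * J ω ∧ T ω * J ω ≤ 1 := by
    intro ω
    obtain ⟨a1, a2⟩ := hT01' ω; obtain ⟨a3, a4⟩ := hJbd ω
    exact ⟨mul_nonneg a1 a3, mul_le_one₀ a2 a3 a4⟩
  have hTJInt : Integrable (fun ω => T ω * J ω) μ := by
    refine integrable_of_ae_bound (hT.mul hJm).aestronglyMeasurable (C := 1) ?_
    refine Filter.Eventually.of_forall fun ω => ?_
    obtain ⟨a1, a2⟩ := hTJfacts ω
    rw [abs_le]; constructor <;> linarith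
  have hgTInt : Integrable (fun ω => g ω * T ω) μ := by
    refine integrable_of_ae_bound (hgm.mul hT).aestronglyMeasurable (C := 1) ?_
    filter_upwards [hg01] with ω hg
    obtain ⟨a1, a2⟩ := hT01' ω
    have q0 : 0 ≤ g ω * T ω := mul_nonneg hg.1 a1
    have q1 : g ω * T ω ≤ 1 := mul_le_one₀ hg.2 a1 a2
    rw [abs_le]; constructor <;> linarith
  have h2gTJInt : Integrable (fun ω => 2 * g ω * (T ω * J ω)) μ := by
    refine integrable_of_ae_bound
      ((measurable_const.mul hgm).mul (hT.mul hJm)).aestronglyMeasurable (C := 2) ?_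
    filter_upwards [hg01] with ω hg
    obtain ⟨a1, a2⟩ := hTJfacts ω
    have q0 : 0 ≤ g ω * (T ω * J ω) := mul_nonneg hg.1 a1
    have q1 : g ω * (T ω * J ω) ≤ 1 := mul_le_one₀ hg.2 a1 a2
    rw [abs_le]; constructor <;> nlinarith
  have hggTInt : Integrable (fun ω => g ω * g ω * T ω) μ := by
    refine integrable_of_ae_bound ((hgm.mul hgm).mul hT).aestronglyMeasurable (C := 1) ?_
    filter_upwards [hg01] with ω hg
    obtain ⟨a1, a2⟩ := hT01' ω
    have q0 : 0 ≤ g ω * g ω := mul_nonneg hg.1 hg.1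
    have q1 : g ω * g ω ≤ 1 := mul_le_one₀ hg.2 hg.1 hg.2
    have q2 : 0 ≤ g ω * g ω * T ω := mul_nonneg q0 a1
    have q3 : g ω * g ω * T ω ≤ 1 := mul_le_one₀ q1 a1 a2
    rw [abs_le]; constructor <;> linarith
  have hWInt : Integrable W μ := by
    refine integrable_of_ae_bound hWm.aestronglyMeasurable (C := 2) ?_
    filter_upwards [hg01] with ω hg
    obtain ⟨a1, a2⟩ := hT01' ω; obtain ⟨a3, a4⟩ := hJbd ω
    have u1 : T ω * (J ω - g ω) ≤ T ω * 1 := mul_le_mul_of_nonneg_left (by linarith [hg.2]) a1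
    have u2 : T ω * (-1) ≤ T ω * (J ω - g ω) := mul_le_mul_of_nonneg_left (by linarith [hg.1]) a1
    simp only [hWdef]
    rw [abs_le]; constructor <;> nlinarith
  have hW2Int : Integrable W2 μ := by
    refine integrable_of_ae_bound hW2m.aestronglyMeasurable (C := 4) ?_
    filter_upwards [hg01] with ω hg
    obtain ⟨a1, a2⟩ := hTJfacts ω
    have q0 : 0 ≤ g ω * (T ω * J ω) := mul_nonneg hg.1 a1
    have q1 : g ω * (T ω * J ω) ≤ 1 := mul_le_one₀ hg.2 a1 a2
    obtain ⟨b1, b2⟩ := hT01' ω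
    have q2 : 0 ≤ g ω * g ω := mul_nonneg hg.1 hg.1
    have q3 : g ω * g ω ≤ 1 := mul_le_one₀ hg.2 hg.1 hg.2
    have q4 : 0 ≤ g ω * g ω * T ω := mul_nonneg q2 b1
    have q5 : g ω * g ω * T ω ≤ 1 := mul_le_one₀ q3 b1 b2
    simp only [hW2def]
    rw [abs_le]; constructor <;> nlinarith
  have hgInt : Integrable g μ := by
    have h : Integrable (Gt - Gy) μ := integrable_condExp.sub integrable_condExp
    have heq : g = Gt - Gy := by funext ω; simp [hgdef]
    rw [heq]
    exact h
  have hU1Int : Integrable (fun ω => h1 ω * W2 ω) μ := by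
    refine integrable_of_ae_bound
      ((measurable_const.div (hPm.pow_const 2)).mul hW2m).aestronglyMeasurable
      (C := 1/δ^2 * 4) ?_
    filter_upwards [hg01, hPδ] with ω hg hP
    obtain ⟨a1, a2⟩ := hT01' ω; obtain ⟨a3, a4⟩ := hJbd ω
    have hP0 : 0 < P ω := lt_of_lt_of_le hδ0 hP.1
    have habs1 : |h1 ω| ≤ 1/δ^2 := by
      simp only [hh1def]
      rw [abs_of_pos (by positivity)]
      exact div_le_div₀ (by positivity) le_rfl (by positivity)
        (pow_le_pow_left₀ hδ0.le hP.1 2)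
    have habs2 : |W2 ω| ≤ 4 := by
      obtain ⟨c1, c2⟩ := hTJfacts ω
      have q0 : 0 ≤ g ω * (T ω * J ω) := mul_nonneg hg.1 c1
      have q1 : g ω * (T ω * J ω) ≤ 1 := mul_le_one₀ hg.2 c1 c2
      obtain ⟨b1, b2⟩ := hT01' ω
      have q2 : 0 ≤ g ω * g ω := mul_nonneg hg.1 hg.1
      have q3 : g ω * g ω ≤ 1 := mul_le_one₀ hg.2 hg.1 hg.2
      have q4 : 0 ≤ g ω * g ω * T ω := mul_nonneg q2 b1
      have q5 : g ω * g ω * T ω ≤ 1 := mul_le_one₀ q3 b1 b2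
      simp only [hW2def]
      rw [abs_le]; constructor <;> nlinarith
    calc |h1 ω * W2 ω| = |h1 ω| * |W2 ω| := abs_mul _ _
      _ ≤ 1/δ^2 * 4 := mul_le_mul habs1 habs2 (abs_nonneg _) (by positivity)
  have hh2bd : ∀ᵐ ω ∂μ, |h2 ω| ≤ 2 * (1 + |aF|) / δ := by
    filter_upwards [hg01, hPδ] with ω hg hP
    have hP0 : 0 < P ω := lt_of_lt_of_le hδ0 hP.1
    simp only [hh2def]
    rw [abs_div, abs_of_pos hP0]
    refine div_le_div₀ (by positivity) ?_ hδ0 hP.1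
    have hga : |g ω - aF| ≤ 1 + |aF| := by
      rw [abs_le]; constructor
      · nlinarith [hg.1, hg.2, le_abs_self aF, neg_abs_le aF]
      · nlinarith [hg.1, hg.2, le_abs_self aF, neg_abs_le aF]
    calc |2 * (g ω - aF)| = 2 * |g ω - aF| := by rw [abs_mul]; norm_num
      _ ≤ 2 * (1 + |aF|) := by linarith
  have hU2Int : Integrable (fun ω => h2 ω * W ω) μ := by
    refine integrable_of_ae_bound
      (((measurable_const.mul (hgm.sub measurable_const)).div hPm).mul hWm).aestronglyMeasurable
      (C := 2 * (1 + |aF|) / δ * 2) ?_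
    filter_upwards [hg01, hh2bd] with ω hg habs2
    obtain ⟨a1, a2⟩ := hT01' ω; obtain ⟨a3, a4⟩ := hJbd ω
    have u1 : T ω * (J ω - g ω) ≤ T ω * 1 := mul_le_mul_of_nonneg_left (by linarith [hg.2]) a1
    have u2 : T ω * (-1) ≤ T ω * (J ω - g ω) := mul_le_mul_of_nonneg_left (by linarith [hg.1]) a1
    have habsW : |W ω| ≤ 2 := by
      simp only [hWdef]
      rw [abs_le]; constructor <;> nlinarith
    calc |h2 ω * W ω| = |h2 ω| * |W ω| := abs_mul _ _
      _ ≤ 2 * (1 + |aF|) / δ * 2 :=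
          mul_le_mul habs2 habsW (abs_nonneg _) (by positivity)
  have hU3Int : Integrable (fun ω => (g ω - aF)^2) μ := by
    refine integrable_of_ae_bound ((hgm.sub measurable_const).pow_const 2).aestronglyMeasurable
      (C := (1 + |aF|)^2) ?_
    filter_upwards [hg01] with ω hg
    have hga : |g ω - aF| ≤ 1 + |aF| := by
      rw [abs_le]; constructor
      · nlinarith [hg.1, hg.2, le_abs_self aF, neg_abs_le aF]
      · nlinarith [hg.1, hg.2, le_abs_self aF, neg_abs_le aF]
    rw [abs_of_nonneg (sq_nonneg _), ← sq_abs]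
    exact pow_le_pow_left₀ (abs_nonneg _) hga 2
  -- the key conditional-independence product rule
  have hAind : Set.indicator (T ⁻¹' {1}) (fun _ => (1 : ℝ)) = T := by
    funext ω; rcases hT01 ω with h | h <;> simp [Set.indicator_apply, h]
  have hBind : Set.indicator ((fun ω => (Y1 ω, Y0 ω)) ⁻¹' (Set.Ioc y t ×ˢ Set.univ))
      (fun _ => (1 : ℝ)) = J := by
    funext ω
    by_cases hy' : Y1 ω ≤ y
    · have hnlt : ¬ y < Y1 ω := not_lt.mpr hy'
      simp [Set.indicator_apply, Set.mem_Ioc, hnlt, hJdef, hItdef, hIydef, hy', hy'.trans hyt]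
    · by_cases ht' : Y1 ω ≤ t
      · simp [Set.indicator_apply, Set.mem_Ioc, not_le.mp hy', hJdef, hItdef, hIydef, hy', ht']
      · simp [Set.indicator_apply, Set.mem_Ioc, hJdef, hItdef, hIydef, hy', ht']
  have hABind : Set.indicator
      ((fun ω => (Y1 ω, Y0 ω)) ⁻¹' (Set.Ioc y t ×ˢ Set.univ) ∩ T ⁻¹' {1})
      (fun _ => (1 : ℝ)) = fun ω => T ω * J ω := by
    funext ω
    rcases hT01 ω with h | h
    · simp [Set.indicator_apply, h]
    · by_cases hy' : Y1 ω ≤ y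
      · have hnlt : ¬ y < Y1 ω := not_lt.mpr hy'
        simp [Set.indicator_apply, Set.mem_Ioc, hnlt, h, hJdef, hItdef, hIydef, hy',
          hy'.trans hyt]
      · by_cases ht' : Y1 ω ≤ t
        · simp [Set.indicator_apply, Set.mem_Ioc, not_le.mp hy', h, hJdef, hItdef, hIydef,
            hy', ht']
        · simp [Set.indicator_apply, Set.mem_Ioc, h, hJdef, hItdef, hIydef, hy', ht']
  have hBmeas : MeasurableSet (Set.Ioc y t ×ˢ (Set.univ : Set ℝ)) :=
    measurableSet_Ioc.prod MeasurableSet.univ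
  have h0 := (condIndepFun_iff_condExp_inter_preimage_eq_mul
    (hY1.prodMk hY0) hT).mp hindep _ _ hBmeas (measurableSet_singleton (1 : ℝ))
  rw [hABind, hAind, hBind] at h0
  have hJce : μ[J|m] =ᵐ[μ] g := by
    have hbridge : μ[J|m] =ᵐ[μ] μ[It - Iy|m] :=
      condExp_congr_ae (Filter.Eventually.of_forall fun ω => by simp [hJdef])
    have hsub := condExp_sub (μ := μ) (m := m) hItInt hIyInt
    filter_upwards [hbridge, hsub] with ω e1 e2
    rw [e1, e2]
    simp [hgdef]
    rfl
  have hprod : μ[fun ω => T ω * J ω|m] =ᵐ[μ] fun ω => g ω * P ω := by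
    filter_upwards [h0, hJce] with ω e0 e1
    rw [e0, e1]
  -- pull-out computations
  have hgTce : μ[fun ω => g ω * T ω|m] =ᵐ[μ] fun ω => g ω * P ω := by
    have hpull := condExp_stronglyMeasurable_mul_of_bound hm hSMg hTInt 1 (by
      filter_upwards [hg01] with ω hg
      rw [Real.norm_eq_abs, abs_le]; constructor <;> linarith [hg.1, hg.2])
    have hbridge : μ[fun ω => g ω * T ω|m] =ᵐ[μ] μ[g * T|m] :=
      condExp_congr_ae (Filter.Eventually.of_forall fun ω => rfl)
    filter_upwards [hbridge, hpull] with ω e0 e1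
    rw [e0, e1, Pi.mul_apply]
  have h2gTJce : μ[fun ω => 2 * g ω * (T ω * J ω)|m] =ᵐ[μ]
      fun ω => 2 * g ω * (g ω * P ω) := by
    have hpull := condExp_stronglyMeasurable_mul_of_bound hm hSM2g hTJInt 2 (by
      filter_upwards [hg01] with ω hg
      rw [Real.norm_eq_abs, abs_le]; constructor <;> linarith [hg.1, hg.2])
    have hbridge : μ[fun ω => 2 * g ω * (T ω * J ω)|m] =ᵐ[μ]
        μ[(fun ω => 2 * g ω) * (fun ω => T ω * J ω)|m] :=
      condExp_congr_ae (Filter.Eventually.of_forall fun ω => rfl)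
    filter_upwards [hbridge, hpull, hprod] with ω e0 e1 e2
    rw [e0, e1, Pi.mul_apply, e2]
  have hggTce : μ[fun ω => g ω * g ω * T ω|m] =ᵐ[μ] fun ω => g ω * g ω * P ω := by
    have hpull := condExp_stronglyMeasurable_mul_of_bound hm hSMgg hTInt 1 (by
      filter_upwards [hg01] with ω hg
      have q0 : 0 ≤ g ω * g ω := mul_nonneg hg.1 hg.1
      have q1 : g ω * g ω ≤ 1 := mul_le_one₀ hg.2 hg.1 hg.2
      rw [Real.norm_eq_abs, abs_le]; constructor <;> linarith)
    have hbridge : μ[fun ω => g ω * g ω * T ω|m] =ᵐ[μ]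
        μ[(fun ω => g ω * g ω) * T|m] :=
      condExp_congr_ae (Filter.Eventually.of_forall fun ω => rfl)
    filter_upwards [hbridge, hpull] with ω e0 e1
    rw [e0, e1, Pi.mul_apply]
  have hWce : μ[W|m] =ᵐ[μ] fun _ => (0 : ℝ) := by
    have hbridge : μ[W|m] =ᵐ[μ] μ[(fun ω => T ω * J ω) - (fun ω => g ω * T ω)|m] :=
      condExp_congr_ae (Filter.Eventually.of_forall fun ω => by
        simp only [hWdef, Pi.sub_apply]; ring)
    have hsub := condExp_sub (μ := μ) (m := m) hTJInt hgTInt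
    filter_upwards [hbridge, hsub, hprod, hgTce] with ω e0 e1 e2 e3
    rw [e0, e1, Pi.sub_apply, e2, e3]
    ring
  have hW2ce : μ[W2|m] =ᵐ[μ]
      fun ω => g ω * P ω - 2 * g ω * (g ω * P ω) + g ω * g ω * P ω := by
    have hbridge : μ[W2|m] =ᵐ[μ]
        μ[((fun ω => T ω * J ω) - fun ω => 2 * g ω * (T ω * J ω)) +
          (fun ω => g ω * g ω * T ω)|m] :=
      condExp_congr_ae (Filter.Eventually.of_forall fun ω => by
        simp only [hW2def, Pi.add_apply, Pi.sub_apply])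
    have hadd := condExp_add (μ := μ) (m := m) (hTJInt.sub h2gTJInt) hggTInt
    have hsub := condExp_sub (μ := μ) (m := m) hTJInt h2gTJInt
    filter_upwards [hbridge, hadd, hsub, hprod, h2gTJce, hggTce] with ω e0 e1 e2 e3 e4 e5
    rw [e0, e1, Pi.add_apply, e2, Pi.sub_apply, e3, e4, e5]
  -- integral of g
  have hgint_eq : ∫ ω, g ω ∂μ = aF := by
    have h1' : ∫ ω, g ω ∂μ = (∫ ω, Gt ω ∂μ) - ∫ ω, Gy ω ∂μ :=
      integral_sub integrable_condExp integrable_condExp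
    have h2' : ∫ ω, Gt ω ∂μ = ∫ ω, It ω ∂μ := integral_condExp hm
    have h3' : ∫ ω, Gy ω ∂μ = ∫ ω, Iy ω ∂μ := integral_condExp hm
    have h4' : ∫ ω, It ω ∂μ = (μ {ω | Y1 ω ≤ t}).toReal := by
      rw [hIt_ind]; exact integral_indicator_one hsT
    have h5' : ∫ ω, Iy ω ∂μ = (μ {ω | Y1 ω ≤ y}).toReal := by
      rw [hIy_ind]; exact integral_indicator_one hsY
    rw [h1', h2', h3', h4', h5', haFdef, hF1 t, hF1 y]
  -- the three integral terms
  have hU2eq : ∫ ω, h2 ω * W ω ∂μ = 0 := by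
    have hpull := condExp_stronglyMeasurable_mul_of_bound hm hSMh2 hWInt
      (2 * (1 + |aF|) / δ) (by
        filter_upwards [hh2bd] with ω hω
        rw [Real.norm_eq_abs]; exact hω)
    have hbridge : μ[fun ω => h2 ω * W ω|m] =ᵐ[μ] μ[h2 * W|m] :=
      condExp_congr_ae (Filter.Eventually.of_forall fun ω => rfl)
    have hzero : μ[fun ω => h2 ω * W ω|m] =ᵐ[μ] fun _ => (0 : ℝ) := by
      filter_upwards [hbridge, hpull, hWce] with ω e0 e1 e2
      rw [e0, e1, Pi.mul_apply, e2]
      ring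
    rw [← integral_condExp hm (f := fun ω => h2 ω * W ω), integral_congr_ae hzero]
    simp
  have hU1le : ∫ ω, h1 ω * W2 ω ∂μ ≤ (1/δ) * aF := by
    have hpull := condExp_stronglyMeasurable_mul_of_bound hm hSMh1 hW2Int (1/δ^2) (by
      filter_upwards [hPδ] with ω hP
      have hP0 : 0 < P ω := lt_of_lt_of_le hδ0 hP.1
      rw [Real.norm_eq_abs]
      simp only [hh1def]
      rw [abs_of_pos (by positivity)]
      exact div_le_div₀ (by positivity) le_rfl (by positivity)
        (pow_le_pow_left₀ hδ0.le hP.1 2))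
    have hbridge : μ[fun ω => h1 ω * W2 ω|m] =ᵐ[μ] μ[h1 * W2|m] :=
      condExp_congr_ae (Filter.Eventually.of_forall fun ω => rfl)
    have hkey : μ[fun ω => h1 ω * W2 ω|m] ≤ᵐ[μ] fun ω => (1/δ) * g ω := by
      filter_upwards [hbridge, hpull, hW2ce, hg01, hPδ] with ω e0 e1 e2 hg hP
      rw [e0, e1, Pi.mul_apply, e2]
      have hP0 : 0 < P ω := lt_of_lt_of_le hδ0 hP.1
      have hPne : P ω ≠ 0 := ne_of_gt hP0
      have hfact : h1 ω * (g ω * P ω - 2 * g ω * (g ω * P ω) + g ω * g ω * P ω)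
          = g ω * (1 - g ω) / P ω := by
        simp only [hh1def]
        field_simp
        ring
      rw [hfact]
      calc g ω * (1 - g ω) / P ω ≤ g ω / P ω :=
            (div_le_div_iff_of_pos_right hP0).mpr (by nlinarith [mul_nonneg hg.1 hg.1])
        _ ≤ g ω / δ := div_le_div₀ hg.1 le_rfl hδ0 hP.1
        _ = (1/δ) * g ω := by ring
    calc ∫ ω, h1 ω * W2 ω ∂μ
        = ∫ ω, (μ[fun ω => h1 ω * W2 ω|m]) ω ∂μ := (integral_condExp hm).symm
      _ ≤ ∫ ω, (1/δ) * g ω ∂μ :=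
          integral_mono_ae integrable_condExp (hgInt.const_mul _) hkey
      _ = (1/δ) * ∫ ω, g ω ∂μ := integral_const_mul _ _
      _ = (1/δ) * aF := by rw [hgint_eq]
  have hU3le : ∫ ω, (g ω - aF)^2 ∂μ ≤ aF := by
    have hkey : (fun ω => (g ω - aF)^2) ≤ᵐ[μ] fun ω => (1 - 2*aF) * g ω + aF^2 := by
      filter_upwards [hg01] with ω hg
      nlinarith [mul_nonneg hg.1 (by linarith [hg.2] : 0 ≤ 1 - g ω)]
    have hRInt : Integrable (fun ω => (1 - 2*aF) * g ω + aF^2) μ :=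
      (hgInt.const_mul _).add (integrable_const _)
    calc ∫ ω, (g ω - aF)^2 ∂μ
        ≤ ∫ ω, ((1 - 2*aF) * g ω + aF^2) ∂μ := integral_mono_ae hU3Int hRInt hkey
      _ = (1 - 2*aF) * aF + aF^2 := by
          rw [integral_add (hgInt.const_mul _) (integrable_const _), integral_const_mul,
            hgint_eq, integral_const]
          simp [measure_univ]
      _ ≤ aF := by nlinarith [sq_nonneg aF]
  -- pointwise decomposition
  have hW2W : ∀ ω, W2 ω = (W ω)^2 := by
    intro ω
    rcases hT01 ω with h | h <;> rcases hJ01 ω with h' | h' <;>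
      simp only [hW2def, hWdef, h, h'] <;> ring
  have hdecomp : ∀ ω, S ω ^ 2 = h1 ω * W2 ω + h2 ω * W ω + (g ω - aF)^2 := by
    intro ω
    rw [hW2W ω]
    simp only [hSdef, hh1def, hh2def]
    by_cases hP0 : P ω = 0
    · simp [hP0]
    · field_simp
      ring
  have hZS : ∀ᵐ ω ∂μ, Z1 t ω - Z1 y ω = S ω := by
    filter_upwards [hp, hG1t, hG1y, hPδ] with ω hpω hgt hgy hP
    have hP0 : P ω ≠ 0 := ne_of_gt (lt_of_lt_of_le hδ0 hP.1)
    rw [hZ1 t ω, hZ1 y ω, hpω, hgt, hgy]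
    rcases hT01 ω with h | h
    · simp only [hSdef, hWdef, hJdef, hgdef, haFdef, h]
      field_simp
      ring
    · have hYω : Y ω = Y1 ω := by rw [hY ω, h]; ring
      simp only [hSdef, hWdef, hJdef, hgdef, haFdef, hItdef, hIydef, hYω, h]
      field_simp
      ring
  -- put everything together
  have hInt_congr : ∫ ω, (Z1 t ω - Z1 y ω)^2 ∂μ
      = ∫ ω, (h1 ω * W2 ω + h2 ω * W ω + (g ω - aF)^2) ∂μ := by
    apply integral_congr_ae
    filter_upwards [hZS] with ω e
    rw [e, hdecomp ω]
  have hIsum : Integrable (fun ω => h1 ω * W2 ω + h2 ω * W ω) μ := hU1Int.add hU2Int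
  rw [hInt_congr, integral_add hIsum hU3Int, integral_add hU1Int hU2Int, hU2eq]
  have hrw : (1 + 1/δ) * aF = (1/δ) * aF + aF := by ring
  rw [hrw]
  linarith

/-- Moment bound underlying asymptotic equicontinuity: for all real `y ≤ t`,
`E[(Z₁(t) − Z₁(y))²] ≤ (1 + 1/δ)·(F₁(t) − F₁(y))`. -/
theorem stmt_14
    {Ω : Type*} [MeasurableSpace Ω] [StandardBorelSpace Ω]
    {𝒳 : Type*} [MeasurableSpace 𝒳] [StandardBorelSpace 𝒳]
    (μ : Measure Ω) [IsProbabilityMeasure μ]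
    (X : Ω → 𝒳) (T : Ω → ℝ) (Y1 Y0 : Ω → ℝ)
    (hX : Measurable X) (hT : Measurable T) (hY1 : Measurable Y1) (hY0 : Measurable Y0)
    (hT01 : ∀ ω, T ω = 0 ∨ T ω = 1)
    (Y : Ω → ℝ) (hY : ∀ ω, Y ω = T ω * Y1 ω + (1 - T ω) * Y0 ω)
    (p : Ω → ℝ)
    (hp : p =ᵐ[μ] μ[T | MeasurableSpace.comap X inferInstance])
    (δ : ℝ) (hδ : δ ∈ Set.Ioo (0 : ℝ) (1/2))
    (hpδ : ∀ᵐ ω ∂μ, δ ≤ p ω ∧ p ω ≤ 1 - δ)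
    (hindep : CondIndepFun (MeasurableSpace.comap X inferInstance) hX.comap_le
      (fun ω => (Y1 ω, Y0 ω)) T μ)
    (F1 : ℝ → ℝ) (hF1 : ∀ y, F1 y = (μ {ω | Y1 ω ≤ y}).toReal)
    (G1 : ℝ → Ω → ℝ)
    (hG1 : ∀ y, G1 y =ᵐ[μ]
      μ[fun ω => if Y1 ω ≤ y then (1 : ℝ) else 0 | MeasurableSpace.comap X inferInstance])
    (Z1 : ℝ → Ω → ℝ)
    (hZ1 : ∀ y ω, Z1 y ω = (T ω / p ω) * (if Y ω ≤ y then (1 : ℝ) else 0) - F1 y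
      - (G1 y ω / p ω) * (T ω - p ω))
    (y t : ℝ) (hyt : y ≤ t) :
    ∫ ω, (Z1 t ω - Z1 y ω) ^ 2 ∂μ ≤ (1 + 1/δ) * (F1 t - F1 y) := by
  exact stmt_14_aux μ T Y1 Y0 hX.comap_le hT hY1 hY0 hT01 Y hY p hp δ hδ.1 hpδ hindep
    F1 hF1 G1 hG1 Z1 hZ1 y t hyt
end

section
/- If F₀, F₁ are continuous cumulative distribution functions on ℝ and G₀, G₁ are arbitrary cumulative distribution functions on ℝ, then ∫_ℝ G₀ dμ_{G₁} − ∫_ℝ F₀ dμ_{F₁} = ∫_ℝ (G₀ − F₀) dμ_{G₁} − ∫_ℝ (G₁ − F₁) dμ_{F₀} (the decomposition of the plug-in Wilcoxon functional used in the proof of the asymptotic normality of the Wilcoxon-type statistic). -/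
open MeasureTheory Filter

lemma stmt16_nonneg (F : StieltjesFunction ℝ) (hbot : Tendsto F atBot (nhds 0)) (y : ℝ) :
    0 ≤ F y := le_of_tendsto hbot (by filter_upwards [eventually_le_atBot y] with x hx using F.mono hx)

lemma stmt16_le_one (F : StieltjesFunction ℝ) (htop : Tendsto F atTop (nhds 1)) (y : ℝ) :
    F y ≤ 1 := ge_of_tendsto htop (by filter_upwards [eventually_ge_atTop y] with x hx using F.mono hx)

lemma stmt16_integrable (F : StieltjesFunction ℝ) (hbot : Tendsto F atBot (nhds 0))
    (htop : Tendsto F atTop (nhds 1)) (μ : Measure ℝ) [IsFiniteMeasure μ] :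
    Integrable (fun y => F y) μ := by
  refine ⟨F.mono.measurable.aestronglyMeasurable, ?_⟩
  refine HasFiniteIntegral.of_bounded (C := 1) (ae_of_all _ fun y => ?_)
  rw [Real.norm_eq_abs, abs_le]
  exact ⟨by linarith [stmt16_nonneg F hbot y], stmt16_le_one F htop y⟩

lemma stmt16_key (F G : StieltjesFunction ℝ) (hFcont : Continuous F)
    (hFbot : Tendsto F atBot (nhds 0)) (hFtop : Tendsto F atTop (nhds 1))
    (hGbot : Tendsto G atBot (nhds 0)) (hGtop : Tendsto G atTop (nhds 1)) :
    (∫ y, F y ∂G.measure) + (∫ x, G x ∂F.measure) = 1 := by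
  have hFP : IsProbabilityMeasure F.measure := F.isProbabilityMeasure hFbot hFtop
  have hGP : IsProbabilityMeasure G.measure := G.isProbabilityMeasure hGbot hGtop
  -- rewrite the two integrals as lintegrals of measures of Iic
  have h1 : (∫ y, F y ∂G.measure)
      = (∫⁻ y, F.measure (Set.Iic y) ∂G.measure).toReal := by
    rw [integral_eq_lintegral_of_nonneg_ae (ae_of_all _ (stmt16_nonneg F hFbot))
      F.mono.measurable.aestronglyMeasurable]
    congr 1
    refine lintegral_congr fun y => ?_
    rw [F.measure_Iic hFbot, sub_zero]
  have h2 : (∫ x, G x ∂F.measure)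
      = (∫⁻ x, G.measure (Set.Iic x) ∂F.measure).toReal := by
    rw [integral_eq_lintegral_of_nonneg_ae (ae_of_all _ (stmt16_nonneg G hGbot))
      G.mono.measurable.aestronglyMeasurable]
    congr 1
    refine lintegral_congr fun x => ?_
    rw [G.measure_Iic hGbot, sub_zero]
  set π := F.measure.prod G.measure with hπ
  have hsle : MeasurableSet {p : ℝ × ℝ | p.1 ≤ p.2} :=
    measurableSet_le measurable_fst measurable_snd
  have hsge : MeasurableSet {p : ℝ × ℝ | p.2 ≤ p.1} :=
    measurableSet_le measurable_snd measurable_fst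
  have hA : (∫⁻ y, F.measure (Set.Iic y) ∂G.measure) = π {p : ℝ × ℝ | p.1 ≤ p.2} := by
    rw [Measure.prod_apply_symm hsle]
    refine lintegral_congr fun y => ?_
    congr 1
  have hB : (∫⁻ x, G.measure (Set.Iic x) ∂F.measure) = π {p : ℝ × ℝ | p.2 ≤ p.1} := by
    rw [Measure.prod_apply hsge]
    refine lintegral_congr fun x => ?_
    congr 1
  -- the diagonal has measure zero since F is continuous
  have hdiag : π ({p : ℝ × ℝ | p.1 ≤ p.2} ∩ {p : ℝ × ℝ | p.2 ≤ p.1}) = 0 := by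
    have hsub : ({p : ℝ × ℝ | p.1 ≤ p.2} ∩ {p : ℝ × ℝ | p.2 ≤ p.1})
        = {p : ℝ × ℝ | p.1 = p.2} := by
      ext p; simp [le_antisymm_iff]
    rw [hsub, Measure.prod_apply_symm (measurableSet_eq_fun measurable_fst measurable_snd)]
    have h0 : ∀ y : ℝ, F.measure ((fun x => (x, y)) ⁻¹' {p : ℝ × ℝ | p.1 = p.2}) = 0 := by
      intro y
      have hpre : ((fun x => (x, y)) ⁻¹' {p : ℝ × ℝ | p.1 = p.2}) = {y} := by
        ext x; simp [Set.mem_preimage]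
      rw [hpre, F.measure_singleton]
      have hll : Function.leftLim F y = F y :=
        leftLim_eq_of_tendsto
          ((hFcont.tendsto y).mono_left nhdsWithin_le_nhds)
      rw [hll, sub_self, ENNReal.ofReal_zero]
    rw [lintegral_congr h0, lintegral_zero]
  have hunion : ({p : ℝ × ℝ | p.1 ≤ p.2} ∪ {p : ℝ × ℝ | p.2 ≤ p.1}) = Set.univ := by
    ext p; simp [le_total]
  have hsum : π {p : ℝ × ℝ | p.1 ≤ p.2} + π {p : ℝ × ℝ | p.2 ≤ p.1} = 1 := by
    rw [← measure_union_add_inter _ hsge, hunion, hdiag, add_zero]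
    exact measure_univ
  have hAfin : π {p : ℝ × ℝ | p.1 ≤ p.2} ≠ ⊤ := by
    exact (measure_lt_top _ _).ne
  have hBfin : π {p : ℝ × ℝ | p.2 ≤ p.1} ≠ ⊤ := (measure_lt_top _ _).ne
  rw [h1, h2, hA, hB, ← ENNReal.toReal_add hAfin hBfin, hsum, ENNReal.toReal_one]

/-- Decomposition of the plug-in Wilcoxon functional: if `F₀, F₁` are continuous
cdfs and `G₀, G₁` are arbitrary cdfs, then
`∫ G₀ dμ_{G₁} − ∫ F₀ dμ_{F₁} = ∫ (G₀ − F₀) dμ_{G₁} − ∫ (G₁ − F₁) dμ_{F₀}`. -/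
theorem stmt_16
    (F0 F1 G0 G1 : StieltjesFunction ℝ)
    (hF0cont : Continuous F0) (hF1cont : Continuous F1)
    (hF0bot : Tendsto F0 atBot (nhds 0)) (hF0top : Tendsto F0 atTop (nhds 1))
    (hF1bot : Tendsto F1 atBot (nhds 0)) (hF1top : Tendsto F1 atTop (nhds 1))
    (hG0bot : Tendsto G0 atBot (nhds 0)) (hG0top : Tendsto G0 atTop (nhds 1))
    (hG1bot : Tendsto G1 atBot (nhds 0)) (hG1top : Tendsto G1 atTop (nhds 1)) :
    (∫ y, G0 y ∂G1.measure) - (∫ y, F0 y ∂F1.measure) =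
      (∫ y, (G0 y - F0 y) ∂G1.measure) - ∫ y, (G1 y - F1 y) ∂F0.measure := by
  have hF0P : IsProbabilityMeasure F0.measure := F0.isProbabilityMeasure hF0bot hF0top
  have hF1P : IsProbabilityMeasure F1.measure := F1.isProbabilityMeasure hF1bot hF1top
  have hG1P : IsProbabilityMeasure G1.measure := G1.isProbabilityMeasure hG1bot hG1top
  rw [integral_sub (stmt16_integrable G0 hG0bot hG0top _) (stmt16_integrable F0 hF0bot hF0top _),
    integral_sub (stmt16_integrable G1 hG1bot hG1top _) (stmt16_integrable F1 hF1bot hF1top _)]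
  have h1 := stmt16_key F0 G1 hF0cont hF0bot hF0top hG1bot hG1top
  have h2 := stmt16_key F0 F1 hF0cont hF0bot hF0top hF1bot hF1top
  linarith
end
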